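/- arXiv:1301.3931 — 7 statements merged into one kernel-verified Lean document; each statement's English description precedes it below -/
import Mathlib

section
/- For every MOn-1qfa A over Σ with m states, there exist row vectors ξ, η ∈ ℂ^{1×m²} and a family (P(c))_{c∈Σ} of m²×m² projectors (Hermitian idempotent matrices) such that ‖ξ‖ = 1, ‖η‖ ≤ √m, and ⟨ξ, (P(c))_{c∈Σ}, η⟩ is a linear representation of the acceptance-probability function p_A, i.e., p_A(w₁⋯w_n) = ξ P(w₁)⋯P(w_n) ηᵀ for every word w₁⋯w_n ∈ Σ*. -/
open Matrix

namespace MOnRepAux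

variable {n K : ℕ}

noncomputable def vec (ρ : Matrix (Fin n) (Fin n) ℂ) : Matrix (Fin 1) (Fin n × Fin n) ℂ :=
  Matrix.of fun _ p => ρ p.1 p.2

noncomputable def superOp (Q : Fin K → Matrix (Fin n) (Fin n) ℂ) :
    Matrix (Fin n × Fin n) (Fin n × Fin n) ℂ :=
  Matrix.of fun p q => ∑ j, Q j q.1 p.1 * Q j p.2 q.2

lemma vec_mul_superOp (Q : Fin K → Matrix (Fin n) (Fin n) ℂ)
    (ρ : Matrix (Fin n) (Fin n) ℂ) :
    vec ρ * superOp Q = vec (∑ j, Q j * ρ * Q j) := by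
  ext x q
  simp only [mul_apply, vec, superOp, of_apply, Matrix.sum_apply, Finset.mul_sum,
    Finset.sum_mul]
  rw [Finset.sum_comm]
  refine Finset.sum_congr rfl fun j _ => ?_
  rw [Fintype.sum_prod_type, Finset.sum_comm]
  refine Finset.sum_congr rfl fun b _ => Finset.sum_congr rfl fun a _ => by ring

lemma superOp_conjTranspose (Q : Fin K → Matrix (Fin n) (Fin n) ℂ)
    (h : ∀ j, (Q j)ᴴ = Q j) : (superOp Q)ᴴ = superOp Q := by
  have hq : ∀ j a b, star (Q j a b) = Q j b a := by
    intro j a b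
    conv_rhs => rw [← h j]
    rw [conjTranspose_apply]
  ext p q
  simp only [conjTranspose_apply, superOp, of_apply, star_sum, star_mul', hq]

lemma superOp_mul_superOp (Q : Fin K → Matrix (Fin n) (Fin n) ℂ)
    (hid : ∀ j, Q j * Q j = Q j) (horth : ∀ j j', j ≠ j' → Q j * Q j' = 0) :
    superOp Q * superOp Q = superOp Q := by
  ext p r
  simp only [mul_apply, superOp, of_apply, Finset.sum_mul, Finset.mul_sum]
  conv_lhs => rw [Finset.sum_comm]
  refine Finset.sum_congr rfl fun j' _ => ?_
  rw [Finset.sum_comm]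
  have step1 : ∀ j, (∑ q : Fin n × Fin n,
      Q j q.1 p.1 * Q j p.2 q.2 * (Q j' r.1 q.1 * Q j' q.2 r.2))
      = (Q j' * Q j) r.1 p.1 * (Q j * Q j') p.2 r.2 := by
    intro j
    rw [mul_apply, mul_apply, Finset.sum_mul_sum, Fintype.sum_prod_type]
    refine Finset.sum_congr rfl fun a _ => Finset.sum_congr rfl fun b _ => by ring
  rw [Finset.sum_congr rfl fun j _ => step1 j, Finset.sum_eq_single j']
  · rw [hid j']
  · intro j _ hne
    rw [horth j' j (Ne.symm hne)]
    simp
  · intro h; exact absurd (Finset.mem_univ j') h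

lemma trace_eq_normSq {n : ℕ} (B : Matrix (Fin n) (Fin n) ℂ)
    (hB : Bᴴ = B) (hBB : B * B = B) :
    Matrix.trace B = ((∑ a, ∑ b, Complex.normSq (B a b) : ℝ) : ℂ) := by
  have hb : ∀ a b, star (B a b) = B b a := by
    intro a b
    conv_rhs => rw [← hB]
    rw [conjTranspose_apply]
  calc Matrix.trace B = Matrix.trace (B * B) := by rw [hBB]
    _ = ∑ a, ∑ b, B a b * B b a := by
        simp [Matrix.trace, Matrix.diag, mul_apply]
    _ = ∑ a, ∑ b, ((Complex.normSq (B a b) : ℝ) : ℂ) := by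
        refine Finset.sum_congr rfl fun a _ => Finset.sum_congr rfl fun b _ => ?_
        rw [← hb a b, Complex.star_def, Complex.mul_conj]
    _ = _ := by push_cast; rfl

end MOnRepAux

/-- A Measure-Only one-way quantum finite automaton (MOn-1qfa) over the alphabet `σ`
(the letter `none` plays the role of the end-marker `#`).  The data consists of:
the number of states `m`, for each letter `c` (and the end-marker) the number `k c`
of distinct eigenvalues of the observable `O_c`, the eigenvalues `eig c` themselves,
the corresponding orthogonal projectors `P c`, the initial (row) vector `init`,
and the set `F` of (indices of) accepting eigenvalues of the end-marker observable. -/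
structure MOnQFA (σ : Type) where
  m : ℕ
  k : Option σ → ℕ
  eig : (c : Option σ) → Fin (k c) → ℝ
  P : (c : Option σ) → Fin (k c) → Matrix (Fin m) (Fin m) ℂ
  init : Matrix (Fin 1) (Fin m) ℂ
  F : Finset (Fin (k none))

namespace MOnQFA

variable {σ : Type}

/-- Well-formedness of a MOn-1qfa: the eigenvalues of each observable are distinct,
the `P c j` are pairwise orthogonal Hermitian idempotents (orthogonal projectors)
summing to the identity (so that `O_c = ∑ j, eig c j • P c j` is a Hermitian matrix
with spectral decomposition given by the data), and the initial vector has norm 1. -/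
def Valid (A : MOnQFA σ) : Prop :=
  (∀ c, Function.Injective (A.eig c)) ∧
  (∀ c j, (A.P c j)ᴴ = A.P c j) ∧
  (∀ c j, A.P c j * A.P c j = A.P c j) ∧
  (∀ c j j', j ≠ j' → A.P c j * A.P c j' = 0) ∧
  (∀ c, ∑ j, A.P c j = 1) ∧
  (∑ i, Complex.normSq (A.init 0 i) = 1)

/-- The density matrix `σ(w)` reached after reading the word `w`:
`σ(ε) = π₀† π₀` and `σ(yc) = ∑ j, P_j(c) σ(y) P_j(c)`. -/
noncomputable def dens (A : MOnQFA σ) (w : List σ) : Matrix (Fin A.m) (Fin A.m) ℂ :=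
  w.foldl (fun ρ c => ∑ j, A.P (some c) j * ρ * A.P (some c) j) (A.initᴴ * A.init)

/-- The acceptance probability `p_A(w) = Tr (∑_{j ∈ F} P_j(#) σ(w) P_j(#))`. -/
noncomputable def prob (A : MOnQFA σ) (w : List σ) : ℝ :=
  (Matrix.trace (∑ j ∈ A.F, A.P none j * A.dens w * A.P none j)).re

end MOnQFA

/-- `LMO σ` : the class of languages recognized by some MOn-1qfa over `σ`
with an isolated cut-point. -/
def LMO (σ : Type) : Set (Set (List σ)) :=
  {L | ∃ A : MOnQFA σ, A.Valid ∧ ∃ lam δ : ℝ, 0 < lam ∧ 0 < δ ∧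
        (∀ w, |A.prob w - lam| ≥ δ) ∧ L = {w | A.prob w > lam}}

/-- `PMO σ` : the class of probabilistic events induced by MOn-1qfas over `σ`. -/
def PMO (σ : Type) : Set (List σ → ℝ) :=
  {φ | ∃ A : MOnQFA σ, A.Valid ∧ φ = A.prob}

/-- Every MOn-1qfa `A` over `Σ` with `m` states admits a linear
representation `⟨ξ, (P(c))_{c∈Σ}, η⟩` of its acceptance-probability function, with
`ξ, η ∈ ℂ^{1×m²}`, `‖ξ‖ = 1`, `‖η‖ ≤ √m` and each `P(c)` an `m²×m²` projector
(Hermitian idempotent), i.e. `p_A(w₁⋯w_n) = ξ P(w₁)⋯P(w_n) ηᵀ` for every word. -/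
theorem exists_linear_representation
    (σ : Type) [Fintype σ] [Nonempty σ] (A : MOnQFA σ) (hA : A.Valid) :
    ∃ (ξ η : Matrix (Fin 1) (Fin (A.m ^ 2)) ℂ)
      (P : σ → Matrix (Fin (A.m ^ 2)) (Fin (A.m ^ 2)) ℂ),
      (∑ i, Complex.normSq (ξ 0 i)) = 1 ∧
      (∑ i, Complex.normSq (η 0 i)) ≤ (A.m : ℝ) ∧
      (∀ c, (P c)ᴴ = P c ∧ P c * P c = P c) ∧
      (∀ w : List σ, (ξ * (w.map P).prod * η.transpose) 0 0 = (A.prob w : ℂ)) := by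
  obtain ⟨-, hherm, hidem, horth, hsum, hnorm⟩ := hA
  classical
  let e : Fin (A.m ^ 2) ≃ Fin A.m × Fin A.m :=
    (finCongr (pow_two A.m)).trans finProdFinEquiv.symm
  set ρ₀ : Matrix (Fin A.m) (Fin A.m) ℂ := A.initᴴ * A.init with hρ₀
  set M : Matrix (Fin A.m) (Fin A.m) ℂ := ∑ j ∈ A.F, A.P none j with hMdef
  refine ⟨(MOnRepAux.vec ρ₀).submatrix id ⇑e,
    (Matrix.of fun _ p => M p.2 p.1 : Matrix (Fin 1) (Fin A.m × Fin A.m) ℂ).submatrix id ⇑e,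
    fun c => (MOnRepAux.superOp (A.P (some c))).submatrix ⇑e ⇑e, ?_, ?_, ?_, ?_⟩
  · -- ‖ξ‖ = 1
    have h1 : ∀ i : Fin (A.m ^ 2),
        Complex.normSq (((MOnRepAux.vec ρ₀).submatrix id ⇑e) 0 i)
          = Complex.normSq (ρ₀ (e i).1 (e i).2) := fun i => rfl
    simp only [h1]
    rw [Equiv.sum_comp e (fun p => Complex.normSq (ρ₀ p.1 p.2)), Fintype.sum_prod_type]
    have hab : ∀ a b, ρ₀ a b = star (A.init 0 a) * A.init 0 b := by
      intro a b
      simp [hρ₀, mul_apply, conjTranspose_apply]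
    simp only [hab, Complex.normSq_mul]
    rw [← Finset.sum_mul_sum, hnorm, mul_one]
    simpa [RCLike.star_def, Complex.normSq_conj] using hnorm
  · -- ‖η‖² ≤ m
    have hMherm : Mᴴ = M := by
      rw [hMdef, Matrix.conjTranspose_sum]
      exact Finset.sum_congr rfl fun j _ => hherm none j
    have hMM : M * M = M := by
      rw [hMdef, Finset.sum_mul_sum]
      refine Finset.sum_congr rfl fun j hj => ?_
      rw [Finset.sum_eq_single_of_mem j hj]
      · exact hidem none j
      · intro b _ hb
        exact horth none j b (Ne.symm hb)
    have htP : ∀ j : Fin (A.k none), Matrix.trace (A.P none j)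
        = ((∑ a, ∑ b, Complex.normSq (A.P none j a b) : ℝ) : ℂ) :=
      fun j => MOnRepAux.trace_eq_normSq _ (hherm none j) (hidem none j)
    have h1 : ∀ i : Fin (A.m ^ 2),
        Complex.normSq (((Matrix.of fun _ p => M p.2 p.1 :
            Matrix (Fin 1) (Fin A.m × Fin A.m) ℂ).submatrix id ⇑e) 0 i)
          = Complex.normSq (M (e i).2 (e i).1) := fun i => rfl
    simp only [h1]
    rw [Equiv.sum_comp e (fun p => Complex.normSq (M p.2 p.1)), Fintype.sum_prod_type,
      Finset.sum_comm]
    have key : (∑ a, ∑ b, Complex.normSq (M a b))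
        = ∑ j ∈ A.F, ∑ a, ∑ b, Complex.normSq (A.P none j a b) := by
      have h2 := congrArg Complex.re (MOnRepAux.trace_eq_normSq M hMherm hMM)
      rw [Complex.ofReal_re] at h2
      rw [← h2, hMdef, Matrix.trace_sum, Complex.re_sum]
      exact Finset.sum_congr rfl fun j _ => by rw [htP j, Complex.ofReal_re]
    rw [key]
    have htotal : (∑ j : Fin (A.k none), ∑ a, ∑ b, Complex.normSq (A.P none j a b))
        = (A.m : ℝ) := by
      have h2 : Matrix.trace (∑ j, A.P none j) = (A.m : ℂ) := by
        rw [hsum none, Matrix.trace_one]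
        simp
      have h3 := congrArg Complex.re h2
      rw [Matrix.trace_sum, Complex.re_sum, Complex.natCast_re] at h3
      rw [← h3]
      exact Finset.sum_congr rfl fun j _ => by rw [htP j, Complex.ofReal_re]
    calc (∑ j ∈ A.F, ∑ a, ∑ b, Complex.normSq (A.P none j a b))
        ≤ ∑ j : Fin (A.k none), ∑ a, ∑ b, Complex.normSq (A.P none j a b) :=
          Finset.sum_le_sum_of_subset_of_nonneg (Finset.subset_univ _)
            (fun j _ _ => Finset.sum_nonneg fun _ _ =>
              Finset.sum_nonneg fun _ _ => Complex.normSq_nonneg _)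
      _ = (A.m : ℝ) := htotal
  · -- projectors
    intro c
    constructor
    · rw [conjTranspose_submatrix,
        MOnRepAux.superOp_conjTranspose _ (fun j => hherm (some c) j)]
    · rw [Matrix.submatrix_mul_equiv,
        MOnRepAux.superOp_mul_superOp _ (fun j => hidem (some c) j)
          (fun j j' h => horth (some c) j j' h)]
  · -- linear representation
    intro w
    have key : ∀ (t : List σ) (ρ : Matrix (Fin A.m) (Fin A.m) ℂ),
        (MOnRepAux.vec ρ).submatrix id ⇑e *
          (t.map fun c => (MOnRepAux.superOp (A.P (some c))).submatrix ⇑e ⇑e).prod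
        = (MOnRepAux.vec (t.foldl
            (fun ρ c => ∑ j, A.P (some c) j * ρ * A.P (some c) j) ρ)).submatrix id ⇑e := by
      intro t
      induction t with
      | nil => intro ρ; simp
      | cons c t ih =>
        intro ρ
        rw [List.map_cons, List.prod_cons, ← Matrix.mul_assoc, List.foldl_cons,
          Matrix.submatrix_mul_equiv, MOnRepAux.vec_mul_superOp]
        exact ih _
    have hfold : ∀ (t : List σ) (ρ : Matrix (Fin A.m) (Fin A.m) ℂ), ρᴴ = ρ →
        (t.foldl (fun ρ c => ∑ j, A.P (some c) j * ρ * A.P (some c) j) ρ)ᴴ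
        = t.foldl (fun ρ c => ∑ j, A.P (some c) j * ρ * A.P (some c) j) ρ := by
      intro t
      induction t with
      | nil => intro ρ h; exact h
      | cons c t ih =>
        intro ρ h
        rw [List.foldl_cons]
        refine ih _ ?_
        rw [Matrix.conjTranspose_sum]
        refine Finset.sum_congr rfl fun j _ => ?_
        simp [Matrix.conjTranspose_mul, hherm, h, Matrix.mul_assoc]
    have hdherm : (A.dens w)ᴴ = A.dens w := by
      refine hfold w ρ₀ ?_
      rw [hρ₀, Matrix.conjTranspose_mul, Matrix.conjTranspose_conjTranspose]
    have hdw : A.dens w = w.foldl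
        (fun ρ c => ∑ j, A.P (some c) j * ρ * A.P (some c) j) ρ₀ := rfl
    rw [key w ρ₀, ← hdw, Matrix.transpose_submatrix, Matrix.submatrix_mul_equiv]
    have hent : ((MOnRepAux.vec (A.dens w) *
        (Matrix.of fun _ p => M p.2 p.1 :
          Matrix (Fin 1) (Fin A.m × Fin A.m) ℂ)ᵀ).submatrix id id) 0 0
        = Matrix.trace (A.dens w * M) := by
      simp only [Matrix.submatrix_apply, id_eq, Matrix.mul_apply, MOnRepAux.vec,
        Matrix.transpose_apply, Matrix.of_apply, Matrix.trace, Matrix.diag,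
        Fintype.sum_prod_type]
    rw [hent]
    have htr : Matrix.trace (∑ j ∈ A.F, A.P none j * A.dens w * A.P none j)
        = Matrix.trace (A.dens w * M) := by
      rw [hMdef, Finset.mul_sum, Matrix.trace_sum, Matrix.trace_sum]
      refine Finset.sum_congr rfl fun j _ => ?_
      rw [Matrix.trace_mul_cycle, show A.P none j * A.P none j = A.P none j from hidem none j,
        Matrix.trace_mul_comm]
    have hreal : (starRingEnd ℂ) (Matrix.trace (A.dens w * M))
        = Matrix.trace (A.dens w * M) := by
      have hMherm : Mᴴ = M := by
        rw [hMdef, Matrix.conjTranspose_sum]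
        exact Finset.sum_congr rfl fun j _ => hherm none j
      calc (starRingEnd ℂ) (Matrix.trace (A.dens w * M))
          = Matrix.trace ((A.dens w * M)ᴴ) := (Matrix.trace_conjTranspose _).symm
        _ = Matrix.trace (M * A.dens w) := by
            rw [Matrix.conjTranspose_mul, hMherm, hdherm]
        _ = Matrix.trace (A.dens w * M) := Matrix.trace_mul_comm _ _
    have hprob : (A.prob w : ℝ) = (Matrix.trace (A.dens w * M)).re := by
      rw [MOnQFA.prob, htr]
    rw [hprob]
    exact (Complex.conj_eq_iff_re.mp hreal).symm
end

section
/- Let Σ be a finite nonempty alphabet. If φ, ψ ∈ PMO(Σ), then the Hadamard product φ⊙ψ defined by (φ⊙ψ)(w) = φ(w)·ψ(w) belongs to PMO(Σ), and the f-complement φ^{f-c} defined by φ^{f-c}(w) = 1 − φ(w) belongs to PMO(Σ). -/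
open Matrix

section Aux
open Kronecker


lemma trace_submatrix_equiv'' {m n : Type*} [Fintype m] [Fintype n]
    (e : m ≃ n) (M : Matrix n n ℂ) : (M.submatrix e e).trace = M.trace := by
  unfold Matrix.trace
  exact Equiv.sum_comp e (fun i => M i i)

lemma submatrix_sum' {ι m n m' n' : Type*} (s : Finset ι) (f : ι → Matrix m n ℂ)
    (r : m' → m) (c : n' → n) :
    (∑ i ∈ s, f i).submatrix r c = ∑ i ∈ s, (f i).submatrix r c := by
  ext i j; simp [Matrix.sum_apply]

lemma sum_kronecker' {ι κ m n : Type*} (s : Finset ι) (t : Finset κ)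
    (f : ι → Matrix m m ℂ) (g : κ → Matrix n n ℂ) :
    (∑ i ∈ s, f i) ⊗ₖ (∑ j ∈ t, g j) = ∑ i ∈ s, ∑ j ∈ t, f i ⊗ₖ g j := by
  ext ⟨i₁, i₂⟩ ⟨j₁, j₂⟩
  simp [Matrix.kroneckerMap_apply, Matrix.sum_apply, Finset.sum_mul_sum]

lemma conjTranspose_kronecker' {m n p q : Type*} (A : Matrix m n ℂ) (B : Matrix p q ℂ) :
    (A ⊗ₖ B)ᴴ = Aᴴ ⊗ₖ Bᴴ := by
  ext ⟨i₁, i₂⟩ ⟨j₁, j₂⟩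
  simp [Matrix.conjTranspose_apply, Matrix.kroneckerMap_apply, star_mul']

lemma trace_step' {n k : ℕ} (P : Fin k → Matrix (Fin n) (Fin n) ℂ)
    (hidem : ∀ j, P j * P j = P j) (hsum : ∑ j, P j = 1)
    (ρ : Matrix (Fin n) (Fin n) ℂ) :
    (∑ j, P j * ρ * P j).trace = ρ.trace := by
  rw [Matrix.trace_sum]
  have h : ∀ j, (P j * ρ * P j).trace = (P j * ρ).trace := by
    intro j
    rw [Matrix.trace_mul_comm, ← Matrix.mul_assoc, hidem]
  simp_rw [h]
  rw [← Matrix.trace_sum, ← Finset.sum_mul, hsum, Matrix.one_mul]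


namespace MOnQFA

variable {σ : Type}

lemma dens_trace (A : MOnQFA σ) (hA : A.Valid) (w : List σ) : (A.dens w).trace = 1 := by
  obtain ⟨-, -, hidem, -, hsum, hinit⟩ := hA
  have h : ∀ (w : List σ) (ρ : Matrix (Fin A.m) (Fin A.m) ℂ),
      (w.foldl (fun ρ c => ∑ j, A.P (some c) j * ρ * A.P (some c) j) ρ).trace = ρ.trace := by
    intro w
    induction w with
    | nil => intro ρ; rfl
    | cons c w ih => intro ρ; rw [List.foldl_cons, ih, trace_step' _ (hidem _) (hsum _)]
  rw [dens, h]
  have h2 : (A.initᴴ * A.init).trace = ∑ i, (Complex.normSq (A.init 0 i) : ℂ) := by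
    unfold Matrix.trace
    congr 1
    ext i
    simp [Matrix.mul_apply, Matrix.conjTranspose_apply, Fin.sum_univ_one, Matrix.diag,
      Complex.normSq_eq_conj_mul_self, Complex.star_def]
  rw [h2]
  norm_cast

lemma dens_herm (A : MOnQFA σ) (hA : A.Valid) (w : List σ) : (A.dens w)ᴴ = A.dens w := by
  obtain ⟨-, hherm, -, -, -, -⟩ := hA
  have h : ∀ (w : List σ) (ρ : Matrix (Fin A.m) (Fin A.m) ℂ), ρᴴ = ρ →
      ((w.foldl (fun ρ c => ∑ j, A.P (some c) j * ρ * A.P (some c) j) ρ))ᴴ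
      = w.foldl (fun ρ c => ∑ j, A.P (some c) j * ρ * A.P (some c) j) ρ := by
    intro w
    induction w with
    | nil => intro ρ hρ; exact hρ
    | cons c w ih =>
      intro ρ hρ
      rw [List.foldl_cons]
      apply ih
      rw [Matrix.conjTranspose_sum]
      congr 1; ext j
      rw [Matrix.conjTranspose_mul, Matrix.conjTranspose_mul, hherm, hρ, Matrix.mul_assoc]
  rw [dens]
  apply h
  rw [Matrix.conjTranspose_mul, Matrix.conjTranspose_conjTranspose]

lemma accept_herm (A : MOnQFA σ) (hA : A.Valid) (w : List σ) :
    (∑ j ∈ A.F, A.P none j * A.dens w * A.P none j)ᴴ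
    = ∑ j ∈ A.F, A.P none j * A.dens w * A.P none j := by
  rw [Matrix.conjTranspose_sum]
  refine Finset.sum_congr rfl fun j _ => ?_
  rw [Matrix.conjTranspose_mul, Matrix.conjTranspose_mul, hA.2.1, dens_herm A hA,
    Matrix.mul_assoc]

lemma accept_trace_real (A : MOnQFA σ) (hA : A.Valid) (w : List σ) :
    ((Matrix.trace (∑ j ∈ A.F, A.P none j * A.dens w * A.P none j)).re : ℂ)
    = Matrix.trace (∑ j ∈ A.F, A.P none j * A.dens w * A.P none j) := by
  rw [← Complex.conj_eq_iff_re]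
  rw [Complex.star_def.symm, ← Matrix.trace_conjTranspose, accept_herm A hA]


/-- Reindexed Kronecker product of two square matrices. -/
noncomputable def kmat (A B : MOnQFA σ) (M₁ : Matrix (Fin A.m) (Fin A.m) ℂ)
    (M₂ : Matrix (Fin B.m) (Fin B.m) ℂ) : Matrix (Fin (A.m * B.m)) (Fin (A.m * B.m)) ℂ :=
  (M₁ ⊗ₖ M₂).submatrix finProdFinEquiv.symm finProdFinEquiv.symm

lemma kmat_mul (A B : MOnQFA σ) (M₁ N₁ : Matrix (Fin A.m) (Fin A.m) ℂ)
    (M₂ N₂ : Matrix (Fin B.m) (Fin B.m) ℂ) :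
    kmat A B M₁ M₂ * kmat A B N₁ N₂ = kmat A B (M₁ * N₁) (M₂ * N₂) := by
  unfold kmat
  rw [Matrix.submatrix_mul_equiv, Matrix.mul_kronecker_mul]

lemma kmat_conjT (A B : MOnQFA σ) (M₁ : Matrix (Fin A.m) (Fin A.m) ℂ)
    (M₂ : Matrix (Fin B.m) (Fin B.m) ℂ) :
    (kmat A B M₁ M₂)ᴴ = kmat A B M₁ᴴ M₂ᴴ := by
  unfold kmat
  rw [Matrix.conjTranspose_submatrix, conjTranspose_kronecker']

lemma kmat_trace (A B : MOnQFA σ) (M₁ : Matrix (Fin A.m) (Fin A.m) ℂ)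
    (M₂ : Matrix (Fin B.m) (Fin B.m) ℂ) :
    (kmat A B M₁ M₂).trace = M₁.trace * M₂.trace := by
  unfold kmat
  rw [trace_submatrix_equiv'', Matrix.trace_kronecker]

lemma kmat_one (A B : MOnQFA σ) : kmat A B 1 1 = 1 := by
  unfold kmat
  rw [Matrix.one_kronecker_one, Matrix.submatrix_one_equiv]

lemma kmat_zero_left (A B : MOnQFA σ) (M₂ : Matrix (Fin B.m) (Fin B.m) ℂ) :
    kmat A B 0 M₂ = 0 := by
  unfold kmat; rw [Matrix.zero_kronecker]; ext i j; simp

lemma kmat_zero_right (A B : MOnQFA σ) (M₁ : Matrix (Fin A.m) (Fin A.m) ℂ) :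
    kmat A B M₁ 0 = 0 := by
  unfold kmat; rw [Matrix.kronecker_zero]; ext i j; simp

lemma sum_kmat (A B : MOnQFA σ) {k₁ k₂ : ℕ} (f : Fin k₁ → Matrix (Fin A.m) (Fin A.m) ℂ)
    (g : Fin k₂ → Matrix (Fin B.m) (Fin B.m) ℂ) :
    (∑ j : Fin (k₁ * k₂), kmat A B (f (finProdFinEquiv.symm j).1) (g (finProdFinEquiv.symm j).2))
    = kmat A B (∑ j₁, f j₁) (∑ j₂, g j₂) := by
  unfold kmat
  rw [← submatrix_sum',
    Equiv.sum_comp (finProdFinEquiv.symm : Fin (k₁ * k₂) ≃ Fin k₁ × Fin k₂)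
      (fun p => (f p.1) ⊗ₖ (g p.2)),
    Fintype.sum_prod_type, ← sum_kronecker']

/-- Hadamard (tensor) product automaton. -/
@[reducible] noncomputable def hprod (A B : MOnQFA σ) : MOnQFA σ where
  m := A.m * B.m
  k := fun c => A.k c * B.k c
  eig := fun _ j => (j.val : ℝ)
  P := fun c j => kmat A B (A.P c (finProdFinEquiv.symm j).1) (B.P c (finProdFinEquiv.symm j).2)
  init := Matrix.of fun _ i =>
    A.init 0 (finProdFinEquiv.symm i).1 * B.init 0 (finProdFinEquiv.symm i).2
  F := (A.F ×ˢ B.F).map finProdFinEquiv.toEmbedding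

lemma hprod_valid (A B : MOnQFA σ) (hA : A.Valid) (hB : B.Valid) : (A.hprod B).Valid := by
  obtain ⟨-, hAh, hAi, hAo, hAs, hAn⟩ := hA
  obtain ⟨-, hBh, hBi, hBo, hBs, hBn⟩ := hB
  refine ⟨?_, ?_, ?_, ?_, ?_, ?_⟩
  · intro c a b h
    exact Fin.val_injective (Nat.cast_injective h)
  · intro c j
    show (kmat A B (A.P c (finProdFinEquiv.symm j).1) (B.P c (finProdFinEquiv.symm j).2))ᴴ
      = kmat A B (A.P c (finProdFinEquiv.symm j).1) (B.P c (finProdFinEquiv.symm j).2)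
    rw [kmat_conjT, hAh, hBh]
  · intro c j
    show kmat A B (A.P c (finProdFinEquiv.symm j).1) (B.P c (finProdFinEquiv.symm j).2) *
        kmat A B (A.P c (finProdFinEquiv.symm j).1) (B.P c (finProdFinEquiv.symm j).2)
      = kmat A B (A.P c (finProdFinEquiv.symm j).1) (B.P c (finProdFinEquiv.symm j).2)
    rw [kmat_mul, hAi, hBi]
  · intro c j j' hne
    have hp : finProdFinEquiv.symm j ≠ finProdFinEquiv.symm j' :=
      fun h => hne (finProdFinEquiv.symm.injective h)
    show kmat A B (A.P c (finProdFinEquiv.symm j).1) (B.P c (finProdFinEquiv.symm j).2) *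
        kmat A B (A.P c (finProdFinEquiv.symm j').1) (B.P c (finProdFinEquiv.symm j').2) = 0
    rw [kmat_mul]
    rcases eq_or_ne (finProdFinEquiv.symm j).1 (finProdFinEquiv.symm j').1 with h1 | h1
    · have h2 : (finProdFinEquiv.symm j).2 ≠ (finProdFinEquiv.symm j').2 :=
        fun h2 => hp (Prod.ext_iff.mpr ⟨h1, h2⟩)
      rw [hBo c _ _ h2, kmat_zero_right]
    · rw [hAo c _ _ h1, kmat_zero_left]
  · intro c
    show (∑ j : Fin (A.k c * B.k c),
        kmat A B (A.P c (finProdFinEquiv.symm j).1) (B.P c (finProdFinEquiv.symm j).2)) = 1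
    rw [sum_kmat A B (A.P c) (B.P c), hAs, hBs, kmat_one]
  · show (∑ i : Fin (A.m * B.m), Complex.normSq
        (A.init 0 (finProdFinEquiv.symm i).1 * B.init 0 (finProdFinEquiv.symm i).2)) = 1
    rw [Equiv.sum_comp (finProdFinEquiv.symm : Fin (A.m * B.m) ≃ Fin A.m × Fin B.m)
        (fun p => Complex.normSq (A.init 0 p.1 * B.init 0 p.2)),
      Fintype.sum_prod_type]
    simp_rw [Complex.normSq_mul]
    rw [← Finset.sum_mul_sum, hAn, hBn, one_mul]

lemma hprod_base (A B : MOnQFA σ) :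
    (A.hprod B).initᴴ * (A.hprod B).init = kmat A B (A.initᴴ * A.init) (B.initᴴ * B.init) := by
  ext i i'
  simp only [hprod, kmat, Matrix.mul_apply, Matrix.conjTranspose_apply, Fin.sum_univ_one,
    Matrix.of_apply, Matrix.submatrix_apply, Matrix.kroneckerMap_apply, star_mul']
  ring

lemma hprod_step (A B : MOnQFA σ) (c : σ) (ρ₁ : Matrix (Fin A.m) (Fin A.m) ℂ)
    (ρ₂ : Matrix (Fin B.m) (Fin B.m) ℂ) :
    (∑ j : Fin (A.k (some c) * B.k (some c)),
        kmat A B (A.P (some c) (finProdFinEquiv.symm j).1) (B.P (some c) (finProdFinEquiv.symm j).2)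
          * kmat A B ρ₁ ρ₂ *
        kmat A B (A.P (some c) (finProdFinEquiv.symm j).1) (B.P (some c) (finProdFinEquiv.symm j).2))
    = kmat A B (∑ j₁, A.P (some c) j₁ * ρ₁ * A.P (some c) j₁)
        (∑ j₂, B.P (some c) j₂ * ρ₂ * B.P (some c) j₂) := by
  simp_rw [kmat_mul]
  exact sum_kmat A B (fun x => A.P (some c) x * ρ₁ * A.P (some c) x)
    (fun x => B.P (some c) x * ρ₂ * B.P (some c) x)

lemma hprod_dens (A B : MOnQFA σ) (w : List σ) :
    (A.hprod B).dens w = kmat A B (A.dens w) (B.dens w) := by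
  have main : ∀ (w : List σ) (ρ₁ : Matrix (Fin A.m) (Fin A.m) ℂ)
      (ρ₂ : Matrix (Fin B.m) (Fin B.m) ℂ),
      List.foldl (fun ρ c => ∑ j : Fin (A.k (some c) * B.k (some c)),
          kmat A B (A.P (some c) (finProdFinEquiv.symm j).1)
            (B.P (some c) (finProdFinEquiv.symm j).2) * ρ *
          kmat A B (A.P (some c) (finProdFinEquiv.symm j).1)
            (B.P (some c) (finProdFinEquiv.symm j).2))
        (kmat A B ρ₁ ρ₂) w
      = kmat A B (List.foldl (fun ρ c => ∑ j, A.P (some c) j * ρ * A.P (some c) j) ρ₁ w)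
          (List.foldl (fun ρ c => ∑ j, B.P (some c) j * ρ * B.P (some c) j) ρ₂ w) := by
    intro w
    induction w with
    | nil => intro ρ₁ ρ₂; rfl
    | cons c w ih =>
      intro ρ₁ ρ₂
      simp only [List.foldl_cons]
      rw [hprod_step, ih]
  show List.foldl (fun ρ c => ∑ j : Fin (A.k (some c) * B.k (some c)),
      kmat A B (A.P (some c) (finProdFinEquiv.symm j).1)
        (B.P (some c) (finProdFinEquiv.symm j).2) * ρ *
      kmat A B (A.P (some c) (finProdFinEquiv.symm j).1)
        (B.P (some c) (finProdFinEquiv.symm j).2))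
    (((A.hprod B).initᴴ * (A.hprod B).init :
      Matrix (Fin (A.m * B.m)) (Fin (A.m * B.m)) ℂ)) w = kmat A B (A.dens w) (B.dens w)
  refine (congrArg (fun X => List.foldl _ X w) (hprod_base A B)).trans ?_
  exact main w _ _

lemma hprod_prob (A B : MOnQFA σ) (hA : A.Valid) (hB : B.Valid) (w : List σ) :
    (A.hprod B).prob w = A.prob w * B.prob w := by
  have key : Matrix.trace (∑ j ∈ (A.hprod B).F,
        (A.hprod B).P none j * (A.hprod B).dens w * (A.hprod B).P none j)
      = Matrix.trace (∑ j ∈ A.F, A.P none j * A.dens w * A.P none j)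
        * Matrix.trace (∑ j ∈ B.F, B.P none j * B.dens w * B.P none j) := by
    have hterm : ∀ j : Fin (A.k none * B.k none),
        kmat A B (A.P none (finProdFinEquiv.symm j).1) (B.P none (finProdFinEquiv.symm j).2) *
          kmat A B (A.dens w) (B.dens w) *
        kmat A B (A.P none (finProdFinEquiv.symm j).1) (B.P none (finProdFinEquiv.symm j).2)
        = kmat A B
            (A.P none (finProdFinEquiv.symm j).1 * A.dens w * A.P none (finProdFinEquiv.symm j).1)
            (B.P none (finProdFinEquiv.symm j).2 * B.dens w * B.P none (finProdFinEquiv.symm j).2) := by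
      intro j
      rw [kmat_mul, kmat_mul]
    have hd := hprod_dens A B w
    show Matrix.trace (∑ j ∈ (A.F ×ˢ B.F).map finProdFinEquiv.toEmbedding,
        kmat A B (A.P none (finProdFinEquiv.symm j).1) (B.P none (finProdFinEquiv.symm j).2) *
          ((A.hprod B).dens w : Matrix (Fin (A.m * B.m)) (Fin (A.m * B.m)) ℂ) *
        kmat A B (A.P none (finProdFinEquiv.symm j).1) (B.P none (finProdFinEquiv.symm j).2)) = _
    rw [hd]
    simp only [hterm]
    rw [Matrix.trace_sum, Finset.sum_map]
    simp only [Equiv.coe_toEmbedding, Equiv.symm_apply_apply, kmat_trace]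
    rw [Matrix.trace_sum, Matrix.trace_sum, Finset.sum_mul_sum, Finset.sum_product]
  have i1 : (Matrix.trace (∑ j ∈ A.F, A.P none j * A.dens w * A.P none j)).im = 0 := by
    rw [← accept_trace_real A hA w, Complex.ofReal_im]
  have i2 : (Matrix.trace (∑ j ∈ B.F, B.P none j * B.dens w * B.P none j)).im = 0 := by
    rw [← accept_trace_real B hB w, Complex.ofReal_im]
  unfold prob
  rw [key, Complex.mul_re, i1, i2, mul_zero, sub_zero]

end MOnQFA

end Aux
/-- The class `PMO(Σ)` of probabilistic events of MOn-1qfas over a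
finite nonempty alphabet `Σ` is closed under Hadamard product
`(φ⊙ψ)(w) = φ(w)·ψ(w)` and under f-complement `φ^{f-c}(w) = 1 − φ(w)`. -/
theorem pmo_closed_hadamard_and_fcomplement
    (σ : Type) [Fintype σ] [Nonempty σ] (φ ψ : List σ → ℝ)
    (hφ : φ ∈ PMO σ) (hψ : ψ ∈ PMO σ) :
    (fun w => φ w * ψ w) ∈ PMO σ ∧ (fun w => 1 - φ w) ∈ PMO σ := by
  obtain ⟨A, hA, rfl⟩ := hφ
  obtain ⟨B, hB, rfl⟩ := hψ
  constructor
  · exact ⟨A.hprod B, MOnQFA.hprod_valid A B hA hB,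
      funext fun w => (MOnQFA.hprod_prob A B hA hB w).symm⟩
  · refine ⟨{ A with F := A.Fᶜ }, hA, funext fun w => ?_⟩
    show 1 - A.prob w = (Matrix.trace (∑ j ∈ A.Fᶜ, A.P none j * A.dens w * A.P none j)).re
    have hsplit := Finset.sum_add_sum_compl A.F (fun j => A.P none j * A.dens w * A.P none j)
    have huniv : Matrix.trace (∑ j, A.P none j * A.dens w * A.P none j) = 1 := by
      rw [trace_step' _ (fun j => hA.2.2.1 none j) (hA.2.2.2.2.1 none),
        MOnQFA.dens_trace A hA]
    have h2 : Matrix.trace (∑ j ∈ A.Fᶜ, A.P none j * A.dens w * A.P none j)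
        = 1 - Matrix.trace (∑ j ∈ A.F, A.P none j * A.dens w * A.P none j) := by
      rw [← huniv, ← hsplit, Matrix.trace_add]
      ring
    unfold MOnQFA.prob
    rw [h2, Complex.sub_re, Complex.one_re]
end

section
/- Let Σ be a finite nonempty alphabet, let L ∈ LMO(Σ), and let χ_L : Σ* → {0,1} be the characteristic function of L. Then for every ε > 0 there exists φ ∈ PMO(Σ) such that |φ(w) − χ_L(w)| < ε for all w ∈ Σ*. -/
open Matrix

open ComplexOrder Kronecker

namespace QFAaux

open MOnQFA

variable {σ : Type}

/-- one evolution step -/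
noncomputable def step (A : MOnQFA σ) (ρ : Matrix (Fin A.m) (Fin A.m) ℂ) (c : σ) :
    Matrix (Fin A.m) (Fin A.m) ℂ :=
  ∑ j, A.P (some c) j * ρ * A.P (some c) j

lemma dens_eq_foldl (A : MOnQFA σ) (w : List σ) :
    A.dens w = w.foldl (step A) (A.initᴴ * A.init) := rfl

lemma posSemidef_sum {n : Type*} [Fintype n] {ι : Type*} (s : Finset ι)
    (f : ι → Matrix n n ℂ) (h : ∀ i ∈ s, (f i).PosSemidef) :
    (∑ i ∈ s, f i).PosSemidef := by
  classical
  induction s using Finset.induction with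
  | empty => simpa using (Matrix.PosSemidef.zero (n := n) (R := ℂ))
  | @insert a s ha ih =>
      rw [Finset.sum_insert ha]
      exact (h a (Finset.mem_insert_self a s)).add
        (ih fun i hi => h i (Finset.mem_insert_of_mem hi))

lemma foldl_posSemidef (A : MOnQFA σ) (hA : A.Valid) (w : List σ)
    (ρ : Matrix (Fin A.m) (Fin A.m) ℂ) (hρ : ρ.PosSemidef) :
    (w.foldl (step A) ρ).PosSemidef := by
  induction w generalizing ρ with
  | nil => exact hρ
  | cons c w ih =>
      refine ih _ ?_
      refine posSemidef_sum _ _ fun j _ => ?_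
      have := hρ.mul_mul_conjTranspose_same (A.P (some c) j)
      rwa [hA.2.1 (some c) j] at this

lemma dens_posSemidef (A : MOnQFA σ) (hA : A.Valid) (w : List σ) :
    (A.dens w).PosSemidef := by
  rw [dens_eq_foldl]
  exact foldl_posSemidef A hA w _ (Matrix.posSemidef_conjTranspose_mul_self A.init)

lemma trace_step (A : MOnQFA σ) (hA : A.Valid) (ρ : Matrix (Fin A.m) (Fin A.m) ℂ) (c : σ) :
    (step A ρ c).trace = ρ.trace := by
  unfold step
  rw [Matrix.trace_sum]
  have : ∀ j, (A.P (some c) j * ρ * A.P (some c) j).trace = (A.P (some c) j * ρ).trace := by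
    intro j
    rw [Matrix.trace_mul_cycle, hA.2.2.1 (some c) j]
  simp_rw [this, ← Matrix.trace_sum, ← Finset.sum_mul, hA.2.2.2.2.1 (some c), Matrix.one_mul]

lemma trace_init (A : MOnQFA σ) (hA : A.Valid) :
    (A.initᴴ * A.init).trace = 1 := by
  have : (A.initᴴ * A.init).trace = ∑ i, ((Complex.normSq (A.init 0 i) : ℝ) : ℂ) := by
    simp only [Matrix.trace, Matrix.diag, Matrix.mul_apply, Matrix.conjTranspose_apply,
      Fin.sum_univ_one, Complex.normSq_eq_conj_mul_self, Complex.star_def]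
  rw [this, ← Complex.ofReal_sum, hA.2.2.2.2.2, Complex.ofReal_one]

lemma trace_dens (A : MOnQFA σ) (hA : A.Valid) (w : List σ) :
    (A.dens w).trace = 1 := by
  rw [dens_eq_foldl]
  have key : ∀ (w : List σ) (ρ : Matrix (Fin A.m) (Fin A.m) ℂ),
      (w.foldl (step A) ρ).trace = ρ.trace := by
    intro w
    induction w with
    | nil => intro ρ; rfl
    | cons c w ih => intro ρ; rw [List.foldl_cons, ih, trace_step A hA]
  rw [key, trace_init A hA]

/-- trace of a PSD matrix is a nonnegative real -/
lemma trace_psd_re {n : Type*} [Fintype n] [DecidableEq n] (M : Matrix n n ℂ)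
    (h : M.PosSemidef) : M.trace = (M.trace.re : ℂ) ∧ 0 ≤ M.trace.re := by
  have ht := h.trace_nonneg
  rw [Complex.nonneg_iff] at ht
  exact ⟨Complex.ext (by simp) (by simp [← ht.2]), ht.1⟩

/-- the probability of outcome `j` when measuring the end-marker observable -/
noncomputable def q (A : MOnQFA σ) (w : List σ) (j : Fin (A.k none)) : ℝ :=
  ((A.P none j * A.dens w * A.P none j).trace).re

lemma q_psd (A : MOnQFA σ) (hA : A.Valid) (w : List σ) (j : Fin (A.k none)) :
    (A.P none j * A.dens w * A.P none j).PosSemidef := by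
  have := (dens_posSemidef A hA w).mul_mul_conjTranspose_same (A.P none j)
  rwa [hA.2.1 none j] at this

lemma traceC_eq_q (A : MOnQFA σ) (hA : A.Valid) (w : List σ) (j : Fin (A.k none)) :
    (A.P none j * A.dens w * A.P none j).trace = ((q A w j : ℝ) : ℂ) :=
  (trace_psd_re _ (q_psd A hA w j)).1

lemma q_nonneg (A : MOnQFA σ) (hA : A.Valid) (w : List σ) (j : Fin (A.k none)) :
    0 ≤ q A w j :=
  (trace_psd_re _ (q_psd A hA w j)).2

lemma sum_q (A : MOnQFA σ) (hA : A.Valid) (w : List σ) :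
    ∑ j, q A w j = 1 := by
  have : ∀ j : Fin (A.k none),
      (A.P none j * A.dens w * A.P none j).trace = (A.P none j * A.dens w).trace := by
    intro j
    rw [Matrix.trace_mul_cycle, hA.2.2.1 none j]
  have h2 : ∑ j, ((q A w j : ℝ) : ℂ) = 1 := by
    simp_rw [fun j => (traceC_eq_q A hA w j).symm, this, ← Matrix.trace_sum, ← Finset.sum_mul,
      hA.2.2.2.2.1 none, Matrix.one_mul, trace_dens A hA]
  have h3 := congrArg Complex.re h2
  simpa [Complex.re_sum] using h3

lemma prob_eq_sum_q (A : MOnQFA σ) (w : List σ) :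
    A.prob w = ∑ j ∈ A.F, q A w j := by
  unfold MOnQFA.prob q
  rw [Matrix.trace_sum, Complex.re_sum]

lemma prob_nonneg (A : MOnQFA σ) (hA : A.Valid) (w : List σ) : 0 ≤ A.prob w := by
  rw [prob_eq_sum_q]
  exact Finset.sum_nonneg fun j _ => q_nonneg A hA w j

lemma prob_le_one (A : MOnQFA σ) (hA : A.Valid) (w : List σ) : A.prob w ≤ 1 := by
  rw [prob_eq_sum_q, ← sum_q A hA w]
  exact Finset.sum_le_sum_of_subset_of_nonneg (Finset.subset_univ _)
    (fun j _ _ => q_nonneg A hA w j)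

end QFAaux

namespace QFAaux

variable {σ : Type}
open MOnQFA

/-- reindex a matrix over a product of `Fin`s to a matrix over a `Fin` -/
def rk {a b : ℕ} (M : Matrix (Fin a × Fin b) (Fin a × Fin b) ℂ) :
    Matrix (Fin (a * b)) (Fin (a * b)) ℂ :=
  M.submatrix finProdFinEquiv.symm finProdFinEquiv.symm

lemma rk_mul {a b : ℕ} (M N : Matrix (Fin a × Fin b) (Fin a × Fin b) ℂ) :
    rk M * rk N = rk (M * N) :=
  Matrix.submatrix_mul_equiv M N _ finProdFinEquiv.symm _

lemma rk_one {a b : ℕ} : rk (1 : Matrix (Fin a × Fin b) (Fin a × Fin b) ℂ) = 1 :=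
  Matrix.submatrix_one_equiv finProdFinEquiv.symm

lemma rk_zero {a b : ℕ} : rk (0 : Matrix (Fin a × Fin b) (Fin a × Fin b) ℂ) = 0 := rfl

lemma rk_conjTranspose {a b : ℕ} (M : Matrix (Fin a × Fin b) (Fin a × Fin b) ℂ) :
    (rk M)ᴴ = rk Mᴴ := by
  ext i j
  simp [rk, Matrix.conjTranspose_apply]

lemma rk_sum {a b : ℕ} {ι : Type*} (s : Finset ι)
    (f : ι → Matrix (Fin a × Fin b) (Fin a × Fin b) ℂ) :
    rk (∑ i ∈ s, f i) = ∑ i ∈ s, rk (f i) := by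
  ext i j
  simp [rk, Matrix.sum_apply]

lemma rk_trace {a b : ℕ} (M : Matrix (Fin a × Fin b) (Fin a × Fin b) ℂ) :
    (rk M).trace = M.trace := by
  rw [show (rk M).trace = ∑ i, rk M i i from rfl,
    ← Equiv.sum_comp finProdFinEquiv (fun i => rk M i i)]
  simp only [rk, Matrix.submatrix_apply, Equiv.symm_apply_apply]
  rfl

lemma kron_conjTranspose {a b : ℕ} (M : Matrix (Fin a) (Fin a) ℂ)
    (N : Matrix (Fin b) (Fin b) ℂ) : (M ⊗ₖ N)ᴴ = Mᴴ ⊗ₖ Nᴴ := by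
  ext i j
  simp [Matrix.conjTranspose_apply, Matrix.kroneckerMap_apply, star_mul']

lemma kron_sum_sum {a b : ℕ} {ι κ : Type*} (s : Finset ι) (t : Finset κ)
    (f : ι → Matrix (Fin a) (Fin a) ℂ) (g : κ → Matrix (Fin b) (Fin b) ℂ) :
    (∑ i ∈ s, f i) ⊗ₖ (∑ j ∈ t, g j) = ∑ i ∈ s, ∑ j ∈ t, (f i ⊗ₖ g j) := by
  ext p q
  simp [Matrix.kroneckerMap_apply, Matrix.sum_apply, Finset.sum_mul_sum]

/-- the tensor product of two MOn-1qfas, with accepting set `S` -/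
@[reducible] noncomputable def tensor (A B : MOnQFA σ)
    (S : Finset (Fin (A.k none) × Fin (B.k none))) : MOnQFA σ where
  m := A.m * B.m
  k c := A.k c * B.k c
  eig c j := (j : ℝ)
  P c j := rk ((A.P c (finProdFinEquiv.symm j).1) ⊗ₖ (B.P c (finProdFinEquiv.symm j).2))
  init := Matrix.of fun _ j =>
    A.init 0 (finProdFinEquiv.symm j).1 * B.init 0 (finProdFinEquiv.symm j).2
  F := S.map finProdFinEquiv.toEmbedding

lemma tensor_valid (A B : MOnQFA σ) (hA : A.Valid) (hB : B.Valid)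
    (S : Finset (Fin (A.k none) × Fin (B.k none))) : (tensor A B S).Valid := by
  refine ⟨?_, ?_, ?_, ?_, ?_, ?_⟩
  · intro c j j' h
    simp only [tensor] at h
    exact Fin.ext (by exact_mod_cast h)
  · intro c j
    rw [show (tensor A B S).P c j =
      rk ((A.P c (finProdFinEquiv.symm j).1) ⊗ₖ (B.P c (finProdFinEquiv.symm j).2)) from rfl,
      rk_conjTranspose, kron_conjTranspose, hA.2.1, hB.2.1]
  · intro c j
    show rk _ * rk _ = rk _
    rw [rk_mul, ← Matrix.mul_kronecker_mul, hA.2.2.1, hB.2.2.1]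
  · intro c j j' h
    show rk _ * rk _ = 0
    rw [rk_mul, ← Matrix.mul_kronecker_mul]
    have hne : (finProdFinEquiv.symm j).1 ≠ (finProdFinEquiv.symm j').1 ∨
        (finProdFinEquiv.symm j).2 ≠ (finProdFinEquiv.symm j').2 := by
      by_contra hcon
      push_neg at hcon
      exact h (finProdFinEquiv.symm.injective (Prod.ext hcon.1 hcon.2))
    rcases hne with hne | hne
    · rw [hA.2.2.2.1 c _ _ hne, Matrix.zero_kronecker, rk_zero]
    · rw [hB.2.2.2.1 c _ _ hne, Matrix.kronecker_zero, rk_zero]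
  · intro c
    show ∑ j : Fin (A.k c * B.k c),
        rk ((A.P c (finProdFinEquiv.symm j).1) ⊗ₖ (B.P c (finProdFinEquiv.symm j).2)) = 1
    rw [← Equiv.sum_comp finProdFinEquiv (fun j : Fin (A.k c * B.k c) =>
        rk ((A.P c (finProdFinEquiv.symm j).1) ⊗ₖ (B.P c (finProdFinEquiv.symm j).2)))]
    simp only [Equiv.symm_apply_apply]
    rw [← rk_sum, Fintype.sum_prod_type, ← kron_sum_sum, hA.2.2.2.2.1, hB.2.2.2.2.1,
      Matrix.one_kronecker_one, rk_one]
  · show ∑ i : Fin (A.m * B.m), Complex.normSq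
        (A.init 0 (finProdFinEquiv.symm i).1 * B.init 0 (finProdFinEquiv.symm i).2) = 1
    rw [← Equiv.sum_comp finProdFinEquiv (fun i : Fin (A.m * B.m) => Complex.normSq
        (A.init 0 (finProdFinEquiv.symm i).1 * B.init 0 (finProdFinEquiv.symm i).2))]
    have : ∀ p : Fin A.m × Fin B.m,
        (fun i : Fin (A.m * B.m) => Complex.normSq
          (A.init 0 (finProdFinEquiv.symm i).1 * B.init 0 (finProdFinEquiv.symm i).2))
          (finProdFinEquiv p)
        = Complex.normSq (A.init 0 p.1) * Complex.normSq (B.init 0 p.2) := by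
      intro p
      beta_reduce
      rw [Equiv.symm_apply_apply]
      exact Complex.normSq_mul _ _
    rw [Finset.sum_congr rfl fun p _ => this p, Fintype.sum_prod_type]
    dsimp only
    rw [← Finset.sum_mul_sum, hA.2.2.2.2.2, hB.2.2.2.2.2, mul_one]

end QFAaux

namespace QFAaux

variable {σ : Type}
open MOnQFA

lemma tensor_init (A B : MOnQFA σ) (S : Finset (Fin (A.k none) × Fin (B.k none))) :
    ((tensor A B S).initᴴ * (tensor A B S).init)
      = rk ((A.initᴴ * A.init) ⊗ₖ (B.initᴴ * B.init)) := by
  ext i j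
  simp only [rk, Matrix.submatrix_apply, Matrix.kroneckerMap_apply, Matrix.mul_apply,
    Matrix.conjTranspose_apply, Fin.sum_univ_one, tensor, Matrix.of_apply, star_mul']
  ring

lemma step_tensor (A B : MOnQFA σ) (S : Finset (Fin (A.k none) × Fin (B.k none))) (c : σ)
    (ρa : Matrix (Fin A.m) (Fin A.m) ℂ) (ρb : Matrix (Fin B.m) (Fin B.m) ℂ) :
    step (tensor A B S) (rk (ρa ⊗ₖ ρb)) c = rk ((step A ρa c) ⊗ₖ (step B ρb c)) := by
  have h1 : step (tensor A B S) (rk (ρa ⊗ₖ ρb)) c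
      = ∑ p : Fin (A.k (some c)) × Fin (B.k (some c)),
          rk ((A.P (some c) p.1 * ρa * A.P (some c) p.1)
            ⊗ₖ (B.P (some c) p.2 * ρb * B.P (some c) p.2)) := by
    unfold step
    refine Fintype.sum_equiv finProdFinEquiv.symm _ _ fun j => ?_
    show rk ((A.P (some c) (finProdFinEquiv.symm j).1)
          ⊗ₖ (B.P (some c) (finProdFinEquiv.symm j).2)) * rk (ρa ⊗ₖ ρb) *
        rk ((A.P (some c) (finProdFinEquiv.symm j).1)
          ⊗ₖ (B.P (some c) (finProdFinEquiv.symm j).2)) = _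
    rw [rk_mul, rk_mul, ← Matrix.mul_kronecker_mul, ← Matrix.mul_kronecker_mul]
  rw [h1, ← rk_sum, Fintype.sum_prod_type]
  dsimp only
  rw [← kron_sum_sum]
  rfl

lemma dens_tensor (A B : MOnQFA σ) (S : Finset (Fin (A.k none) × Fin (B.k none)))
    (w : List σ) :
    (tensor A B S).dens w = rk ((A.dens w) ⊗ₖ (B.dens w)) := by
  rw [dens_eq_foldl, dens_eq_foldl, dens_eq_foldl, tensor_init]
  have key : ∀ (w : List σ) (ρa : Matrix (Fin A.m) (Fin A.m) ℂ)
      (ρb : Matrix (Fin B.m) (Fin B.m) ℂ),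
      w.foldl (step (tensor A B S)) (rk (ρa ⊗ₖ ρb))
        = rk ((w.foldl (step A) ρa) ⊗ₖ (w.foldl (step B) ρb)) := by
    intro w
    induction w with
    | nil => intro ρa ρb; rfl
    | cons c w ih =>
        intro ρa ρb
        rw [List.foldl_cons, List.foldl_cons, List.foldl_cons, step_tensor, ih]
  exact key w _ _

lemma q_tensor (A B : MOnQFA σ) (hA : A.Valid) (hB : B.Valid)
    (S : Finset (Fin (A.k none) × Fin (B.k none))) (w : List σ)
    (p : Fin (A.k none) × Fin (B.k none)) :
    q (tensor A B S) w (finProdFinEquiv p) = q A w p.1 * q B w p.2 := by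
  unfold q
  have hP : (tensor A B S).P none (finProdFinEquiv p)
      = rk ((A.P none p.1) ⊗ₖ (B.P none p.2)) := by
    show rk ((A.P none (finProdFinEquiv.symm (finProdFinEquiv p)).1)
        ⊗ₖ (B.P none (finProdFinEquiv.symm (finProdFinEquiv p)).2)) = _
    rw [Equiv.symm_apply_apply]
  rw [hP, dens_tensor, rk_mul, rk_mul, ← Matrix.mul_kronecker_mul, ← Matrix.mul_kronecker_mul,
    rk_trace, Matrix.trace_kronecker, traceC_eq_q A hA, traceC_eq_q B hB, ← Complex.ofReal_mul,
    Complex.ofReal_re]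
  simp

end QFAaux

namespace QFAaux

open MOnQFA

variable {σ : Type}

@[reducible] noncomputable def trivA (σ : Type) : MOnQFA σ where
  m := 1
  k _ := 1
  eig _ _ := 0
  P _ _ := 1
  init := Matrix.of fun _ _ => 1
  F := ∅

lemma trivA_valid : (trivA σ).Valid := by
  refine ⟨?_, ?_, ?_, ?_, ?_, ?_⟩
  · intro c a b _; exact Subsingleton.elim (α := Fin 1) a b
  · intro c j; simp [trivA]
  · intro c j; simp [trivA]
  · intro c j j' h; exact absurd (Subsingleton.elim (α := Fin 1) j j') h
  · intro c; simp [trivA]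
  · simp [trivA]

noncomputable def tpow (A : MOnQFA σ) : ℕ → MOnQFA σ
  | 0 => trivA σ
  | n + 1 => tensor A (tpow A n) ∅

lemma tpow_valid (A : MOnQFA σ) (hA : A.Valid) : ∀ n, (tpow A n).Valid
  | 0 => trivA_valid
  | n + 1 => tensor_valid A (tpow A n) hA (tpow_valid A hA n) ∅

/-- number of accepting coordinates of an outcome of the `n`-fold tensor power -/
noncomputable def cnt (A : MOnQFA σ) : (n : ℕ) → Fin ((tpow A n).k none) → ℕ
  | 0, _ => 0
  | n + 1, j => (if (finProdFinEquiv.symm j).1 ∈ A.F then 1 else 0)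
      + cnt A n (finProdFinEquiv.symm j).2

lemma sum_q_tpow (A : MOnQFA σ) (hA : A.Valid) (n : ℕ) (w : List σ) (f : ℕ → ℝ) :
    ∑ j, q (tpow A (n+1)) w j * f (cnt A (n+1) j)
      = ∑ i, ∑ j, (q A w i * q (tpow A n) w j)
          * f ((if i ∈ A.F then 1 else 0) + cnt A n j) := by
  have h := Fintype.sum_equiv
    (show (Fin (A.k none) × Fin ((tpow A n).k none)) ≃ Fin ((tpow A (n+1)).k none)
      from finProdFinEquiv)
    (fun p => (q A w p.1 * q (tpow A n) w p.2)
      * f ((if p.1 ∈ A.F then 1 else 0) + cnt A n p.2))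
    (fun j => q (tpow A (n+1)) w j * f (cnt A (n+1) j)) ?_
  · rw [← h, Fintype.sum_prod_type]
  · intro p
    have hc : cnt A (n+1) (finProdFinEquiv p)
        = (if p.1 ∈ A.F then 1 else 0) + cnt A n p.2 := by
      show (if (finProdFinEquiv.symm (finProdFinEquiv p)).1 ∈ A.F then 1 else 0)
          + cnt A n (finProdFinEquiv.symm (finProdFinEquiv p)).2 = _
      rw [Equiv.symm_apply_apply]
    show (q A w p.1 * q (tpow A n) w p.2) * f ((if p.1 ∈ A.F then 1 else 0) + cnt A n p.2)
        = q (tensor A (tpow A n) ∅) w (finProdFinEquiv p) * f (cnt A (n+1) (finProdFinEquiv p))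
    rw [q_tensor A (tpow A n) hA (tpow_valid A hA n) ∅ w p, hc]

lemma sum_aF (A : MOnQFA σ) (w : List σ) :
    ∑ i, q A w i * (if i ∈ A.F then (1:ℝ) else 0) = A.prob w := by
  rw [prob_eq_sum_q]
  simp_rw [mul_ite, mul_one, mul_zero]
  rw [Finset.sum_ite_mem, Finset.univ_inter]

lemma E1 (A : MOnQFA σ) (hA : A.Valid) (n : ℕ) (w : List σ) :
    ∑ j, q (tpow A n) w j * (cnt A n j : ℝ) = n * A.prob w := by
  induction n with
  | zero =>
      have h0 : ∀ x, cnt A 0 x = 0 := fun _ => rfl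
      simp [h0]
  | succ n ih =>
      rw [sum_q_tpow A hA n w (fun s => (s : ℝ))]
      have h1 : ∀ (i : Fin (A.k none)) (j : Fin ((tpow A n).k none)),
          (q A w i * q (tpow A n) w j)
            * ((((if i ∈ A.F then 1 else 0) + cnt A n j : ℕ)) : ℝ)
          = (q A w i * (if i ∈ A.F then (1:ℝ) else 0)) * q (tpow A n) w j
            + q A w i * (q (tpow A n) w j * (cnt A n j : ℝ)) := by
        intro i j
        by_cases h : i ∈ A.F <;> simp [h] <;> push_cast <;> ring
      simp_rw [h1, Finset.sum_add_distrib, ← Finset.mul_sum, ← Finset.sum_mul]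
      rw [sum_q _ (tpow_valid A hA n) w, sum_q A hA w, sum_aF A w, ih]
      push_cast
      ring

lemma E2 (A : MOnQFA σ) (hA : A.Valid) (n : ℕ) (w : List σ) :
    ∑ j, q (tpow A n) w j * (cnt A n j : ℝ) ^ 2
      = n * A.prob w * (1 - A.prob w) + (n * A.prob w) ^ 2 := by
  induction n with
  | zero =>
      have h0 : ∀ x, cnt A 0 x = 0 := fun _ => rfl
      simp [h0]
  | succ n ih =>
      rw [sum_q_tpow A hA n w (fun s => (s : ℝ) ^ 2)]
      have h1 : ∀ (i : Fin (A.k none)) (j : Fin ((tpow A n).k none)),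
          (q A w i * q (tpow A n) w j)
            * ((((if i ∈ A.F then 1 else 0) + cnt A n j : ℕ)) : ℝ) ^ 2
          = (q A w i * (if i ∈ A.F then (1:ℝ) else 0)) * q (tpow A n) w j
            + (q A w i * (if i ∈ A.F then (1:ℝ) else 0))
                * (2 * (q (tpow A n) w j * (cnt A n j : ℝ)))
            + q A w i * (q (tpow A n) w j * (cnt A n j : ℝ) ^ 2) := by
        intro i j
        by_cases h : i ∈ A.F <;> simp [h] <;> push_cast <;> ring
      simp_rw [h1, Finset.sum_add_distrib, ← Finset.mul_sum, ← Finset.sum_mul]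
      rw [sum_q _ (tpow_valid A hA n) w, sum_q A hA w, sum_aF A w, ih, E1 A hA n w]
      push_cast
      ring

lemma Var_le (A : MOnQFA σ) (hA : A.Valid) (n : ℕ) (w : List σ) :
    ∑ j, q (tpow A n) w j * ((cnt A n j : ℝ) - n * A.prob w) ^ 2 ≤ n / 4 := by
  have hp0 : 0 ≤ A.prob w := prob_nonneg A hA w
  have hp1 : A.prob w ≤ 1 := prob_le_one A hA w
  have expand : ∀ j : Fin ((tpow A n).k none),
      q (tpow A n) w j * ((cnt A n j : ℝ) - n * A.prob w) ^ 2
      = q (tpow A n) w j * (cnt A n j : ℝ) ^ 2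
        - (2 * (n * A.prob w)) * (q (tpow A n) w j * (cnt A n j : ℝ))
        + (n * A.prob w) ^ 2 * q (tpow A n) w j := by
    intro j; ring
  rw [Finset.sum_congr rfl fun j _ => expand j]
  rw [Finset.sum_add_distrib, Finset.sum_sub_distrib, ← Finset.mul_sum, ← Finset.mul_sum,
    sum_q _ (tpow_valid A hA n) w, E1 A hA n w, E2 A hA n w]
  have : (n : ℝ) * A.prob w * (1 - A.prob w) + (n * A.prob w) ^ 2
      - 2 * (n * A.prob w) * (n * A.prob w) + (n * A.prob w) ^ 2 * 1
      = n * (A.prob w * (1 - A.prob w)) := by ring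
  rw [this]
  have h4 : A.prob w * (1 - A.prob w) ≤ 1 / 4 := by nlinarith [sq_nonneg (2 * A.prob w - 1)]
  have hn : (0 : ℝ) ≤ n := Nat.cast_nonneg n
  calc (n : ℝ) * (A.prob w * (1 - A.prob w)) ≤ n * (1 / 4) :=
        mul_le_mul_of_nonneg_left h4 hn
    _ = n / 4 := by ring

end QFAaux

namespace QFAaux

lemma cheb {ι : Type*} [Fintype ι] (qf : ι → ℝ) (hq : ∀ i, 0 ≤ qf i)
    (X : ι → ℝ) (t : ℝ) (ht : 0 < t) (B : Finset ι)
    (hBX : ∀ i ∈ B, t ≤ |X i|) :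
    ∑ i ∈ B, qf i ≤ (∑ i, qf i * X i ^ 2) / t ^ 2 := by
  rw [le_div_iff₀ (pow_pos ht 2)]
  calc (∑ i ∈ B, qf i) * t ^ 2 = ∑ i ∈ B, qf i * t ^ 2 := by rw [Finset.sum_mul]
    _ ≤ ∑ i ∈ B, qf i * X i ^ 2 := by
        refine Finset.sum_le_sum fun i hi => ?_
        refine mul_le_mul_of_nonneg_left ?_ (hq i)
        calc t ^ 2 ≤ |X i| ^ 2 := pow_le_pow_left₀ ht.le (hBX i hi) 2
          _ = X i ^ 2 := sq_abs _
    _ ≤ ∑ i, qf i * X i ^ 2 :=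
        Finset.sum_le_sum_of_subset_of_nonneg (Finset.subset_univ _)
          (fun i _ _ => mul_nonneg (hq i) (sq_nonneg _))

end QFAaux

open QFAaux

/-- For every language `L ∈ LMO(Σ)` over a finite nonempty alphabet
and every `ε > 0`, there is a probabilistic event `φ ∈ PMO(Σ)` approximating the
characteristic function `χ_L` of `L` within `ε`: `|φ(w) − χ_L(w)| < ε` for all words
(`χ_L` is the indicator function of `L`, with value `1` on `L` and `0` elsewhere). -/
theorem pmo_approximates_characteristic_function
    (σ : Type) [Fintype σ] [Nonempty σ] (L : Set (List σ)) (hL : L ∈ LMO σ)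
    (ε : ℝ) (hε : 0 < ε) :
    ∃ φ ∈ PMO σ, ∀ w : List σ,
      |φ w - L.indicator (fun _ => (1 : ℝ)) w| < ε := by
  classical
  obtain ⟨A, hA, lam, δ, hlam, hδ, hiso, hLdef⟩ := hL
  -- choose the number of repetitions
  obtain ⟨n, hn⟩ := exists_nat_gt (max 1 (1 / (4 * δ ^ 2 * ε)))
  have hn1R : (1 : ℝ) < n := lt_of_le_of_lt (le_max_left _ _) hn
  have hnpos : (0 : ℝ) < n := lt_trans one_pos hn1R
  have hgt : 1 / (4 * δ ^ 2 * ε) < n := lt_of_le_of_lt (le_max_right _ _) hn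
  have hnε : 1 / (4 * n * δ ^ 2) < ε := by
    rw [div_lt_iff₀ (by positivity)]
    have h1 : 1 < (n : ℝ) * (4 * δ ^ 2 * ε) := (div_lt_iff₀ (by positivity)).mp hgt
    nlinarith
  -- the amplified automaton : n-fold tensor power with majority acceptance
  set Fset : Finset (Fin ((tpow A n).k none)) :=
    Finset.univ.filter (fun j => (lam * (n : ℝ)) < (cnt A n j : ℝ)) with hFset
  set C : MOnQFA σ := { tpow A n with F := Fset } with hCdef
  have hT : (tpow A n).Valid := tpow_valid A hA n
  have hCvalid : C.Valid := hT
  refine ⟨C.prob, ⟨C, hCvalid, rfl⟩, ?_⟩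
  intro w
  have hq0 : ∀ j, 0 ≤ q (tpow A n) w j := q_nonneg _ hT w
  have hsum : ∑ j, q (tpow A n) w j = 1 := sum_q _ hT w
  have hprob : C.prob w = ∑ j ∈ Fset, q (tpow A n) w j := by
    rw [prob_eq_sum_q C w]
    exact Finset.sum_congr rfl fun j _ => rfl
  have hp0 : 0 ≤ A.prob w := prob_nonneg A hA w
  have hp1 : A.prob w ≤ 1 := prob_le_one A hA w
  have hvar := Var_le A hA n w
  have ht : (0 : ℝ) < δ * n := mul_pos hδ hnpos
  have hCnn : 0 ≤ C.prob w := by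
    rw [hprob]; exact Finset.sum_nonneg fun j _ => hq0 j
  have hC1 : C.prob w ≤ 1 := by
    rw [hprob, ← hsum]
    exact Finset.sum_le_sum_of_subset_of_nonneg (Finset.subset_univ _) fun j _ _ => hq0 j
  have hbound : ((n : ℝ) / 4) / (δ * n) ^ 2 < ε := by
    have heq : ((n : ℝ) / 4) / (δ * n) ^ 2 = 1 / (4 * n * δ ^ 2) := by
      field_simp
    rw [heq]; exact hnε
  have main : ∀ B : Finset (Fin ((tpow A n).k none)),
      (∀ j ∈ B, δ * n ≤ |(cnt A n j : ℝ) - n * A.prob w|) →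
      ∑ j ∈ B, q (tpow A n) w j < ε := by
    intro B hB
    have hch := cheb (fun j => q (tpow A n) w j) hq0
      (fun j => (cnt A n j : ℝ) - n * A.prob w) (δ * n) ht B hB
    have h2 : (∑ j, q (tpow A n) w j * ((cnt A n j : ℝ) - n * A.prob w) ^ 2) / (δ * n) ^ 2
        ≤ ((n : ℝ) / 4) / (δ * n) ^ 2 := by
      exact div_le_div_of_nonneg_right hvar (pow_pos ht 2).le
    exact lt_of_le_of_lt (le_trans hch h2) hbound
  have hiso' := hiso w
  by_cases hw : w ∈ L
  · -- w ∈ L : A.prob w ≥ lam + δ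
    have hpgt : lam < A.prob w := by
      have : w ∈ {w | A.prob w > lam} := hLdef ▸ hw
      exact this
    have hpd : lam + δ ≤ A.prob w := by
      rw [abs_of_pos (sub_pos.mpr hpgt)] at hiso'
      linarith
    rw [Set.indicator_of_mem hw]
    have hsplit := Finset.sum_filter_add_sum_filter_not Finset.univ
      (fun j => (lam * (n : ℝ)) < (cnt A n j : ℝ)) (fun j => q (tpow A n) w j)
    rw [hsum] at hsplit
    have hbad : ∑ j ∈ Finset.univ.filter
        (fun j => ¬ ((lam * (n : ℝ)) < (cnt A n j : ℝ))), q (tpow A n) w j < ε := by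
      refine main _ fun j hj => ?_
      simp only [Finset.mem_filter, not_lt] at hj
      have hle : (cnt A n j : ℝ) ≤ lam * n := hj.2
      refine le_abs.mpr (Or.inr ?_)
      nlinarith
    have h1φ : C.prob w - 1 ≤ 0 := by linarith
    rw [abs_of_nonpos h1φ]
    have : 1 - C.prob w < ε := by
      rw [hprob, hFset]
      linarith [hsplit, hbad]
    linarith
  · -- w ∉ L : A.prob w ≤ lam - δ
    have hple : ¬ lam < A.prob w := by
      intro hcon
      exact hw (hLdef ▸ (hcon : w ∈ {w | A.prob w > lam}))
    have hpd : A.prob w ≤ lam - δ := by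
      rw [abs_of_nonpos (by linarith [not_lt.mp hple] : A.prob w - lam ≤ 0)] at hiso'
      linarith
    rw [Set.indicator_of_notMem hw, sub_zero, abs_of_nonneg hCnn, hprob]
    refine main _ fun j hj => ?_
    rw [hFset] at hj
    simp only [Finset.mem_filter] at hj
    have hgt' : lam * n < (cnt A n j : ℝ) := hj.2
    refine le_abs.mpr (Or.inl ?_)
    nlinarith
end

section
/- Let Σ be a finite nonempty alphabet. The class LMO(Σ) is closed under intersection, union and complement: if L₁, L₂ ∈ LMO(Σ), then L₁ ∩ L₂ ∈ LMO(Σ), L₁ ∪ L₂ ∈ LMO(Σ), and Σ* ∖ L₁ ∈ LMO(Σ). -/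
open Matrix

section Aux
open Kronecker ComplexOrder

namespace MOnQFA2

lemma foldl_pred {α γ : Type*} (f : γ → α → γ) (Q : γ → Prop)
    (h : ∀ x c, Q x → Q (f x c)) (l : List α) (x : γ) (hx : Q x) : Q (l.foldl f x) := by
  induction l generalizing x with
  | nil => exact hx
  | cons c l ih => exact ih _ (h x c hx)

lemma foldl_rel₂ {α γ δ ε : Type*} (f : γ → α → γ) (g : δ → α → δ) (h : ε → α → ε)
    (R : γ → δ → ε → Prop)
    (hstep : ∀ x y z c, R x y z → R (f x c) (g y c) (h z c)) :
    ∀ (l : List α) (x : γ) (y : δ) (z : ε), R x y z → R (l.foldl f x) (l.foldl g y) (l.foldl h z) := by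
  intro l
  induction l with
  | nil => intro x y z hx; exact hx
  | cons c l ih => intro x y z hx; exact ih _ _ _ (hstep x y z c hx)

lemma trace_submatrix_equiv {n m : Type*} [Fintype n] [Fintype m]
    (e : n ≃ m) (M : Matrix m m ℂ) : (M.submatrix ⇑e ⇑e).trace = M.trace := by
  unfold Matrix.trace Matrix.diag
  exact Fintype.sum_equiv e _ _ (fun i => rfl)

lemma submatrix_sum {ι n m : Type*} (s : Finset ι) (f : ι → Matrix m m ℂ) (e : n → m) :
    (∑ i ∈ s, f i).submatrix e e = ∑ i ∈ s, (f i).submatrix e e := by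
  ext i j
  simp [Matrix.sum_apply]

lemma kron_conjTranspose {m n p q : Type*} (A : Matrix m n ℂ) (B : Matrix p q ℂ) :
    (A ⊗ₖ B)ᴴ = Aᴴ ⊗ₖ Bᴴ := by
  ext ⟨i, j⟩ ⟨i', j'⟩
  simp [Matrix.conjTranspose_apply, mul_comm]

lemma sum_kron {ι m n p q : Type*} (s : Finset ι) (f : ι → Matrix m n ℂ) (B : Matrix p q ℂ) :
    (∑ i ∈ s, f i) ⊗ₖ B = ∑ i ∈ s, (f i ⊗ₖ B) := by
  ext ⟨i, j⟩ ⟨i', j'⟩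
  simp [Matrix.sum_apply, Finset.sum_mul]

lemma kron_sum {ι m n p q : Type*} (s : Finset ι) (A : Matrix m n ℂ) (f : ι → Matrix p q ℂ) :
    A ⊗ₖ (∑ i ∈ s, f i) = ∑ i ∈ s, (A ⊗ₖ f i) := by
  ext ⟨i, j⟩ ⟨i', j'⟩
  simp [Matrix.sum_apply, Finset.mul_sum]

lemma submatrix_equiv_eq_iff {m n : Type*} (e : m ≃ n) (N : Matrix n n ℂ) (L : Matrix m m ℂ) :
    N.submatrix ⇑e ⇑e = L ↔ N = L.submatrix ⇑e.symm ⇑e.symm := by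
  constructor
  · rintro rfl
    ext i j
    simp
  · rintro rfl
    ext i j
    simp

lemma trace_fromBlocks {m n : Type*} [Fintype m] [Fintype n]
    (A : Matrix m m ℂ) (B : Matrix m n ℂ) (C : Matrix n m ℂ) (D : Matrix n n ℂ) :
    (fromBlocks A B C D).trace = A.trace + D.trace := by
  unfold Matrix.trace Matrix.diag
  rw [Fintype.sum_sum_type]
  rfl

lemma psd_trace_nonneg {n : Type*} [Fintype n] [DecidableEq n] {M : Matrix n n ℂ} (h : M.PosSemidef) :
    0 ≤ M.trace := by
  unfold Matrix.trace Matrix.diag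
  refine Finset.sum_nonneg fun i _ => ?_
  have h2 : 0 ≤ M i i := h.diag_nonneg
  simpa [dotProduct, Matrix.mulVec, Pi.single_apply, Finset.mul_sum] using h2

end MOnQFA2
end Aux

section Core
open Kronecker ComplexOrder MOnQFA2

namespace MOnQFA

variable {σ : Type} {A B : MOnQFA σ}

lemma dens_posSemidef (hv : A.Valid) (w : List σ) : (A.dens w).PosSemidef := by
  obtain ⟨-, hH, -, -, -, -⟩ := hv
  refine foldl_pred _ _ ?_ w _ (Matrix.posSemidef_conjTranspose_mul_self _)
  intro ρ c hρ
  refine Finset.sum_induction _ _ (fun a b ha hb => ha.add hb) .zero ?_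
  intro j _
  have := hρ.mul_mul_conjTranspose_same (A.P (some c) j)
  rwa [hH] at this

lemma trace_sandwich (hv : A.Valid) {ρ : Matrix (Fin A.m) (Fin A.m) ℂ} (hρ : ρ.trace = 1)
    (c : Option σ) : (∑ j, A.P c j * ρ * A.P c j).trace = 1 := by
  obtain ⟨-, -, hPP, -, hsum, -⟩ := hv
  calc (∑ j, A.P c j * ρ * A.P c j).trace
      = ∑ j, (A.P c j * ρ * A.P c j).trace := Matrix.trace_sum _ _
    _ = ∑ j, (A.P c j * A.P c j * ρ).trace := by
        refine Finset.sum_congr rfl fun j _ => ?_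
        rw [Matrix.trace_mul_cycle (A.P c j) ρ (A.P c j)]
    _ = ((∑ j, A.P c j * A.P c j) * ρ).trace := by
        rw [Finset.sum_mul, Matrix.trace_sum]
    _ = 1 := by
        have : ∑ j, A.P c j * A.P c j = ∑ j, A.P c j := Finset.sum_congr rfl fun j _ => hPP c j
        rw [this, hsum, one_mul, hρ]

lemma trace_dens (hv : A.Valid) (w : List σ) : (A.dens w).trace = 1 := by
  refine foldl_pred _ (fun ρ : Matrix (Fin A.m) (Fin A.m) ℂ => ρ.trace = 1) ?_ w _ ?_
  · intro ρ c hρ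
    exact trace_sandwich hv hρ (some c)
  · show (A.initᴴ * A.init).trace = 1
    rw [Matrix.trace_mul_comm, Matrix.trace_fin_one]
    have : (A.init * A.initᴴ) 0 0 = ∑ i, A.init 0 i * star (A.init 0 i) := by
      simp [Matrix.mul_apply, Matrix.conjTranspose_apply]
    rw [this]
    have hv6 := hv.2.2.2.2.2
    calc ∑ i, A.init 0 i * star (A.init 0 i)
        = ∑ i, (Complex.normSq (A.init 0 i) : ℂ) := by
          refine Finset.sum_congr rfl fun i _ => ?_
          exact Complex.mul_conj _
      _ = ((∑ i, Complex.normSq (A.init 0 i) : ℝ) : ℂ) := by push_cast; ring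
      _ = 1 := by rw [hv6]; norm_num

lemma trace_part_nonneg (hv : A.Valid) (w : List σ) (G : Finset (Fin (A.k none))) :
    0 ≤ (∑ j ∈ G, A.P none j * A.dens w * A.P none j).trace := by
  obtain hH := hv.2.1
  have hps : (∑ j ∈ G, A.P none j * A.dens w * A.P none j).PosSemidef := by
    refine Finset.sum_induction _ _ (fun a b ha hb => ha.add hb) .zero ?_
    intro j _
    have := (dens_posSemidef hv w).mul_mul_conjTranspose_same (A.P none j)
    rwa [hH] at this
  exact psd_trace_nonneg hps

lemma trace_part_im (hv : A.Valid) (w : List σ) (G : Finset (Fin (A.k none))) :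
    (∑ j ∈ G, A.P none j * A.dens w * A.P none j).trace.im = 0 := by
  have h := Complex.le_def.mp (trace_part_nonneg hv w G)
  simpa using h.2.symm

lemma trace_univ (hv : A.Valid) (w : List σ) :
    (∑ j, A.P none j * A.dens w * A.P none j).trace = 1 :=
  trace_sandwich hv (trace_dens hv w) none

lemma prob_nonneg (hv : A.Valid) (w : List σ) : 0 ≤ A.prob w := by
  have h := Complex.le_def.mp (trace_part_nonneg hv w A.F)
  simpa [prob] using h.1

lemma prob_le_one (hv : A.Valid) (w : List σ) : A.prob w ≤ 1 := by
  have hsplit : (∑ j ∈ A.F, A.P none j * A.dens w * A.P none j)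
      + (∑ j ∈ A.Fᶜ, A.P none j * A.dens w * A.P none j)
      = ∑ j, A.P none j * A.dens w * A.P none j :=
    Finset.sum_add_sum_compl A.F _
  have h1 := congrArg (fun M => (Matrix.trace M).re) hsplit
  simp only [Matrix.trace_add, Complex.add_re] at h1
  have h2 : (0:ℝ) ≤ (∑ j ∈ A.Fᶜ, A.P none j * A.dens w * A.P none j).trace.re := by
    have h := Complex.le_def.mp (trace_part_nonneg hv w A.Fᶜ)
    simpa using h.1
  have h3 : ((∑ j, A.P none j * A.dens w * A.P none j).trace).re = 1 := by
    rw [trace_univ hv w]; norm_num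
  rw [h3] at h1
  unfold prob
  linarith

end MOnQFA
end Core

section Tensor
open Kronecker ComplexOrder MOnQFA2

namespace MOnQFA

variable {σ : Type} {A B : MOnQFA σ}

/-- Tensor product of two MOn-1qfas. -/
noncomputable def tensor (A B : MOnQFA σ) : MOnQFA σ where
  m := A.m * B.m
  k := fun c => A.k c * B.k c
  eig := fun _ j => (j : ℝ)
  P := fun c j => ((A.P c (finProdFinEquiv.symm j).1) ⊗ₖ (B.P c (finProdFinEquiv.symm j).2)).submatrix
      ⇑finProdFinEquiv.symm ⇑finProdFinEquiv.symm
  init := (A.init ⊗ₖ B.init).submatrix ⇑(finProdFinEquiv (m := 1) (n := 1)).symm ⇑finProdFinEquiv.symm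
  F := (A.F ×ˢ B.F).map finProdFinEquiv.toEmbedding

lemma eig_inj (k : ℕ) : Function.Injective (fun j : Fin k => (j : ℝ)) := by
  intro a b h
  have : (a : ℕ) = (b : ℕ) := Nat.cast_injective h
  exact Fin.ext this

/-- Purely matrix-level: a sandwich sum of Kronecker projectors factorizes. -/
lemma kron_sum_sandwich (c : Option σ) (y : Matrix (Fin A.m) (Fin A.m) ℂ)
    (z : Matrix (Fin B.m) (Fin B.m) ℂ) :
    (∑ j : Fin (A.k c * B.k c),
        ((A.P c (finProdFinEquiv.symm j).1) ⊗ₖ (B.P c (finProdFinEquiv.symm j).2)).submatrix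
          ⇑finProdFinEquiv.symm ⇑finProdFinEquiv.symm
        * ((y ⊗ₖ z).submatrix ⇑finProdFinEquiv.symm ⇑finProdFinEquiv.symm)
        * ((A.P c (finProdFinEquiv.symm j).1) ⊗ₖ (B.P c (finProdFinEquiv.symm j).2)).submatrix
          ⇑finProdFinEquiv.symm ⇑finProdFinEquiv.symm)
    = (((∑ j₁, A.P c j₁ * y * A.P c j₁) ⊗ₖ (∑ j₂, B.P c j₂ * z * B.P c j₂))).submatrix
        ⇑finProdFinEquiv.symm ⇑finProdFinEquiv.symm := by
  have hstep : ∀ j : Fin (A.k c * B.k c),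
      ((A.P c (finProdFinEquiv.symm j).1) ⊗ₖ (B.P c (finProdFinEquiv.symm j).2)).submatrix
          ⇑finProdFinEquiv.symm ⇑finProdFinEquiv.symm
        * ((y ⊗ₖ z).submatrix ⇑finProdFinEquiv.symm ⇑finProdFinEquiv.symm)
        * ((A.P c (finProdFinEquiv.symm j).1) ⊗ₖ (B.P c (finProdFinEquiv.symm j).2)).submatrix
          ⇑finProdFinEquiv.symm ⇑finProdFinEquiv.symm
      = ((A.P c (finProdFinEquiv.symm j).1 * y * A.P c (finProdFinEquiv.symm j).1)
          ⊗ₖ (B.P c (finProdFinEquiv.symm j).2 * z * B.P c (finProdFinEquiv.symm j).2)).submatrix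
          ⇑finProdFinEquiv.symm ⇑finProdFinEquiv.symm := by
    intro j
    rw [Matrix.submatrix_mul_equiv _ _ _ finProdFinEquiv.symm _,
        Matrix.submatrix_mul_equiv _ _ _ finProdFinEquiv.symm _,
        ← Matrix.mul_kronecker_mul, ← Matrix.mul_kronecker_mul]
  rw [Finset.sum_congr rfl (fun j _ => hstep j), ← submatrix_sum]
  congr 1
  rw [show (∑ j : Fin (A.k c * B.k c),
      (A.P c (finProdFinEquiv.symm j).1 * y * A.P c (finProdFinEquiv.symm j).1)
        ⊗ₖ (B.P c (finProdFinEquiv.symm j).2 * z * B.P c (finProdFinEquiv.symm j).2))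
    = ∑ p : Fin (A.k c) × Fin (B.k c),
      (A.P c p.1 * y * A.P c p.1) ⊗ₖ (B.P c p.2 * z * B.P c p.2) from
    (Fintype.sum_equiv finProdFinEquiv _ _ (fun p => by simp)).symm]
  rw [Fintype.sum_prod_type]
  simp_rw [← kron_sum]
  rw [← sum_kron]

lemma tensor_valid (hA : A.Valid) (hB : B.Valid) : (tensor A B).Valid := by
  obtain ⟨-, hH1, hPP1, hO1, hS1, hI1⟩ := hA
  obtain ⟨-, hH2, hPP2, hO2, hS2, hI2⟩ := hB
  refine ⟨fun c => eig_inj ((tensor A B).k c), ?_, ?_, ?_, ?_, ?_⟩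
  · intro c j
    show (((A.P c (finProdFinEquiv.symm j).1) ⊗ₖ (B.P c (finProdFinEquiv.symm j).2)).submatrix
        ⇑finProdFinEquiv.symm ⇑finProdFinEquiv.symm)ᴴ
      = ((A.P c (finProdFinEquiv.symm j).1) ⊗ₖ (B.P c (finProdFinEquiv.symm j).2)).submatrix
        ⇑finProdFinEquiv.symm ⇑finProdFinEquiv.symm
    rw [Matrix.conjTranspose_submatrix, kron_conjTranspose, hH1, hH2]
  · intro c j
    show ((A.P c (finProdFinEquiv.symm j).1) ⊗ₖ (B.P c (finProdFinEquiv.symm j).2)).submatrix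
        ⇑finProdFinEquiv.symm ⇑finProdFinEquiv.symm
      * ((A.P c (finProdFinEquiv.symm j).1) ⊗ₖ (B.P c (finProdFinEquiv.symm j).2)).submatrix
        ⇑finProdFinEquiv.symm ⇑finProdFinEquiv.symm
      = ((A.P c (finProdFinEquiv.symm j).1) ⊗ₖ (B.P c (finProdFinEquiv.symm j).2)).submatrix
        ⇑finProdFinEquiv.symm ⇑finProdFinEquiv.symm
    rw [Matrix.submatrix_mul_equiv _ _ _ finProdFinEquiv.symm _, ← Matrix.mul_kronecker_mul,
      hPP1, hPP2]
  · intro c j j' hjj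
    show ((A.P c (finProdFinEquiv.symm j).1) ⊗ₖ (B.P c (finProdFinEquiv.symm j).2)).submatrix
        ⇑finProdFinEquiv.symm ⇑finProdFinEquiv.symm
      * ((A.P c (finProdFinEquiv.symm j').1) ⊗ₖ (B.P c (finProdFinEquiv.symm j').2)).submatrix
        ⇑finProdFinEquiv.symm ⇑finProdFinEquiv.symm
      = 0
    rw [Matrix.submatrix_mul_equiv _ _ _ finProdFinEquiv.symm _, ← Matrix.mul_kronecker_mul]
    by_cases h1 : (finProdFinEquiv.symm j).1 = (finProdFinEquiv.symm j').1
    · have h2 : (finProdFinEquiv.symm j).2 ≠ (finProdFinEquiv.symm j').2 := by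
        intro h2
        exact hjj (finProdFinEquiv.symm.injective (Prod.ext h1 h2))
      rw [h1, hO2 c _ _ h2, Matrix.kronecker_zero, Matrix.submatrix_zero]
      rfl
    · rw [hO1 c _ _ h1, Matrix.zero_kronecker, Matrix.submatrix_zero]
      rfl
  · intro c
    show (∑ j : Fin (A.k c * B.k c),
        ((A.P c (finProdFinEquiv.symm j).1) ⊗ₖ (B.P c (finProdFinEquiv.symm j).2)).submatrix
          ⇑finProdFinEquiv.symm ⇑finProdFinEquiv.symm)
      = 1
    rw [← submatrix_sum]
    rw [show (∑ j : Fin (A.k c * B.k c),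
        (A.P c (finProdFinEquiv.symm j).1) ⊗ₖ (B.P c (finProdFinEquiv.symm j).2))
      = ∑ p : Fin (A.k c) × Fin (B.k c), (A.P c p.1) ⊗ₖ (B.P c p.2) from
      (Fintype.sum_equiv finProdFinEquiv _ _ (fun p => by simp)).symm]
    rw [Fintype.sum_prod_type]
    simp_rw [← kron_sum]
    rw [← sum_kron, hS1, hS2, Matrix.one_kronecker_one]
    exact Matrix.submatrix_one_equiv finProdFinEquiv.symm
  · show ∑ i : Fin (A.m * B.m), Complex.normSq (((A.init ⊗ₖ B.init).submatrix
        ⇑(finProdFinEquiv (m := 1) (n := 1)).symm ⇑finProdFinEquiv.symm) 0 i) = 1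
    have he : ∀ i : Fin (A.m * B.m),
        Complex.normSq (((A.init ⊗ₖ B.init).submatrix
            ⇑(finProdFinEquiv (m := 1) (n := 1)).symm ⇑finProdFinEquiv.symm) 0 i)
        = Complex.normSq (A.init 0 (finProdFinEquiv.symm i).1)
          * Complex.normSq (B.init 0 (finProdFinEquiv.symm i).2) := by
      intro i
      rw [Matrix.submatrix_apply]
      rw [show (A.init ⊗ₖ B.init) ((finProdFinEquiv (m := 1) (n := 1)).symm 0) (finProdFinEquiv.symm i)
        = A.init ((finProdFinEquiv (m := 1) (n := 1)).symm 0).1 (finProdFinEquiv.symm i).1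
          * B.init ((finProdFinEquiv (m := 1) (n := 1)).symm 0).2 (finProdFinEquiv.symm i).2 from rfl]
      rw [Complex.normSq_mul]
      congr 2 <;> exact Subsingleton.elim _ _
    rw [Finset.sum_congr rfl (fun i _ => he i)]
    rw [show (∑ i : Fin (A.m * B.m), Complex.normSq (A.init 0 (finProdFinEquiv.symm i).1)
          * Complex.normSq (B.init 0 (finProdFinEquiv.symm i).2))
      = ∑ p : Fin A.m × Fin B.m, Complex.normSq (A.init 0 p.1) * Complex.normSq (B.init 0 p.2) from
      (Fintype.sum_equiv finProdFinEquiv _ _ (fun p => by simp)).symm]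
    rw [Fintype.sum_prod_type]
    simp_rw [← Finset.mul_sum]
    rw [← Finset.sum_mul, hI1, hI2, one_mul]

lemma dens_tensor (w : List σ) :
    (tensor A B).dens w
      = ((A.dens w) ⊗ₖ (B.dens w)).submatrix ⇑finProdFinEquiv.symm ⇑finProdFinEquiv.symm := by
  refine foldl_rel₂ _ _ _
    (fun (x : Matrix (Fin (tensor A B).m) (Fin (tensor A B).m) ℂ)
         (y : Matrix (Fin A.m) (Fin A.m) ℂ) (z : Matrix (Fin B.m) (Fin B.m) ℂ) =>
      x = (y ⊗ₖ z).submatrix ⇑finProdFinEquiv.symm ⇑finProdFinEquiv.symm) ?_ w _ _ _ ?_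
  · rintro x y z c rfl
    exact kron_sum_sandwich (A := A) (B := B) (some c) y z
  · show (tensor A B).initᴴ * (tensor A B).init = _
    show ((A.init ⊗ₖ B.init).submatrix ⇑(finProdFinEquiv (m := 1) (n := 1)).symm ⇑finProdFinEquiv.symm)ᴴ
      * ((A.init ⊗ₖ B.init).submatrix ⇑(finProdFinEquiv (m := 1) (n := 1)).symm ⇑finProdFinEquiv.symm)
      = ((A.initᴴ * A.init) ⊗ₖ (B.initᴴ * B.init)).submatrix ⇑finProdFinEquiv.symm ⇑finProdFinEquiv.symm
    rw [Matrix.conjTranspose_submatrix,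
      Matrix.submatrix_mul_equiv _ _ _ (finProdFinEquiv (m := 1) (n := 1)).symm _,
      kron_conjTranspose, ← Matrix.mul_kronecker_mul]

lemma prob_tensor (hA : A.Valid) (hB : B.Valid) (w : List σ) :
    (tensor A B).prob w = A.prob w * B.prob w := by
  have hsum : (∑ j ∈ (tensor A B).F, (tensor A B).P none j * (tensor A B).dens w * (tensor A B).P none j)
      = ∑ p ∈ A.F ×ˢ B.F,
        ((A.P none p.1 * A.dens w * A.P none p.1) ⊗ₖ (B.P none p.2 * B.dens w * B.P none p.2)).submatrix
          ⇑finProdFinEquiv.symm ⇑finProdFinEquiv.symm := by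
    rw [show (tensor A B).F = (A.F ×ˢ B.F).map finProdFinEquiv.toEmbedding from rfl]
    erw [Finset.sum_map]
    refine Finset.sum_congr rfl fun p _ => ?_
    rw [dens_tensor w]
    show ((A.P none (finProdFinEquiv.symm (finProdFinEquiv p)).1)
          ⊗ₖ (B.P none (finProdFinEquiv.symm (finProdFinEquiv p)).2)).submatrix
          ⇑finProdFinEquiv.symm ⇑finProdFinEquiv.symm
        * ((A.dens w ⊗ₖ B.dens w).submatrix ⇑finProdFinEquiv.symm ⇑finProdFinEquiv.symm)
        * ((A.P none (finProdFinEquiv.symm (finProdFinEquiv p)).1)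
          ⊗ₖ (B.P none (finProdFinEquiv.symm (finProdFinEquiv p)).2)).submatrix
          ⇑finProdFinEquiv.symm ⇑finProdFinEquiv.symm
      = ((A.P none p.1 * A.dens w * A.P none p.1) ⊗ₖ (B.P none p.2 * B.dens w * B.P none p.2)).submatrix
          ⇑finProdFinEquiv.symm ⇑finProdFinEquiv.symm
    rw [Matrix.submatrix_mul_equiv _ _ _ finProdFinEquiv.symm _,
        Matrix.submatrix_mul_equiv _ _ _ finProdFinEquiv.symm _,
        ← Matrix.mul_kronecker_mul, ← Matrix.mul_kronecker_mul, Equiv.symm_apply_apply]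
  unfold prob
  rw [hsum, ← submatrix_sum]
  erw [trace_submatrix_equiv finProdFinEquiv.symm]
  rw [Matrix.trace_sum]
  rw [show (∑ p ∈ A.F ×ˢ B.F,
      ((A.P none p.1 * A.dens w * A.P none p.1) ⊗ₖ (B.P none p.2 * B.dens w * B.P none p.2)).trace)
    = ∑ p ∈ A.F ×ˢ B.F, (A.P none p.1 * A.dens w * A.P none p.1).trace
        * (B.P none p.2 * B.dens w * B.P none p.2).trace from
    Finset.sum_congr rfl fun p _ => Matrix.trace_kronecker _ _]
  rw [Finset.sum_product]
  simp_rw [← Finset.mul_sum]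
  rw [← Finset.sum_mul, ← Matrix.trace_sum, ← Matrix.trace_sum]
  rw [Complex.mul_re, trace_part_im hA w A.F, trace_part_im hB w B.F]
  ring

end MOnQFA
end Tensor

section ComplConst
open Kronecker ComplexOrder MOnQFA2

namespace MOnQFA

variable {σ : Type} {A : MOnQFA σ}

/-- Complement automaton: same automaton, complemented set of accepting eigenvalues. -/
def complAut (A : MOnQFA σ) : MOnQFA σ := { A with F := A.Fᶜ }

lemma complAut_valid (hv : A.Valid) : (complAut A).Valid := hv

lemma prob_complAut (hv : A.Valid) (w : List σ) : (complAut A).prob w = 1 - A.prob w := by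
  have hd : (complAut A).dens w = A.dens w := rfl
  have hsplit : (∑ j ∈ A.F, A.P none j * A.dens w * A.P none j)
      + (∑ j ∈ A.Fᶜ, A.P none j * A.dens w * A.P none j)
      = ∑ j, A.P none j * A.dens w * A.P none j :=
    Finset.sum_add_sum_compl A.F _
  have h1 := congrArg (fun M => (Matrix.trace M).re) hsplit
  simp only [Matrix.trace_add, Complex.add_re] at h1
  have h3 : ((∑ j, A.P none j * A.dens w * A.P none j).trace).re = 1 := by
    rw [trace_univ hv w]; norm_num
  rw [h3] at h1
  show ((∑ j ∈ A.Fᶜ, A.P none j * A.dens w * A.P none j).trace).re = 1 - A.prob w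
  unfold prob
  linarith

/-- The one-state automaton accepting everything with probability 1. -/
noncomputable def constOne (σ : Type) : MOnQFA σ where
  m := 1
  k := fun _ => 1
  eig := fun _ _ => 0
  P := fun _ _ => 1
  init := 1
  F := Finset.univ

/-- The one-state automaton accepting everything with probability 0. -/
noncomputable def constZero (σ : Type) : MOnQFA σ := { constOne σ with F := ∅ }

lemma constOne_valid : (constOne σ).Valid := by
  refine ⟨fun c x y _ => Subsingleton.elim (α := Fin 1) x y, fun _ _ => Matrix.conjTranspose_one,
    fun _ _ => one_mul 1, fun c j j' h => absurd (Subsingleton.elim (α := Fin 1) j j') h, fun c => ?_, ?_⟩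
  · simp [constOne]
    exact Fin.sum_univ_one _
  · show ∑ i : Fin 1, Complex.normSq ((1 : Matrix (Fin 1) (Fin 1) ℂ) 0 i) = 1
    simp [Matrix.one_apply]

lemma constZero_valid : (constZero σ).Valid := constOne_valid

lemma prob_constOne (w : List σ) : (constOne σ).prob w = 1 := by
  have h := trace_univ (A := constOne σ) constOne_valid w
  unfold prob
  have h2 : (∑ j ∈ (constOne σ).F, (constOne σ).P none j * (constOne σ).dens w * (constOne σ).P none j)
      = ∑ j, (constOne σ).P none j * (constOne σ).dens w * (constOne σ).P none j := rfl
  rw [h2, h]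
  norm_num

lemma prob_constZero (w : List σ) : (constZero σ).prob w = 0 := by
  unfold prob
  rw [show (constZero σ).F = (∅ : Finset (Fin 1)) from rfl]
  erw [Finset.sum_empty]
  simp

end MOnQFA
end ComplConst

section Cvx
open Kronecker ComplexOrder MOnQFA2

namespace MOnQFA

variable {σ : Type} {A B : MOnQFA σ} {a : ℝ}

/-- Direct sum automaton realizing the convex combination `a • p_A + (1-a) • p_B`. -/
noncomputable def cvx (a : ℝ) (A B : MOnQFA σ) : MOnQFA σ where
  m := A.m + B.m
  k := fun c => A.k c + B.k c
  eig := fun _ j => (j : ℝ)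
  P := fun c j => (Sum.elim (fun j₁ => fromBlocks (A.P c j₁) 0 0 0)
      (fun j₂ => fromBlocks 0 0 0 (B.P c j₂)) (finSumFinEquiv.symm j)).submatrix
      ⇑finSumFinEquiv.symm ⇑finSumFinEquiv.symm
  init := Matrix.of fun (_ : Fin 1) i => Sum.elim
      (fun i₁ => ((Real.sqrt a : ℝ) : ℂ) * A.init 0 i₁)
      (fun i₂ => ((Real.sqrt (1-a) : ℝ) : ℂ) * B.init 0 i₂) (finSumFinEquiv.symm i)
  F := (A.F.disjSum B.F).map finSumFinEquiv.toEmbedding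

lemma sum_fromBlocks_left {ι : Type*} (s : Finset ι) (f : ι → Matrix (Fin A.m) (Fin A.m) ℂ) :
    (∑ i ∈ s, fromBlocks (f i) (0 : Matrix (Fin A.m) (Fin B.m) ℂ)
        (0 : Matrix (Fin B.m) (Fin A.m) ℂ) (0 : Matrix (Fin B.m) (Fin B.m) ℂ))
      = fromBlocks (∑ i ∈ s, f i) 0 0 0 := by
  ext (i | i) (j | j) <;> simp [Matrix.sum_apply]

lemma sum_fromBlocks_right {ι : Type*} (s : Finset ι) (f : ι → Matrix (Fin B.m) (Fin B.m) ℂ) :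
    (∑ i ∈ s, fromBlocks (0 : Matrix (Fin A.m) (Fin A.m) ℂ) (0 : Matrix (Fin A.m) (Fin B.m) ℂ)
        (0 : Matrix (Fin B.m) (Fin A.m) ℂ) (f i))
      = fromBlocks 0 0 0 (∑ i ∈ s, f i) := by
  ext (i | i) (j | j) <;> simp [Matrix.sum_apply]

lemma cvx_valid (ha : 0 ≤ a) (ha1 : a ≤ 1) (hA : A.Valid) (hB : B.Valid) : (cvx a A B).Valid := by
  obtain ⟨-, hH1, hPP1, hO1, hS1, hI1⟩ := hA
  obtain ⟨-, hH2, hPP2, hO2, hS2, hI2⟩ := hB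
  refine ⟨fun c => eig_inj ((cvx a A B).k c), ?_, ?_, ?_, ?_, ?_⟩
  · intro c j
    show ((Sum.elim (fun j₁ => fromBlocks (A.P c j₁) 0 0 0)
        (fun j₂ => fromBlocks 0 0 0 (B.P c j₂)) (finSumFinEquiv.symm j)).submatrix
        ⇑finSumFinEquiv.symm ⇑finSumFinEquiv.symm)ᴴ
      = (Sum.elim (fun j₁ => fromBlocks (A.P c j₁) 0 0 0)
        (fun j₂ => fromBlocks 0 0 0 (B.P c j₂)) (finSumFinEquiv.symm j)).submatrix
        ⇑finSumFinEquiv.symm ⇑finSumFinEquiv.symm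
    rw [Matrix.conjTranspose_submatrix]
    rcases hj : finSumFinEquiv.symm j with j₁ | j₂ <;>
      simp [Matrix.fromBlocks_conjTranspose, hH1, hH2]
  · intro c j
    show (Sum.elim (fun j₁ => fromBlocks (A.P c j₁) 0 0 0)
        (fun j₂ => fromBlocks 0 0 0 (B.P c j₂)) (finSumFinEquiv.symm j)).submatrix
        ⇑finSumFinEquiv.symm ⇑finSumFinEquiv.symm
      * (Sum.elim (fun j₁ => fromBlocks (A.P c j₁) 0 0 0)
        (fun j₂ => fromBlocks 0 0 0 (B.P c j₂)) (finSumFinEquiv.symm j)).submatrix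
        ⇑finSumFinEquiv.symm ⇑finSumFinEquiv.symm
      = (Sum.elim (fun j₁ => fromBlocks (A.P c j₁) 0 0 0)
        (fun j₂ => fromBlocks 0 0 0 (B.P c j₂)) (finSumFinEquiv.symm j)).submatrix
        ⇑finSumFinEquiv.symm ⇑finSumFinEquiv.symm
    rw [Matrix.submatrix_mul_equiv _ _ _ finSumFinEquiv.symm _]
    rcases hj : finSumFinEquiv.symm j with j₁ | j₂ <;>
      simp [Matrix.fromBlocks_multiply, hPP1, hPP2]
  · intro c j j' hjj
    show (Sum.elim (fun j₁ => fromBlocks (A.P c j₁) 0 0 0)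
        (fun j₂ => fromBlocks 0 0 0 (B.P c j₂)) (finSumFinEquiv.symm j)).submatrix
        ⇑finSumFinEquiv.symm ⇑finSumFinEquiv.symm
      * (Sum.elim (fun j₁ => fromBlocks (A.P c j₁) 0 0 0)
        (fun j₂ => fromBlocks 0 0 0 (B.P c j₂)) (finSumFinEquiv.symm j')).submatrix
        ⇑finSumFinEquiv.symm ⇑finSumFinEquiv.symm
      = 0
    rw [Matrix.submatrix_mul_equiv _ _ _ finSumFinEquiv.symm _]
    have hne : finSumFinEquiv.symm j ≠ finSumFinEquiv.symm j' := fun h =>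
      hjj (finSumFinEquiv.symm.injective h)
    rcases hj : finSumFinEquiv.symm j with j₁ | j₂ <;>
      rcases hj' : finSumFinEquiv.symm j' with j₁' | j₂'
    · have : j₁ ≠ j₁' := by rintro rfl; rw [hj, hj'] at hne; exact hne rfl
      simp [Matrix.fromBlocks_multiply, hO1 c _ _ this]
    · simp [Matrix.fromBlocks_multiply]
    · simp [Matrix.fromBlocks_multiply]
    · have : j₂ ≠ j₂' := by rintro rfl; rw [hj, hj'] at hne; exact hne rfl
      simp [Matrix.fromBlocks_multiply, hO2 c _ _ this]
  · intro c
    show (∑ j : Fin (A.k c + B.k c), (Sum.elim (fun j₁ => fromBlocks (A.P c j₁) 0 0 0)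
        (fun j₂ => fromBlocks 0 0 0 (B.P c j₂)) (finSumFinEquiv.symm j)).submatrix
        ⇑finSumFinEquiv.symm ⇑finSumFinEquiv.symm) = 1
    rw [← submatrix_sum]
    rw [show (∑ j : Fin (A.k c + B.k c), Sum.elim (fun j₁ => fromBlocks (A.P c j₁) 0 0 0)
        (fun j₂ => fromBlocks 0 0 0 (B.P c j₂)) (finSumFinEquiv.symm j))
      = ∑ s : Fin (A.k c) ⊕ Fin (B.k c), Sum.elim (fun j₁ => fromBlocks (A.P c j₁) 0 0 0)
        (fun j₂ => fromBlocks 0 0 0 (B.P c j₂)) s from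
      (Fintype.sum_equiv finSumFinEquiv _ _ (fun s => by simp)).symm]
    rw [Fintype.sum_sum_type]
    simp only [Sum.elim_inl, Sum.elim_inr]
    rw [sum_fromBlocks_left, sum_fromBlocks_right, hS1, hS2,
      show (fromBlocks 1 0 0 0 + fromBlocks 0 0 0 1 :
          Matrix (Fin A.m ⊕ Fin B.m) (Fin A.m ⊕ Fin B.m) ℂ) = fromBlocks 1 0 0 1 by
        rw [Matrix.fromBlocks_add]; simp,
      Matrix.fromBlocks_one]
    exact Matrix.submatrix_one_equiv finSumFinEquiv.symm
  · show (∑ i : Fin (A.m + B.m), Complex.normSq ((Matrix.of fun (_ : Fin 1) i => Sum.elim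
        (fun i₁ => ((Real.sqrt a : ℝ) : ℂ) * A.init 0 i₁)
        (fun i₂ => ((Real.sqrt (1-a) : ℝ) : ℂ) * B.init 0 i₂) (finSumFinEquiv.symm i)) 0 i)) = 1
    rw [show (∑ i : Fin (A.m + B.m), Complex.normSq ((Matrix.of fun (_ : Fin 1) i => Sum.elim
        (fun i₁ => ((Real.sqrt a : ℝ) : ℂ) * A.init 0 i₁)
        (fun i₂ => ((Real.sqrt (1-a) : ℝ) : ℂ) * B.init 0 i₂) (finSumFinEquiv.symm i)) 0 i))
      = ∑ s : Fin A.m ⊕ Fin B.m, Complex.normSq (Sum.elim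
        (fun i₁ => ((Real.sqrt a : ℝ) : ℂ) * A.init 0 i₁)
        (fun i₂ => ((Real.sqrt (1-a) : ℝ) : ℂ) * B.init 0 i₂) s) from
      (Fintype.sum_equiv finSumFinEquiv _ _ (fun s => by simp)).symm]
    rw [Fintype.sum_sum_type]
    simp only [Sum.elim_inl, Sum.elim_inr, Complex.normSq_mul, Complex.normSq_ofReal]
    rw [Real.mul_self_sqrt ha, Real.mul_self_sqrt (by linarith : (0:ℝ) ≤ 1 - a)]
    simp only [← Finset.mul_sum]
    rw [hI1, hI2]
    ring

end MOnQFA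
end Cvx

section Cvx2
open Kronecker ComplexOrder MOnQFA2

namespace MOnQFA

variable {σ : Type} {A B : MOnQFA σ} {a : ℝ}

lemma cvx_step (c : Option σ) (y : Matrix (Fin A.m) (Fin A.m) ℂ)
    (X : Matrix (Fin A.m) (Fin B.m) ℂ) (Y : Matrix (Fin B.m) (Fin A.m) ℂ)
    (z : Matrix (Fin B.m) (Fin B.m) ℂ) :
    (∑ j : Fin (A.k c + B.k c),
        (Sum.elim (fun j₁ => fromBlocks (A.P c j₁) 0 0 0)
          (fun j₂ => fromBlocks 0 0 0 (B.P c j₂)) (finSumFinEquiv.symm j)).submatrix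
          ⇑finSumFinEquiv.symm ⇑finSumFinEquiv.symm
        * ((fromBlocks y X Y z).submatrix ⇑finSumFinEquiv.symm ⇑finSumFinEquiv.symm)
        * (Sum.elim (fun j₁ => fromBlocks (A.P c j₁) 0 0 0)
          (fun j₂ => fromBlocks 0 0 0 (B.P c j₂)) (finSumFinEquiv.symm j)).submatrix
          ⇑finSumFinEquiv.symm ⇑finSumFinEquiv.symm)
    = (fromBlocks (∑ j₁, A.P c j₁ * y * A.P c j₁) 0 0
        (∑ j₂, B.P c j₂ * z * B.P c j₂)).submatrix ⇑finSumFinEquiv.symm ⇑finSumFinEquiv.symm := by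
  have hstep : ∀ j : Fin (A.k c + B.k c),
      (Sum.elim (fun j₁ => fromBlocks (A.P c j₁) 0 0 0)
          (fun j₂ => fromBlocks 0 0 0 (B.P c j₂)) (finSumFinEquiv.symm j)).submatrix
          ⇑finSumFinEquiv.symm ⇑finSumFinEquiv.symm
        * ((fromBlocks y X Y z).submatrix ⇑finSumFinEquiv.symm ⇑finSumFinEquiv.symm)
        * (Sum.elim (fun j₁ => fromBlocks (A.P c j₁) 0 0 0)
          (fun j₂ => fromBlocks 0 0 0 (B.P c j₂)) (finSumFinEquiv.symm j)).submatrix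
          ⇑finSumFinEquiv.symm ⇑finSumFinEquiv.symm
      = (Sum.elim (fun j₁ => fromBlocks (A.P c j₁ * y * A.P c j₁) 0 0 0)
          (fun j₂ => fromBlocks 0 0 0 (B.P c j₂ * z * B.P c j₂)) (finSumFinEquiv.symm j)).submatrix
          ⇑finSumFinEquiv.symm ⇑finSumFinEquiv.symm := by
    intro j
    rw [Matrix.submatrix_mul_equiv _ _ _ finSumFinEquiv.symm _,
        Matrix.submatrix_mul_equiv _ _ _ finSumFinEquiv.symm _]
    rcases hj : finSumFinEquiv.symm j with j₁ | j₂ <;>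
      simp [Matrix.fromBlocks_multiply]
  rw [Finset.sum_congr rfl (fun j _ => hstep j), ← submatrix_sum]
  congr 1
  rw [show (∑ j : Fin (A.k c + B.k c), Sum.elim (fun j₁ => fromBlocks (A.P c j₁ * y * A.P c j₁) 0 0 0)
        (fun j₂ => fromBlocks 0 0 0 (B.P c j₂ * z * B.P c j₂)) (finSumFinEquiv.symm j))
    = ∑ s : Fin (A.k c) ⊕ Fin (B.k c), Sum.elim (fun j₁ => fromBlocks (A.P c j₁ * y * A.P c j₁) 0 0 0)
        (fun j₂ => fromBlocks 0 0 0 (B.P c j₂ * z * B.P c j₂)) s from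
    (Fintype.sum_equiv finSumFinEquiv _ _ (fun s => by simp)).symm]
  rw [Fintype.sum_sum_type]
  simp only [Sum.elim_inl, Sum.elim_inr]
  rw [sum_fromBlocks_left, sum_fromBlocks_right, Matrix.fromBlocks_add]
  simp

lemma dens_cvx (ha : 0 ≤ a) (ha1 : a ≤ 1) (w : List σ) :
    ∃ (X : Matrix (Fin A.m) (Fin B.m) ℂ) (Y : Matrix (Fin B.m) (Fin A.m) ℂ),
      (cvx a A B).dens w
        = (fromBlocks ((a : ℂ) • A.dens w) X Y (((1 - a : ℝ) : ℂ) • B.dens w)).submatrix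
            ⇑finSumFinEquiv.symm ⇑finSumFinEquiv.symm := by
  refine foldl_rel₂ _ _ _
    (fun (x : Matrix (Fin (cvx a A B).m) (Fin (cvx a A B).m) ℂ)
         (y : Matrix (Fin A.m) (Fin A.m) ℂ) (z : Matrix (Fin B.m) (Fin B.m) ℂ) =>
      ∃ X Y, x = (fromBlocks ((a : ℂ) • y) X Y (((1 - a : ℝ) : ℂ) • z)).submatrix
        ⇑finSumFinEquiv.symm ⇑finSumFinEquiv.symm) ?_ w _ _ _ ?_
  · rintro x y z c ⟨X, Y, rfl⟩
    refine ⟨0, 0, ?_⟩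
    have h := cvx_step (A := A) (B := B) (some c) ((a : ℂ) • y) X Y (((1 - a : ℝ) : ℂ) • z)
    refine h.trans ?_
    have h1 : (∑ j₁, A.P (some c) j₁ * ((a : ℂ) • y) * A.P (some c) j₁)
        = (a : ℂ) • ∑ j₁, A.P (some c) j₁ * y * A.P (some c) j₁ := by
      rw [Finset.smul_sum]
      refine Finset.sum_congr rfl fun j _ => ?_
      rw [mul_smul_comm, smul_mul_assoc]
    have h2 : (∑ j₂, B.P (some c) j₂ * (((1 - a : ℝ) : ℂ) • z) * B.P (some c) j₂)
        = ((1 - a : ℝ) : ℂ) • ∑ j₂, B.P (some c) j₂ * z * B.P (some c) j₂ := by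
      rw [Finset.smul_sum]
      refine Finset.sum_congr rfl fun j _ => ?_
      rw [mul_smul_comm, smul_mul_assoc]
    rw [h1, h2]
  · -- base case: the initial density matrix
    refine ⟨((Real.sqrt a * Real.sqrt (1 - a) : ℝ) : ℂ) • (A.initᴴ * B.init),
            ((Real.sqrt a * Real.sqrt (1 - a) : ℝ) : ℂ) • (B.initᴴ * A.init), ?_⟩
    show (cvx a A B).initᴴ * (cvx a A B).init = _
    symm
    refine (submatrix_equiv_eq_iff finSumFinEquiv.symm _ _).mpr ?_
    ext (i | i) (j | j) <;>
    · simp only [Equiv.symm_symm, Matrix.submatrix_apply, Matrix.fromBlocks_apply₁₁,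
        Matrix.fromBlocks_apply₁₂, Matrix.fromBlocks_apply₂₁, Matrix.fromBlocks_apply₂₂,
        Matrix.smul_apply, Matrix.mul_apply, Matrix.conjTranspose_apply, Fin.sum_univ_one,
        smul_eq_mul]
      erw [Matrix.submatrix_apply, Matrix.mul_apply, Fin.sum_univ_one]
      show _ = star ((cvx a A B).init 0 (finSumFinEquiv _)) * (cvx a A B).init 0 (finSumFinEquiv _)
      show _ = star (Sum.elim (fun i₁ => ((Real.sqrt a : ℝ) : ℂ) * A.init 0 i₁)
          (fun i₂ => ((Real.sqrt (1-a) : ℝ) : ℂ) * B.init 0 i₂)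
            (finSumFinEquiv.symm (finSumFinEquiv _)))
        * (Sum.elim (fun i₁ => ((Real.sqrt a : ℝ) : ℂ) * A.init 0 i₁)
          (fun i₂ => ((Real.sqrt (1-a) : ℝ) : ℂ) * B.init 0 i₂)
            (finSumFinEquiv.symm (finSumFinEquiv _)))
      rw [Equiv.symm_apply_apply, Equiv.symm_apply_apply]
      simp only [Sum.elim_inl, Sum.elim_inr, star_mul', Complex.star_def, Complex.conj_ofReal,
        Complex.ofReal_mul]
      try rw [show ((a:ℝ) : ℂ) = ((Real.sqrt a : ℝ) : ℂ) * ((Real.sqrt a : ℝ) : ℂ) by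
            rw [← Complex.ofReal_mul, Real.mul_self_sqrt ha]]
      try rw [show ((1 - a : ℝ) : ℂ) = ((Real.sqrt (1-a) : ℝ) : ℂ) * ((Real.sqrt (1-a) : ℝ) : ℂ) by
            rw [← Complex.ofReal_mul, Real.mul_self_sqrt (by linarith : (0:ℝ) ≤ 1 - a)]]
      ring

end MOnQFA
end Cvx2

section Cvx3
open Kronecker ComplexOrder MOnQFA2

namespace MOnQFA

variable {σ : Type} {A B : MOnQFA σ} {a : ℝ}

lemma prob_cvx (ha : 0 ≤ a) (ha1 : a ≤ 1) (w : List σ) :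
    (cvx a A B).prob w = a * A.prob w + (1 - a) * B.prob w := by
  obtain ⟨X, Y, hd⟩ := dens_cvx (A := A) (B := B) ha ha1 w
  have hterm1 : ∀ j : Fin (A.k none),
      (Sum.elim (fun j₁ => fromBlocks (A.P none j₁) 0 0 0)
        (fun j₂ => fromBlocks 0 0 0 (B.P none j₂))
          (finSumFinEquiv.symm (finSumFinEquiv (Sum.inl j)))).submatrix
        ⇑finSumFinEquiv.symm ⇑finSumFinEquiv.symm
      * ((fromBlocks ((a : ℂ) • A.dens w) X Y (((1 - a : ℝ) : ℂ) • B.dens w)).submatrix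
            ⇑finSumFinEquiv.symm ⇑finSumFinEquiv.symm)
      * (Sum.elim (fun j₁ => fromBlocks (A.P none j₁) 0 0 0)
        (fun j₂ => fromBlocks 0 0 0 (B.P none j₂))
          (finSumFinEquiv.symm (finSumFinEquiv (Sum.inl j)))).submatrix
        ⇑finSumFinEquiv.symm ⇑finSumFinEquiv.symm
      = (fromBlocks ((a:ℂ) • (A.P none j * A.dens w * A.P none j)) 0 0 0).submatrix
          ⇑finSumFinEquiv.symm ⇑finSumFinEquiv.symm := by
    intro j
    rw [Matrix.submatrix_mul_equiv _ _ _ finSumFinEquiv.symm _,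
        Matrix.submatrix_mul_equiv _ _ _ finSumFinEquiv.symm _, Equiv.symm_apply_apply]
    simp only [Sum.elim_inl]
    rw [Matrix.fromBlocks_multiply, Matrix.fromBlocks_multiply]
    simp [mul_smul_comm, smul_mul_assoc]
  have hterm2 : ∀ j : Fin (B.k none),
      (Sum.elim (fun j₁ => fromBlocks (A.P none j₁) 0 0 0)
        (fun j₂ => fromBlocks 0 0 0 (B.P none j₂))
          (finSumFinEquiv.symm (finSumFinEquiv (Sum.inr j)))).submatrix
        ⇑finSumFinEquiv.symm ⇑finSumFinEquiv.symm
      * ((fromBlocks ((a : ℂ) • A.dens w) X Y (((1 - a : ℝ) : ℂ) • B.dens w)).submatrix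
            ⇑finSumFinEquiv.symm ⇑finSumFinEquiv.symm)
      * (Sum.elim (fun j₁ => fromBlocks (A.P none j₁) 0 0 0)
        (fun j₂ => fromBlocks 0 0 0 (B.P none j₂))
          (finSumFinEquiv.symm (finSumFinEquiv (Sum.inr j)))).submatrix
        ⇑finSumFinEquiv.symm ⇑finSumFinEquiv.symm
      = (fromBlocks 0 0 0 (((1 - a : ℝ):ℂ) • (B.P none j * B.dens w * B.P none j))).submatrix
          ⇑finSumFinEquiv.symm ⇑finSumFinEquiv.symm := by
    intro j
    rw [Matrix.submatrix_mul_equiv _ _ _ finSumFinEquiv.symm _,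
        Matrix.submatrix_mul_equiv _ _ _ finSumFinEquiv.symm _, Equiv.symm_apply_apply]
    simp only [Sum.elim_inr]
    rw [Matrix.fromBlocks_multiply, Matrix.fromBlocks_multiply]
    simp [mul_smul_comm, smul_mul_assoc]
  unfold prob
  rw [hd]
  show (∑ j ∈ (A.F.disjSum B.F).map finSumFinEquiv.toEmbedding,
      (Sum.elim (fun j₁ => fromBlocks (A.P none j₁) 0 0 0)
        (fun j₂ => fromBlocks 0 0 0 (B.P none j₂)) (finSumFinEquiv.symm j)).submatrix
        ⇑finSumFinEquiv.symm ⇑finSumFinEquiv.symm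
      * ((fromBlocks ((a : ℂ) • A.dens w) X Y (((1 - a : ℝ) : ℂ) • B.dens w)).submatrix
            ⇑finSumFinEquiv.symm ⇑finSumFinEquiv.symm)
      * (Sum.elim (fun j₁ => fromBlocks (A.P none j₁) 0 0 0)
        (fun j₂ => fromBlocks 0 0 0 (B.P none j₂)) (finSumFinEquiv.symm j)).submatrix
        ⇑finSumFinEquiv.symm ⇑finSumFinEquiv.symm).trace.re
    = a * (∑ j ∈ A.F, A.P none j * A.dens w * A.P none j).trace.re
      + (1 - a) * (∑ j ∈ B.F, B.P none j * B.dens w * B.P none j).trace.re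
  rw [Finset.sum_map]
  simp only [Equiv.coe_toEmbedding]
  rw [Finset.sum_disjSum]
  rw [Finset.sum_congr rfl (fun j _ => hterm1 j), Finset.sum_congr rfl (fun j _ => hterm2 j)]
  rw [← submatrix_sum, ← submatrix_sum, Matrix.trace_add,
    trace_submatrix_equiv finSumFinEquiv.symm, trace_submatrix_equiv finSumFinEquiv.symm]
  rw [show (∑ j ∈ A.F, fromBlocks ((a:ℂ) • (A.P none j * A.dens w * A.P none j))
        (0 : Matrix (Fin A.m) (Fin B.m) ℂ) (0 : Matrix (Fin B.m) (Fin A.m) ℂ)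
        (0 : Matrix (Fin B.m) (Fin B.m) ℂ))
      = fromBlocks (∑ j ∈ A.F, (a:ℂ) • (A.P none j * A.dens w * A.P none j)) 0 0 0 from
    sum_fromBlocks_left _ _]
  rw [show (∑ j ∈ B.F, fromBlocks (0 : Matrix (Fin A.m) (Fin A.m) ℂ)
        (0 : Matrix (Fin A.m) (Fin B.m) ℂ) (0 : Matrix (Fin B.m) (Fin A.m) ℂ)
        (((1 - a : ℝ):ℂ) • (B.P none j * B.dens w * B.P none j)))
      = fromBlocks 0 0 0 (∑ j ∈ B.F, ((1 - a : ℝ):ℂ) • (B.P none j * B.dens w * B.P none j)) from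
    sum_fromBlocks_right _ _]
  rw [trace_fromBlocks, trace_fromBlocks]
  rw [← Finset.smul_sum, ← Finset.smul_sum, Matrix.trace_smul, Matrix.trace_smul]
  simp only [Matrix.trace_zero, add_zero, zero_add, smul_eq_mul, Complex.add_re,
    Complex.re_ofReal_mul]

end MOnQFA
end Cvx3

section PMOLemmas
open MOnQFA MOnQFA2

variable {σ : Type}

lemma pmo_bounds {φ : List σ → ℝ} (h : φ ∈ PMO σ) (w : List σ) : 0 ≤ φ w ∧ φ w ≤ 1 := by
  obtain ⟨A, hv, rfl⟩ := h
  exact ⟨prob_nonneg hv w, prob_le_one hv w⟩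

lemma pmo_mul {φ ψ : List σ → ℝ} (hφ : φ ∈ PMO σ) (hψ : ψ ∈ PMO σ) :
    (fun w => φ w * ψ w) ∈ PMO σ := by
  obtain ⟨A, hvA, rfl⟩ := hφ
  obtain ⟨B, hvB, rfl⟩ := hψ
  exact ⟨tensor A B, tensor_valid hvA hvB, funext fun w => (prob_tensor hvA hvB w).symm⟩

lemma pmo_one_sub {φ : List σ → ℝ} (hφ : φ ∈ PMO σ) : (fun w => 1 - φ w) ∈ PMO σ := by
  obtain ⟨A, hvA, rfl⟩ := hφ
  exact ⟨complAut A, complAut_valid hvA, funext fun w => (prob_complAut hvA w).symm⟩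

lemma pmo_cvx {a : ℝ} (ha : 0 ≤ a) (ha1 : a ≤ 1) {φ ψ : List σ → ℝ}
    (hφ : φ ∈ PMO σ) (hψ : ψ ∈ PMO σ) :
    (fun w => a * φ w + (1 - a) * ψ w) ∈ PMO σ := by
  obtain ⟨A, hvA, rfl⟩ := hφ
  obtain ⟨B, hvB, rfl⟩ := hψ
  exact ⟨cvx a A B, cvx_valid ha ha1 hvA hvB, funext fun w => (prob_cvx ha ha1 w).symm⟩

lemma pmo_one : (fun _ : List σ => (1:ℝ)) ∈ PMO σ :=
  ⟨constOne σ, constOne_valid, funext fun w => (prob_constOne w).symm⟩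

lemma pmo_zero : (fun _ : List σ => (0:ℝ)) ∈ PMO σ :=
  ⟨constZero σ, constZero_valid, funext fun w => (prob_constZero w).symm⟩

lemma pmo_const {c : ℝ} (h0 : 0 ≤ c) (h1 : c ≤ 1) : (fun _ : List σ => c) ∈ PMO σ := by
  have h := pmo_cvx h0 h1 (pmo_one (σ := σ)) (pmo_zero (σ := σ))
  simpa using h

/-- The amplification map `G`, realizable from the closure operations. -/
noncomputable def Gmap (t : ℝ) : ℝ :=
  (1/2) * (t * (1 - (1 - t) * (1 - t))) + (1 - 1/2) * (1 - (1 - t) * (1 - t * t))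

lemma pmo_G {φ : List σ → ℝ} (hφ : φ ∈ PMO σ) : (fun w => Gmap (φ w)) ∈ PMO σ := by
  have h1 : (fun w => φ w * (1 - (1 - φ w) * (1 - φ w))) ∈ PMO σ :=
    pmo_mul hφ (pmo_one_sub (pmo_mul (pmo_one_sub hφ) (pmo_one_sub hφ)))
  have h2 : (fun w => 1 - (1 - φ w) * (1 - φ w * φ w)) ∈ PMO σ :=
    pmo_one_sub (pmo_mul (pmo_one_sub hφ) (pmo_one_sub (pmo_mul hφ hφ)))
  have h3 := pmo_cvx (by norm_num : (0:ℝ) ≤ 1/2) (by norm_num : (1:ℝ)/2 ≤ 1) h1 h2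
  convert h3 using 2
  rfl

lemma Gmap_eq (t : ℝ) : Gmap t = 1/2 + (5/4) * (t - 1/2) - (t - 1/2)^3 := by
  unfold Gmap; ring

lemma Gmap_ge {t x : ℝ} (ht1 : t ≤ 1) (hx : 0 ≤ x) (hle : 1/2 + x ≤ t) :
    1/2 + min (1/4) ((9/8) * x) ≤ Gmap t := by
  rw [Gmap_eq]
  set y := t - 1/2 with hy
  have hxy : x ≤ y := by rw [hy]; linarith
  have hy2 : y ≤ 1/2 := by rw [hy]; linarith
  have hy0 : 0 ≤ y := le_trans hx hxy
  rcases le_total y (1/4) with h | h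
  · have h3 : y^3 ≤ (1/16)*y := by
      nlinarith [mul_nonneg (mul_nonneg (sub_nonneg.mpr h) hy0) (by linarith : (0:ℝ) ≤ y + 1/4)]
    have h9 : (9/8) * x ≤ (5/4) * y - y^3 := by linarith
    have := min_le_right (1/4 : ℝ) ((9/8) * x)
    linarith
  · have h3 : y^3 ≤ (1/4)*y := by
      nlinarith [mul_nonneg (mul_nonneg hy0 (sub_nonneg.mpr hy2)) (by linarith : (0:ℝ) ≤ y + 1/2)]
    have h9 : (1/4 : ℝ) ≤ (5/4) * y - y^3 := by linarith
    have := min_le_left (1/4 : ℝ) ((9/8) * x)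
    linarith

lemma Gmap_le {t x : ℝ} (ht0 : 0 ≤ t) (hx : 0 ≤ x) (hle : t ≤ 1/2 - x) :
    Gmap t ≤ 1/2 - min (1/4) ((9/8) * x) := by
  rw [Gmap_eq]
  set y := 1/2 - t with hy
  have hxy : x ≤ y := by rw [hy]; linarith
  have hy2 : y ≤ 1/2 := by rw [hy]; linarith
  have hy0 : 0 ≤ y := le_trans hx hxy
  have hty : t - 1/2 = -y := by rw [hy]; ring
  rw [hty]
  rcases le_total y (1/4) with h | h
  · have h3 : y^3 ≤ (1/16)*y := by
      nlinarith [mul_nonneg (mul_nonneg (sub_nonneg.mpr h) hy0) (by linarith : (0:ℝ) ≤ y + 1/4)]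
    have h9 : (9/8) * x ≤ (5/4) * y - y^3 := by linarith
    have := min_le_right (1/4 : ℝ) ((9/8) * x)
    nlinarith
  · have h3 : y^3 ≤ (1/4)*y := by
      nlinarith [mul_nonneg (mul_nonneg hy0 (sub_nonneg.mpr hy2)) (by linarith : (0:ℝ) ≤ y + 1/2)]
    have h9 : (1/4 : ℝ) ≤ (5/4) * y - y^3 := by linarith
    have := min_le_left (1/4 : ℝ) ((9/8) * x)
    nlinarith

lemma min_step {d : ℝ} (hd : 0 < d) (n : ℕ) :
    min (1/4 : ℝ) ((9/8)^(n+1) * d) ≤ min (1/4) ((9/8) * min (1/4) ((9/8)^n * d)) := by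
  rcases min_cases (1/4 : ℝ) ((9/8)^n * d) with ⟨h1, h2⟩ | ⟨h1, h2⟩
  · rw [h1]
    refine le_min (min_le_left _ _) ?_
    calc min (1/4 : ℝ) ((9/8)^(n+1) * d) ≤ 1/4 := min_le_left _ _
      _ ≤ (9/8) * (1/4) := by norm_num
  · rw [h1]
    refine le_min (min_le_left _ _) ?_
    calc min (1/4 : ℝ) ((9/8)^(n+1) * d) ≤ (9/8)^(n+1) * d := min_le_right _ _
      _ = (9/8) * ((9/8)^n * d) := by ring
    
/-- Amplification: any language in `LMO` has an event in `PMO` separated at `3/4` vs `1/4`. -/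
lemma amplify {L : Set (List σ)} (hL : L ∈ LMO σ) :
    ∃ φ ∈ PMO σ, (∀ w ∈ L, 3/4 ≤ φ w) ∧ (∀ w ∉ L, φ w ≤ 1/4) := by
  obtain ⟨A, hv, lam, δ, hlam, hδ, hiso, hLeq⟩ := hL
  by_cases hlam1 : lam ≤ 1
  · -- normalized event with cut-point 1/2 and isolation δ/2
    have hc0 : (0:ℝ) ≤ 1 - lam := by linarith
    have hc1 : (1:ℝ) - lam ≤ 1 := by linarith
    have hφ0 : (fun w => (1/2) * A.prob w + (1 - 1/2) * (1 - lam)) ∈ PMO σ :=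
      pmo_cvx (by norm_num) (by norm_num) ⟨A, hv, rfl⟩ (pmo_const hc0 hc1)
    set φ0 : List σ → ℝ := fun w => (1/2) * A.prob w + (1 - 1/2) * (1 - lam) with hφ0def
    have hhi : ∀ w ∈ L, 1/2 + δ/2 ≤ φ0 w := by
      intro w hw
      have h1 : A.prob w > lam := by rw [hLeq] at hw; exact hw
      have h2 := hiso w
      have h3 : lam + δ ≤ A.prob w := by
        rcases le_or_gt (lam + δ) (A.prob w) with h | h
        · exact h
        · exfalso
          have : |A.prob w - lam| < δ := by
            rw [abs_lt]; constructor <;> linarith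
          linarith [h2]
      simp only [hφ0def]
      linarith
    have hlo : ∀ w ∉ L, φ0 w ≤ 1/2 - δ/2 := by
      intro w hw
      have h1 : ¬ (A.prob w > lam) := by rw [hLeq] at hw; exact hw
      have h2 := hiso w
      have h3 : A.prob w ≤ lam - δ := by
        rcases le_or_gt (A.prob w) (lam - δ) with h | h
        · exact h
        · exfalso
          have : |A.prob w - lam| < δ := by
            rw [abs_lt]; constructor <;> [linarith; linarith [not_lt.mp h1]]
          linarith [h2]
      simp only [hφ0def]
      linarith
    -- iterate the amplification map
    have key : ∀ n : ℕ, ∃ φ ∈ PMO σ,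
        (∀ w ∈ L, 1/2 + min (1/4) ((9/8)^n * (δ/2)) ≤ φ w) ∧
        (∀ w ∉ L, φ w ≤ 1/2 - min (1/4) ((9/8)^n * (δ/2))) := by
      intro n
      induction n with
      | zero =>
        refine ⟨φ0, hφ0, fun w hw => ?_, fun w hw => ?_⟩
        · have := min_le_right (1/4 : ℝ) ((9/8)^0 * (δ/2))
          have h2 := hhi w hw
          simp only [pow_zero, one_mul] at this ⊢
          linarith
        · have := min_le_right (1/4 : ℝ) ((9/8)^0 * (δ/2))
          have h2 := hlo w hw
          simp only [pow_zero, one_mul] at this ⊢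
          linarith
      | succ n ih =>
        obtain ⟨φ, hφ, hhi', hlo'⟩ := ih
        refine ⟨fun w => Gmap (φ w), pmo_G hφ, fun w hw => ?_, fun w hw => ?_⟩
        · have hb := pmo_bounds hφ w
          have h1 := Gmap_ge (t := φ w) (x := min (1/4) ((9/8)^n * (δ/2))) hb.2
            (le_min (by norm_num) (by positivity)) (by linarith [hhi' w hw])
          have h2 := min_step (by positivity : (0:ℝ) < δ/2) n
          linarith
        · have hb := pmo_bounds hφ w
          have h1 := Gmap_le (t := φ w) (x := min (1/4) ((9/8)^n * (δ/2))) hb.1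
            (le_min (by norm_num) (by positivity)) (by linarith [hlo' w hw])
          have h2 := min_step (by positivity : (0:ℝ) < δ/2) n
          linarith
    obtain ⟨n, hn⟩ := pow_unbounded_of_one_lt ((1/4) / (δ/2) : ℝ) (by norm_num : (1:ℝ) < 9/8)
    obtain ⟨φ, hφ, hhi', hlo'⟩ := key n
    have hmin : min (1/4 : ℝ) ((9/8)^n * (δ/2)) = 1/4 := by
      have : (1/4 : ℝ) ≤ (9/8)^n * (δ/2) := by
        rw [div_lt_iff₀ (by positivity : (0:ℝ) < δ/2)] at hn
        linarith
      exact min_eq_left this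
    rw [hmin] at hhi' hlo'
    exact ⟨φ, hφ, fun w hw => by linarith [hhi' w hw], fun w hw => by linarith [hlo' w hw]⟩
  · -- lam > 1 : the language is empty
    have hempty : ∀ w, w ∉ L := by
      intro w hw
      rw [hLeq] at hw
      have := prob_le_one hv w
      have : A.prob w > lam := hw
      linarith [not_le.mp hlam1]
    exact ⟨fun _ => 0, pmo_zero, fun w hw => absurd hw (hempty w), fun w _ => by norm_num⟩

end PMOLemmas

/-- For a finite nonempty alphabet `Σ`, the class `LMO(Σ)` is closed
under intersection, union and complement. -/
theorem lmo_closed_boolean_operations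
    (σ : Type) [Fintype σ] [Nonempty σ] (L₁ L₂ : Set (List σ))
    (h₁ : L₁ ∈ LMO σ) (h₂ : L₂ ∈ LMO σ) :
    L₁ ∩ L₂ ∈ LMO σ ∧ L₁ ∪ L₂ ∈ LMO σ ∧ L₁ᶜ ∈ LMO σ := by
  obtain ⟨φ₁, hφ₁, h₁hi, h₁lo⟩ := amplify h₁
  obtain ⟨φ₂, hφ₂, h₂hi, h₂lo⟩ := amplify h₂
  have hb₁ := pmo_bounds hφ₁
  have hb₂ := pmo_bounds hφ₂
  refine ⟨?_, ?_, ?_⟩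
  · -- intersection
    obtain ⟨C, hvC, hC⟩ := pmo_mul hφ₁ hφ₂
    have hCw : ∀ w, C.prob w = φ₁ w * φ₂ w := fun w => (congrFun hC w).symm
    have hsep : ∀ w, (w ∈ L₁ ∧ w ∈ L₂ → 9/16 ≤ C.prob w)
        ∧ (¬(w ∈ L₁ ∧ w ∈ L₂) → C.prob w ≤ 1/4) := by
      intro w
      constructor
      · rintro ⟨hw1, hw2⟩
        rw [hCw]
        nlinarith [h₁hi w hw1, h₂hi w hw2, (hb₁ w).1, (hb₂ w).1]
      · intro hw
        rw [hCw]
        rcases not_and_or.mp hw with hw1 | hw2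
        · nlinarith [h₁lo w hw1, (hb₁ w).1, (hb₂ w).1, (hb₂ w).2]
        · nlinarith [h₂lo w hw2, (hb₂ w).1, (hb₁ w).1, (hb₁ w).2]
    refine ⟨C, hvC, 13/32, 5/32, by norm_num, by norm_num, ?_, ?_⟩
    · intro w
      by_cases hw : w ∈ L₁ ∧ w ∈ L₂
      · have := (hsep w).1 hw
        calc (5/32 : ℝ) ≤ C.prob w - 13/32 := by linarith
          _ ≤ |C.prob w - 13/32| := le_abs_self _
      · have := (hsep w).2 hw
        calc (5/32 : ℝ) ≤ -(C.prob w - 13/32) := by linarith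
          _ ≤ |C.prob w - 13/32| := neg_le_abs _
    · ext w
      simp only [Set.mem_inter_iff, Set.mem_setOf_eq]
      constructor
      · intro hw
        have := (hsep w).1 hw
        linarith
      · intro hw
        by_contra hcon
        have := (hsep w).2 hcon
        linarith
  · -- union
    obtain ⟨C, hvC, hC⟩ := pmo_one_sub (pmo_mul (pmo_one_sub hφ₁) (pmo_one_sub hφ₂))
    have hCw : ∀ w, C.prob w = 1 - (1 - φ₁ w) * (1 - φ₂ w) := fun w => (congrFun hC w).symm
    have hsep : ∀ w, (w ∈ L₁ ∨ w ∈ L₂ → 3/4 ≤ C.prob w)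
        ∧ (¬(w ∈ L₁ ∨ w ∈ L₂) → C.prob w ≤ 7/16) := by
      intro w
      constructor
      · intro hw
        rw [hCw]
        rcases hw with hw1 | hw2
        · nlinarith [h₁hi w hw1, (hb₁ w).2, (hb₂ w).1, (hb₂ w).2]
        · nlinarith [h₂hi w hw2, (hb₂ w).2, (hb₁ w).1, (hb₁ w).2]
      · intro hw
        rw [hCw]
        rcases not_or.mp hw with ⟨hw1, hw2⟩
        nlinarith [h₁lo w hw1, h₂lo w hw2, (hb₁ w).2, (hb₂ w).2]
    refine ⟨C, hvC, 1/2, 1/16, by norm_num, by norm_num, ?_, ?_⟩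
    · intro w
      by_cases hw : w ∈ L₁ ∨ w ∈ L₂
      · have := (hsep w).1 hw
        calc (1/16 : ℝ) ≤ C.prob w - 1/2 := by linarith
          _ ≤ |C.prob w - 1/2| := le_abs_self _
      · have := (hsep w).2 hw
        calc (1/16 : ℝ) ≤ -(C.prob w - 1/2) := by linarith
          _ ≤ |C.prob w - 1/2| := neg_le_abs _
    · ext w
      simp only [Set.mem_union, Set.mem_setOf_eq]
      constructor
      · intro hw
        have := (hsep w).1 hw
        linarith
      · intro hw
        by_contra hcon
        have := (hsep w).2 hcon
        linarith
  · -- complement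
    obtain ⟨C, hvC, hC⟩ := pmo_one_sub hφ₁
    have hCw : ∀ w, C.prob w = 1 - φ₁ w := fun w => (congrFun hC w).symm
    refine ⟨C, hvC, 1/2, 1/4, by norm_num, by norm_num, ?_, ?_⟩
    · intro w
      by_cases hw : w ∈ L₁
      · have := h₁hi w hw
        rw [abs_sub_comm]
        calc (1/4 : ℝ) ≤ (1/2 - C.prob w) := by rw [hCw]; linarith
          _ ≤ |1/2 - C.prob w| := le_abs_self _
      · have := h₁lo w hw
        calc (1/4 : ℝ) ≤ C.prob w - 1/2 := by rw [hCw]; linarith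
          _ ≤ |C.prob w - 1/2| := le_abs_self _
    · ext w
      simp only [Set.mem_compl_iff, Set.mem_setOf_eq]
      constructor
      · intro hw
        have := h₁lo w hw
        rw [hCw]
        linarith
      · intro hw
        intro hmem
        have := h₁hi w hmem
        rw [hCw] at hw
        linarith
end

section
/- If L ⊆ Σ* is recognized by a MOn-1qfa over Σ with m states with some cut-point isolated by δ > 0, then L is a regular language and sup_{x∈Σ*} var_L(x) ≤ m/δ²; in particular every language in LMO(Σ) is regular and has finite variation. -/
open Matrix

/-- Two words are Nerode-equivalent w.r.t. `L` (they reach the same state of the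
minimal automaton of `L`) if they have the same residuals:
`∀ z, u z ∈ L ↔ u' z ∈ L`. -/
def NerodeEquiv {σ : Type} (L : Set (List σ)) (u u' : List σ) : Prop :=
  ∀ z : List σ, u ++ z ∈ L ↔ u' ++ z ∈ L

/-- The variation `var_L(w)` of a word `w = w₁⋯w_n`: the number of indices
`0 ≤ k < n` such that the prefixes `w₁⋯w_k` and `w₁⋯w_{k+1}` are not
Nerode-equivalent. -/
noncomputable def variation {σ : Type} (L : Set (List σ)) (w : List σ) : ℕ :=
  Nat.card {k : ℕ // k < w.length ∧ ¬ NerodeEquiv L (w.take k) (w.take (k + 1))}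

/-- A language has finite variation if `sup_{w} var_L(w) < ∞`. -/
def FiniteVariation {σ : Type} (L : Set (List σ)) : Prop :=
  ∃ B : ℕ, ∀ w : List σ, variation L w ≤ B

namespace MOnProof

noncomputable def toE {m : ℕ} (X : Matrix (Fin m) (Fin m) ℂ) : EuclideanSpace ℂ (Fin m × Fin m) :=
  WithLp.toLp 2 (fun p : Fin m × Fin m => X p.1 p.2)

lemma toE_sub {m : ℕ} (X Y : Matrix (Fin m) (Fin m) ℂ) : toE (X - Y) = toE X - toE Y := rfl

lemma inner_toE {m : ℕ} (X Y : Matrix (Fin m) (Fin m) ℂ) :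
    (inner ℂ (toE X) (toE Y) : ℂ) = (Xᴴ * Y).trace := by
  rw [PiLp.inner_apply]
  rw [Matrix.trace, Fintype.sum_prod_type]
  simp [Matrix.diag, Matrix.mul_apply, Matrix.conjTranspose_apply, toE, RCLike.inner_apply,
    mul_comm]
  rw [Finset.sum_comm]

lemma norm_toE_sq {m : ℕ} (X : Matrix (Fin m) (Fin m) ℂ) :
    ‖toE X‖ ^ 2 = ((Xᴴ * X).trace).re := by
  rw [← inner_self_eq_norm_sq (𝕜 := ℂ), inner_toE]
  rfl

variable {σ : Type}

noncomputable def pinch (A : MOnQFA σ) (c : Option σ) (X : Matrix (Fin A.m) (Fin A.m) ℂ) :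
    Matrix (Fin A.m) (Fin A.m) ℂ :=
  ∑ j, A.P c j * X * A.P c j

lemma pinch_sub (A : MOnQFA σ) (c : Option σ) (X Y : Matrix (Fin A.m) (Fin A.m) ℂ) :
    pinch A c (X - Y) = pinch A c X - pinch A c Y := by
  simp [pinch, Matrix.mul_sub, Matrix.sub_mul, Finset.sum_sub_distrib]

lemma trace_pinch (A : MOnQFA σ) (hA : A.Valid) (c : Option σ)
    (X : Matrix (Fin A.m) (Fin A.m) ℂ) : (pinch A c X).trace = X.trace := by
  obtain ⟨-, hH, hI, hO, hS, -⟩ := hA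
  unfold pinch
  rw [Matrix.trace_sum]
  have : ∀ j, (A.P c j * X * A.P c j).trace = (A.P c j * X).trace := by
    intro j
    rw [Matrix.trace_mul_cycle, hI]
  simp_rw [this, ← Matrix.trace_sum, ← Finset.sum_mul, hS, Matrix.one_mul]

lemma trace_conj_pinch (A : MOnQFA σ) (hA : A.Valid) (c : Option σ)
    (X Y : Matrix (Fin A.m) (Fin A.m) ℂ) :
    ((pinch A c X)ᴴ * Y).trace = (Xᴴ * pinch A c Y).trace := by
  obtain ⟨-, hH, hI, hO, hS, -⟩ := hA
  unfold pinch
  rw [Matrix.conjTranspose_sum, Finset.sum_mul, Matrix.trace_sum,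
    Matrix.mul_sum, Matrix.trace_sum]
  refine Finset.sum_congr rfl fun j _ => ?_
  have h1 : (A.P c j * X * A.P c j)ᴴ * Y = A.P c j * (Xᴴ * A.P c j * Y) := by
    simp only [Matrix.conjTranspose_mul, hH]
    simp [Matrix.mul_assoc]
  rw [h1, Matrix.trace_mul_comm]
  congr 1
  simp [Matrix.mul_assoc]

lemma pinch_pinch (A : MOnQFA σ) (hA : A.Valid) (c : Option σ)
    (X : Matrix (Fin A.m) (Fin A.m) ℂ) : pinch A c (pinch A c X) = pinch A c X := by
  obtain ⟨-, hH, hI, hO, hS, -⟩ := hA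
  unfold pinch
  rw [Finset.sum_congr rfl fun j _ => by
    rw [Finset.mul_sum, Finset.sum_mul]]
  rw [Finset.sum_comm]
  refine Finset.sum_congr rfl fun j' _ => ?_
  rw [Finset.sum_eq_single j']
  · rw [show A.P c j' * (A.P c j' * X * A.P c j') * A.P c j'
        = (A.P c j' * A.P c j') * X * (A.P c j' * A.P c j') by simp [Matrix.mul_assoc], hI]
  · intro j _ hj
    rw [show A.P c j * (A.P c j' * X * A.P c j') * A.P c j
        = (A.P c j * A.P c j') * X * (A.P c j' * A.P c j) by simp [Matrix.mul_assoc],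
      hO _ _ _ hj]
    simp
  · simp

lemma norm_pinch_le (A : MOnQFA σ) (hA : A.Valid) (c : Option σ)
    (X : Matrix (Fin A.m) (Fin A.m) ℂ) : ‖toE (pinch A c X)‖ ≤ ‖toE X‖ := by
  have h1 : ‖toE (pinch A c X)‖ ^ 2 = (inner ℂ (toE X) (toE (pinch A c X)) : ℂ).re := by
    rw [← inner_self_eq_norm_sq (𝕜 := ℂ), inner_toE, inner_toE,
      trace_conj_pinch A hA, pinch_pinch A hA]
    rfl
  have h2 : (inner ℂ (toE X) (toE (pinch A c X)) : ℂ).re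
      ≤ ‖toE X‖ * ‖toE (pinch A c X)‖ := by
    calc (inner ℂ (toE X) (toE (pinch A c X)) : ℂ).re
        ≤ ‖(inner ℂ (toE X) (toE (pinch A c X)) : ℂ)‖ := Complex.re_le_norm _
      _ ≤ _ := norm_inner_le_norm _ _
  nlinarith [norm_nonneg (toE (pinch A c X)), norm_nonneg (toE X)]

lemma pythagoras (A : MOnQFA σ) (hA : A.Valid) (c : Option σ)
    (X : Matrix (Fin A.m) (Fin A.m) ℂ) :
    ‖toE X‖ ^ 2 = ‖toE (pinch A c X)‖ ^ 2 + ‖toE (X - pinch A c X)‖ ^ 2 := by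
  have horth : (inner ℂ (toE (pinch A c X)) (toE (X - pinch A c X)) : ℂ) = 0 := by
    rw [inner_toE, Matrix.mul_sub, Matrix.trace_sub, trace_conj_pinch A hA,
      trace_conj_pinch A hA, pinch_pinch A hA, sub_self]
  have : toE X = toE (pinch A c X) + toE (X - pinch A c X) := by
    rw [toE_sub]; abel
  rw [this, @norm_add_sq ℂ, horth]
  simp

lemma dens_eq_foldl (A : MOnQFA σ) (w : List σ) :
    A.dens w = w.foldl (fun ρ c => pinch A (some c) ρ) (A.initᴴ * A.init) := rfl

lemma dens_append (A : MOnQFA σ) (u z : List σ) :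
    A.dens (u ++ z) = z.foldl (fun ρ c => pinch A (some c) ρ) (A.dens u) := by
  rw [dens_eq_foldl, List.foldl_append, ← dens_eq_foldl]

lemma dens_concat (A : MOnQFA σ) (u : List σ) (c : σ) :
    A.dens (u ++ [c]) = pinch A (some c) (A.dens u) := by
  rw [dens_append]; rfl

lemma foldl_contract (A : MOnQFA σ) (hA : A.Valid) (z : List σ) :
    ∀ X Y : Matrix (Fin A.m) (Fin A.m) ℂ,
      ‖toE (z.foldl (fun ρ c => pinch A (some c) ρ) X
        - z.foldl (fun ρ c => pinch A (some c) ρ) Y)‖ ≤ ‖toE (X - Y)‖ := by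
  induction z with
  | nil => intro X Y; exact le_rfl
  | cons c z ih =>
    intro X Y
    calc ‖toE (List.foldl (fun ρ c => pinch A (some c) ρ) (pinch A (some c) X) z
            - List.foldl (fun ρ c => pinch A (some c) ρ) (pinch A (some c) Y) z)‖
        ≤ ‖toE (pinch A (some c) X - pinch A (some c) Y)‖ := ih _ _
      _ = ‖toE (pinch A (some c) (X - Y))‖ := by rw [pinch_sub]
      _ ≤ _ := norm_pinch_le A hA _ _

lemma trace_init (A : MOnQFA σ) (hA : A.Valid) : (A.initᴴ * A.init).trace = 1 := by
  obtain ⟨-, -, -, -, -, hn⟩ := hA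
  have h : ∀ i, (A.initᴴ * A.init) i i = (Complex.normSq (A.init 0 i) : ℂ) := by
    intro i
    rw [Matrix.mul_apply, Fin.sum_univ_one]
    simp [Matrix.conjTranspose_apply, Complex.normSq_eq_conj_mul_self]
  simp only [Matrix.trace, Matrix.diag, h]
  rw [← Complex.ofReal_sum, hn, Complex.ofReal_one]

lemma trace_dens (A : MOnQFA σ) (hA : A.Valid) (w : List σ) : (A.dens w).trace = 1 := by
  induction w using List.reverseRecOn with
  | nil => exact trace_init A hA
  | append_singleton u c ih => rw [dens_concat, trace_pinch A hA, ih]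

lemma norm_init (A : MOnQFA σ) (hA : A.Valid) : ‖toE (A.initᴴ * A.init)‖ = 1 := by
  have hn := hA.2.2.2.2.2
  have h1 : A.init * A.initᴴ = 1 := by
    ext i j
    fin_cases i; fin_cases j
    rw [Matrix.mul_apply]
    simp only [Matrix.conjTranspose_apply, Matrix.one_apply_eq, Fin.zero_eta, Fin.isValue]
    simp only [Complex.star_def, Complex.mul_conj]
    rw [← Complex.ofReal_sum, hn, Complex.ofReal_one]
  have h2 : ‖toE (A.initᴴ * A.init)‖ ^ 2 = 1 := by
    rw [norm_toE_sq, Matrix.conjTranspose_mul, Matrix.conjTranspose_conjTranspose]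
    rw [show A.initᴴ * A.init * (A.initᴴ * A.init) = A.initᴴ * (A.init * A.initᴴ) * A.init by
      simp [Matrix.mul_assoc], h1, Matrix.mul_one, trace_init A hA]
    rfl
  have h0 := norm_nonneg (toE (A.initᴴ * A.init))
  rw [← Real.sqrt_sq h0, h2, Real.sqrt_one]

lemma norm_dens_le (A : MOnQFA σ) (hA : A.Valid) (w : List σ) : ‖toE (A.dens w)‖ ≤ 1 := by
  induction w using List.reverseRecOn with
  | nil => exact le_of_eq (norm_init A hA)
  | append_singleton u c ih =>
    rw [dens_concat]; exact (norm_pinch_le A hA _ _).trans ih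

noncomputable def Pi' (A : MOnQFA σ) : Matrix (Fin A.m) (Fin A.m) ℂ := ∑ j ∈ A.F, A.P none j

lemma prob_eq (A : MOnQFA σ) (hA : A.Valid) (w : List σ) :
    A.prob w = (((Pi' A)ᴴ * A.dens w).trace).re := by
  obtain ⟨-, hH, hI, -, -, -⟩ := hA
  unfold MOnQFA.prob Pi'
  congr 1
  rw [Matrix.trace_sum, Matrix.conjTranspose_sum, Finset.sum_mul, Matrix.trace_sum]
  refine Finset.sum_congr rfl fun j _ => ?_
  rw [Matrix.trace_mul_cycle, hI, hH]

lemma norm_Pi'_sq_le (A : MOnQFA σ) (hA : A.Valid) : ‖toE (Pi' A)‖ ^ 2 ≤ (A.m : ℝ) := by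
  obtain ⟨-, hH, hI, hO, hS, -⟩ := hA
  have hPiH : (Pi' A)ᴴ = Pi' A := by
    simp only [Pi', Matrix.conjTranspose_sum]
    exact Finset.sum_congr rfl fun j _ => hH none j
  have hPiI : Pi' A * Pi' A = Pi' A := by
    unfold Pi'
    rw [Finset.sum_mul_sum]
    refine Finset.sum_congr rfl fun j hj => ?_
    rw [Finset.sum_eq_single j (fun b _ hb => hO none j b hb.symm) (fun h => absurd hj h), hI]
  have h1 : ‖toE (Pi' A)‖ ^ 2 = ((Pi' A).trace).re := by
    rw [norm_toE_sq, hPiH, hPiI]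
  have h2 : ‖toE (1 - Pi' A)‖ ^ 2 = (((1 : Matrix (Fin A.m) (Fin A.m) ℂ) - Pi' A).trace).re := by
    rw [norm_toE_sq]
    congr 2
    rw [Matrix.conjTranspose_sub, hPiH, Matrix.conjTranspose_one]
    simp only [Matrix.sub_mul, Matrix.mul_sub, Matrix.one_mul, Matrix.mul_one, hPiI]
    abel
  have h3 : (((1 : Matrix (Fin A.m) (Fin A.m) ℂ) - Pi' A).trace).re
      = (A.m : ℝ) - ((Pi' A).trace).re := by
    rw [Matrix.trace_sub, Matrix.trace_one]
    simp
  nlinarith [sq_nonneg ‖toE (1 - Pi' A)‖]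

lemma norm_Pi'_le (A : MOnQFA σ) (hA : A.Valid) : ‖toE (Pi' A)‖ ≤ Real.sqrt A.m := by
  exact (Real.le_sqrt (norm_nonneg _) (Nat.cast_nonneg _)).mpr (norm_Pi'_sq_le A hA)

lemma prob_lip (A : MOnQFA σ) (hA : A.Valid) (u u' : List σ) :
    |A.prob u - A.prob u'| ≤ Real.sqrt A.m * ‖toE (A.dens u - A.dens u')‖ := by
  rw [prob_eq A hA, prob_eq A hA]
  have key : ((Pi' A)ᴴ * A.dens u).trace - ((Pi' A)ᴴ * A.dens u').trace
      = (inner ℂ (toE (Pi' A)) (toE (A.dens u - A.dens u')) : ℂ) := by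
    rw [inner_toE, Matrix.mul_sub, Matrix.trace_sub]
  calc |(((Pi' A)ᴴ * A.dens u).trace).re - (((Pi' A)ᴴ * A.dens u').trace).re|
      = |((inner ℂ (toE (Pi' A)) (toE (A.dens u - A.dens u')) : ℂ)).re| := by
        rw [← key, Complex.sub_re]
    _ ≤ ‖(inner ℂ (toE (Pi' A)) (toE (A.dens u - A.dens u')) : ℂ)‖ := Complex.abs_re_le_norm _
    _ ≤ ‖toE (Pi' A)‖ * ‖toE (A.dens u - A.dens u')‖ := norm_inner_le_norm _ _
    _ ≤ Real.sqrt A.m * ‖toE (A.dens u - A.dens u')‖ :=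
        mul_le_mul_of_nonneg_right (norm_Pi'_le A hA) (norm_nonneg _)

lemma m_pos (A : MOnQFA σ) (hA : A.Valid) : 0 < A.m := by
  rcases Nat.eq_zero_or_pos A.m with h0 | hm
  · exfalso
    have hn := hA.2.2.2.2.2
    rw [Finset.univ_eq_empty_iff.mpr (by rw [h0]; infer_instance)] at hn
    simp at hn
  · exact hm

lemma nerode_of_close (A : MOnQFA σ) (hA : A.Valid) (lam δ : ℝ)
    (hδ : 0 < δ) (hiso : ∀ w, |A.prob w - lam| ≥ δ) (u u' : List σ)
    (h : Real.sqrt A.m * ‖toE (A.dens u - A.dens u')‖ < δ) :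
    NerodeEquiv {w | A.prob w > lam} u u' := by
  intro z
  have hd : ‖toE (A.dens (u ++ z) - A.dens (u' ++ z))‖ ≤ ‖toE (A.dens u - A.dens u')‖ := by
    rw [dens_append, dens_append]
    exact foldl_contract A hA z _ _
  have hp : |A.prob (u ++ z) - A.prob (u' ++ z)| < δ :=
    lt_of_le_of_lt ((prob_lip A hA _ _).trans
      (mul_le_mul_of_nonneg_left hd (Real.sqrt_nonneg _))) h
  simp only [Set.mem_setOf_eq]
  have hp' := abs_lt.mp hp
  rcases le_abs.mp (hiso (u ++ z)) with c1 | c1 <;>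
    rcases le_abs.mp (hiso (u' ++ z)) with c2 | c2 <;>
      constructor <;> intro hgt <;> linarith

def nerodeSetoid (L : Set (List σ)) : Setoid (List σ) where
  r := NerodeEquiv L
  iseqv := ⟨fun u z => Iff.rfl, fun h z => (h z).symm, fun h1 h2 z => (h1 z).trans (h2 z)⟩

lemma finite_quotient (A : MOnQFA σ) (hA : A.Valid) (lam δ : ℝ) (hδ : 0 < δ)
    (hiso : ∀ w, |A.prob w - lam| ≥ δ) :
    Finite (Quotient (nerodeSetoid {w | A.prob w > lam})) := by
  classical
  have hm : 0 < A.m := m_pos A hA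
  have hsm : 0 < Real.sqrt A.m := Real.sqrt_pos.mpr (by exact_mod_cast hm)
  set ε : ℝ := δ / (2 * Real.sqrt A.m) with hε_def
  have hε : 0 < ε := by positivity
  have hmain : ∀ u u' : List σ, dist (toE (A.dens u)) (toE (A.dens u')) < 2 * ε →
      NerodeEquiv {w | A.prob w > lam} u u' := by
    intro u u' hd
    apply nerode_of_close A hA lam δ hδ hiso
    have heq : ‖toE (A.dens u - A.dens u')‖ = dist (toE (A.dens u)) (toE (A.dens u')) := by
      rw [dist_eq_norm, toE_sub]
    rw [heq]
    calc Real.sqrt A.m * dist (toE (A.dens u)) (toE (A.dens u'))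
        < Real.sqrt A.m * (2 * ε) := mul_lt_mul_of_pos_left hd hsm
      _ = δ := by rw [hε_def]; field_simp
  have hsub : Set.range (fun w : List σ => toE (A.dens w)) ⊆
      Metric.closedBall (0 : EuclideanSpace ℂ (Fin A.m × Fin A.m)) 1 := by
    rintro - ⟨w, rfl⟩
    simp only [Metric.mem_closedBall, dist_zero_right]
    exact norm_dens_le A hA w
  have htb : TotallyBounded (Set.range (fun w : List σ => toE (A.dens w))) :=
    (isCompact_closedBall _ _).totallyBounded.subset hsub
  obtain ⟨t, htf, hcov⟩ := Metric.totallyBounded_iff.mp htb ε hε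
  haveI : Finite t := htf
  let f : t → Quotient (nerodeSetoid {w | A.prob w > lam}) := fun y =>
    if h : ∃ w : List σ, toE (A.dens w) ∈ Metric.ball (y : EuclideanSpace ℂ (Fin A.m × Fin A.m)) ε
    then ⟦h.choose⟧ else ⟦[]⟧
  have hsurj : Function.Surjective f := by
    intro q
    obtain ⟨u, rfl⟩ := Quotient.exists_rep q
    have hu : toE (A.dens u) ∈ ⋃ y ∈ t, Metric.ball y ε := hcov ⟨u, rfl⟩
    simp only [Set.mem_iUnion] at hu
    obtain ⟨y, hy, hball⟩ := hu
    refine ⟨⟨y, hy⟩, ?_⟩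
    have hex : ∃ w : List σ, toE (A.dens w) ∈ Metric.ball y ε := ⟨u, hball⟩
    show (if h : ∃ w : List σ, toE (A.dens w) ∈ Metric.ball y ε then ⟦h.choose⟧ else ⟦[]⟧) = ⟦u⟧
    rw [dif_pos hex]
    refine Quotient.sound (hmain _ _ ?_)
    have h1 : dist (toE (A.dens hex.choose)) y < ε := Metric.mem_ball.mp hex.choose_spec
    have h2 : dist (toE (A.dens u)) y < ε := Metric.mem_ball.mp hball
    calc dist (toE (A.dens hex.choose)) (toE (A.dens u))
        ≤ dist (toE (A.dens hex.choose)) y + dist (toE (A.dens u)) y := dist_triangle_right _ _ _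
      _ < 2 * ε := by linarith
  exact Finite.of_surjective f hsurj

noncomputable def nerodeDFA (L : Set (List σ)) : DFA σ (Quotient (nerodeSetoid L)) where
  step q c := Quotient.liftOn q (fun u => (⟦u ++ [c]⟧ : Quotient (nerodeSetoid L)))
    (fun u u' h => Quotient.sound (fun z => by
      have := h ([c] ++ z)
      simpa [List.append_assoc] using this))
  start := ⟦[]⟧
  accept := {q | Quotient.liftOn q (fun u => u ∈ L) (fun u u' h => propext (by
    have := h []
    simpa using this))}

lemma nerodeDFA_eval (L : Set (List σ)) (u w : List σ) :
    (nerodeDFA L).evalFrom ⟦u⟧ w = ⟦u ++ w⟧ := by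
  induction w generalizing u with
  | nil => simp [DFA.evalFrom]
  | cons c w ih =>
    have h1 : (nerodeDFA L).evalFrom ⟦u⟧ (c :: w) = (nerodeDFA L).evalFrom ⟦u ++ [c]⟧ w := rfl
    rw [h1, ih]
    simp

lemma nerodeDFA_accepts (L : Set (List σ)) (w : List σ) :
    w ∈ (nerodeDFA L).accepts ↔ w ∈ L := by
  rw [DFA.mem_accepts]
  have h : (nerodeDFA L).eval w = ⟦w⟧ := by
    have := nerodeDFA_eval L [] w
    simp only [List.nil_append] at this; exact this
  rw [h]
  exact Iff.rfl

lemma variation_bound (A : MOnQFA σ) (hA : A.Valid) (lam δ : ℝ) (hδ : 0 < δ)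
    (hiso : ∀ w, |A.prob w - lam| ≥ δ) (x : List σ) :
    (variation {w | A.prob w > lam} x : ℝ) ≤ (A.m : ℝ) / δ ^ 2 := by
  classical
  have hm : 0 < A.m := m_pos A hA
  have hmr : (0 : ℝ) < (A.m : ℝ) := by exact_mod_cast hm
  set L := {w | A.prob w > lam} with hLdef
  set t : ℕ → ℝ := fun k => ‖toE (A.dens (x.take k))‖ ^ 2 with ht
  set B : Finset ℕ := (Finset.range x.length).filter
    (fun k => ¬ NerodeEquiv L (x.take k) (x.take (k + 1))) with hB
  have hvar : variation L x = B.card := by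
    rw [variation, Nat.card_congr (Equiv.subtypeEquivRight
      (q := fun k => k ∈ B) (fun k => by simp [hB, Finset.mem_filter, Finset.mem_range]))]
    rw [Nat.card_eq_fintype_card, Fintype.card_coe]
  have hstep_eq : ∀ k (hk : k < x.length), A.dens (x.take (k + 1))
      = pinch A (some (x[k]'hk)) (A.dens (x.take k)) := by
    intro k hk
    have htake : x.take (k + 1) = x.take k ++ [x[k]'hk] := by
      rw [List.take_succ, List.getElem?_eq_getElem hk]
      rfl
    rw [htake, dens_concat]
  have hmono : ∀ k (hk : k < x.length), t (k + 1) ≤ t k ∧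
      t k - t (k + 1) = ‖toE (A.dens (x.take k) - A.dens (x.take (k + 1)))‖ ^ 2 := by
    intro k hk
    have he := hstep_eq k hk
    constructor
    · rw [ht]
      simp only
      rw [he]
      have := norm_pinch_le A hA (some (x[k]'hk)) (A.dens (x.take k))
      nlinarith [norm_nonneg (toE (pinch A (some (x[k]'hk)) (A.dens (x.take k)))),
        norm_nonneg (toE (A.dens (x.take k)))]
    · rw [ht]
      simp only
      rw [he]
      have := pythagoras A hA (some (x[k]'hk)) (A.dens (x.take k))
      linarith
  have hdrop : ∀ k ∈ B, δ ^ 2 / (A.m : ℝ) ≤ t k - t (k + 1) := by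
    intro k hk
    rw [hB, Finset.mem_filter, Finset.mem_range] at hk
    obtain ⟨hkn, hne⟩ := hk
    have hge : δ ≤ Real.sqrt A.m * ‖toE (A.dens (x.take k) - A.dens (x.take (k + 1)))‖ := by
      by_contra hlt
      exact hne (nerode_of_close A hA lam δ hδ hiso _ _ (lt_of_not_ge hlt))
    have hsq : (Real.sqrt A.m) ^ 2 = (A.m : ℝ) := Real.sq_sqrt (Nat.cast_nonneg _)
    have h2 := (hmono k hkn).2
    rw [div_le_iff₀ hmr]
    nlinarith [norm_nonneg (toE (A.dens (x.take k) - A.dens (x.take (k + 1)))), hδ.le]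
  have hnonneg : ∀ k ∈ Finset.range x.length, (0 : ℝ) ≤ t k - t (k + 1) := by
    intro k hk
    rw [Finset.mem_range] at hk
    linarith [(hmono k hk).1]
  have hsum : ∑ k ∈ Finset.range x.length, (t k - t (k + 1)) = t 0 - t x.length :=
    Finset.sum_range_sub' t x.length
  have ht0 : t 0 = 1 := by
    rw [ht]
    simp only [List.take_zero]
    have : A.dens [] = A.initᴴ * A.init := rfl
    rw [this, norm_init A hA, one_pow]
  have htn : 0 ≤ t x.length := sq_nonneg _
  have hcard : (B.card : ℝ) * (δ ^ 2 / (A.m : ℝ)) ≤ 1 := by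
    calc (B.card : ℝ) * (δ ^ 2 / (A.m : ℝ))
        ≤ ∑ k ∈ B, (t k - t (k + 1)) := by
          have h := Finset.card_nsmul_le_sum B (fun k => t k - t (k + 1)) (δ ^ 2 / (A.m : ℝ)) hdrop
          simpa [nsmul_eq_mul] using h
      _ ≤ ∑ k ∈ Finset.range x.length, (t k - t (k + 1)) :=
          Finset.sum_le_sum_of_subset_of_nonneg (Finset.filter_subset _ _)
            (fun k hk _ => hnonneg k hk)
      _ = t 0 - t x.length := hsum
      _ ≤ 1 := by rw [ht0]; linarith
  rw [hvar, le_div_iff₀ (by positivity : (0 : ℝ) < δ ^ 2)]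
  have h2 := mul_le_mul_of_nonneg_right hcard hmr.le
  have hm0 : (A.m : ℝ) ≠ 0 := ne_of_gt hmr
  rw [mul_comm ((B.card : ℝ) * (δ ^ 2 / (A.m : ℝ))) ((A.m : ℝ))] at h2
  field_simp at h2
  linarith

end MOnProof


/-- If `L ⊆ Σ*` is recognized by a MOn-1qfa over `Σ` with `m` states
with some cut-point isolated by `δ > 0`, then `L` is a regular language and
`var_L(x) ≤ m/δ²` for every word `x` (in particular `L` has finite variation). -/
theorem lmo_regular_and_variation_bound
    (σ : Type) [Fintype σ] [Nonempty σ] (L : Set (List σ))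
    (A : MOnQFA σ) (hA : A.Valid) (lam δ : ℝ) (hlam : 0 < lam) (hδ : 0 < δ)
    (hiso : ∀ w, |A.prob w - lam| ≥ δ) (hL : L = {w | A.prob w > lam}) :
    (∃ (Q : Type) (_ : Fintype Q) (M : DFA σ Q), ∀ w, w ∈ M.accepts ↔ w ∈ L) ∧
    (∀ x : List σ, (variation L x : ℝ) ≤ (A.m : ℝ) / δ ^ 2) := by
  subst hL
  constructor
  · haveI := MOnProof.finite_quotient A hA lam δ hδ hiso
    haveI : Fintype (Quotient (MOnProof.nerodeSetoid {w | A.prob w > lam})) :=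
      Fintype.ofFinite _
    exact ⟨_, inferInstance, MOnProof.nerodeDFA _, MOnProof.nerodeDFA_accepts _⟩
  · exact MOnProof.variation_bound A hA lam δ hδ hiso
end

section
/- Let A and B be MOn-1qfas over Σ with m_A and m_B states, initial states π^A, π^B, observables O_c^A, O_c^B and accepting sets F^A, F^B, and let α, β be non-negative reals with α + β = 1. Assume for every c ∈ Σ∪{#} that the spectra of O_c^A and O_c^B are disjoint, so that the spectral projectors of the block-diagonal direct sum O_c^A ⊕ O_c^B are exactly the matrices P_j^A(c) ⊕ 0 and 0 ⊕ P_j^B(c). Let A⊕B be the MOn-1qfa with m_A + m_B states, initial state (√α·π^A) ⊕ (√β·π^B), observables O_c^A ⊕ O_c^B, and accepting set F^A ∪ F^B. Then p_{A⊕B}(x) = α·p_A(x) + β·p_B(x) for every x ∈ Σ*. -/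
open Matrix

namespace MOnQFA

/-- The convex linear combination (direct sum) `A ⊕ B` of two MOn-1qfas w.r.t.
weights `α, β`: the observables are the block-diagonal direct sums `O_c^A ⊕ O_c^B`
(whose spectral projectors, when the spectra of `O_c^A` and `O_c^B` are disjoint,
are exactly `P_j^A(c) ⊕ 0` and `0 ⊕ P_j^B(c)`), the initial state is
`(√α·π^A) ⊕ (√β·π^B)`, and the accepting set is `F^A ∪ F^B`. -/
noncomputable def dsum {σ : Type} (A B : MOnQFA σ) (α β : ℝ) : MOnQFA σ where
  m := A.m + B.m
  k := fun c => A.k c + B.k c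
  eig := fun c => Fin.addCases (A.eig c) (B.eig c)
  P := fun c =>
    Fin.addCases
      (fun j => (Matrix.fromBlocks (A.P c j) 0 0 0).submatrix
          finSumFinEquiv.symm finSumFinEquiv.symm)
      (fun j => (Matrix.fromBlocks 0 0 0 (B.P c j)).submatrix
          finSumFinEquiv.symm finSumFinEquiv.symm)
  init := Matrix.of fun r i =>
    Sum.elim (fun i₁ => (Real.sqrt α : ℂ) * A.init r i₁)
      (fun i₂ => (Real.sqrt β : ℂ) * B.init r i₂) (finSumFinEquiv.symm i)
  F := A.F.map (Fin.castAddEmb (B.k none)) ∪ B.F.map (Fin.natAddEmb (A.k none))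

end MOnQFA


section DSumAux

open Matrix MOnQFA

variable {mA mB : ℕ}

/-- Reindexing a `Sum`-indexed matrix to a `Fin (mA + mB)`-indexed one. -/
noncomputable abbrev SBD (M : Matrix (Fin mA ⊕ Fin mB) (Fin mA ⊕ Fin mB) ℂ) :
    Matrix (Fin (mA + mB)) (Fin (mA + mB)) ℂ :=
  M.submatrix finSumFinEquiv.symm finSumFinEquiv.symm

lemma SBD_mul (M N : Matrix (Fin mA ⊕ Fin mB) (Fin mA ⊕ Fin mB) ℂ) :
    SBD M * SBD N = SBD (M * N) :=
  Matrix.submatrix_mul_equiv M N _ _ _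

lemma SBD_add (M N : Matrix (Fin mA ⊕ Fin mB) (Fin mA ⊕ Fin mB) ℂ) :
    SBD M + SBD N = SBD (M + N) := by
  ext i i'; simp

lemma SBD_sum {ι : Type*} (s : Finset ι)
    (f : ι → Matrix (Fin mA ⊕ Fin mB) (Fin mA ⊕ Fin mB) ℂ) :
    ∑ j ∈ s, SBD (f j) = SBD (∑ j ∈ s, f j) := by
  ext i i'
  simp [Matrix.submatrix_apply, Matrix.sum_apply]

lemma SBD_trace (M : Matrix (Fin mA ⊕ Fin mB) (Fin mA ⊕ Fin mB) ℂ) :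
    Matrix.trace (SBD M) = Matrix.trace M := by
  simp only [Matrix.trace, Matrix.diag, Matrix.submatrix_apply]
  exact Finset.sum_equiv finSumFinEquiv.symm (by simp) (by simp)

lemma trace_fromBlocks' (X : Matrix (Fin mA) (Fin mA) ℂ) (C : Matrix (Fin mA) (Fin mB) ℂ)
    (D : Matrix (Fin mB) (Fin mA) ℂ) (Y : Matrix (Fin mB) (Fin mB) ℂ) :
    Matrix.trace (Matrix.fromBlocks X C D Y) = Matrix.trace X + Matrix.trace Y := by
  simp [Matrix.trace, Matrix.diag, Fintype.sum_sum_type]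

lemma fromBlocks_sum {ι : Type*} (s : Finset ι)
    (X : ι → Matrix (Fin mA) (Fin mA) ℂ) (C : ι → Matrix (Fin mA) (Fin mB) ℂ)
    (D : ι → Matrix (Fin mB) (Fin mA) ℂ) (Y : ι → Matrix (Fin mB) (Fin mB) ℂ) :
    ∑ j ∈ s, Matrix.fromBlocks (X j) (C j) (D j) (Y j) =
      Matrix.fromBlocks (∑ j ∈ s, X j) (∑ j ∈ s, C j) (∑ j ∈ s, D j) (∑ j ∈ s, Y j) := by
  ext i i'
  rcases i with i | i <;> rcases i' with i' | i' <;> simp [Matrix.sum_apply]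

variable {σ : Type} (A B : MOnQFA σ) (α β : ℝ)

/-- The projectors of `A.dsum B α β`, retyped over `Fin (A.m + B.m)`. -/
noncomputable def dsumP (c : Option σ) (j : Fin (A.k c + B.k c)) :
    Matrix (Fin (A.m + B.m)) (Fin (A.m + B.m)) ℂ :=
  (A.dsum B α β).P c j

lemma dsumP_left (c : Option σ) (j : Fin (A.k c)) :
    dsumP A B α β c (Fin.castAdd (B.k c) j) = SBD (Matrix.fromBlocks (A.P c j) 0 0 0) := by
  simp [dsumP, MOnQFA.dsum]

lemma dsumP_right (c : Option σ) (j : Fin (B.k c)) :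
    dsumP A B α β c (Fin.natAdd (A.k c) j) = SBD (Matrix.fromBlocks 0 0 0 (B.P c j)) := by
  simp [dsumP, MOnQFA.dsum]

lemma dsum_step (c : Option σ) (s₁ : Finset (Fin (A.k c))) (s₂ : Finset (Fin (B.k c)))
    (ρ11 : Matrix (Fin A.m) (Fin A.m) ℂ) (ρ12 : Matrix (Fin A.m) (Fin B.m) ℂ)
    (ρ21 : Matrix (Fin B.m) (Fin A.m) ℂ) (ρ22 : Matrix (Fin B.m) (Fin B.m) ℂ) :
    (∑ j ∈ s₁, dsumP A B α β c (Fin.castAdd (B.k c) j) *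
        SBD (Matrix.fromBlocks ρ11 ρ12 ρ21 ρ22) * dsumP A B α β c (Fin.castAdd (B.k c) j)) +
    (∑ j ∈ s₂, dsumP A B α β c (Fin.natAdd (A.k c) j) *
        SBD (Matrix.fromBlocks ρ11 ρ12 ρ21 ρ22) * dsumP A B α β c (Fin.natAdd (A.k c) j)) =
      SBD (Matrix.fromBlocks (∑ j ∈ s₁, A.P c j * ρ11 * A.P c j) 0 0
        (∑ j ∈ s₂, B.P c j * ρ22 * B.P c j)) := by
  have h1 : ∀ j ∈ s₁, dsumP A B α β c (Fin.castAdd (B.k c) j) *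
        SBD (Matrix.fromBlocks ρ11 ρ12 ρ21 ρ22) * dsumP A B α β c (Fin.castAdd (B.k c) j) =
      SBD (Matrix.fromBlocks (A.P c j * ρ11 * A.P c j) 0 0 0) := by
    intro j _
    rw [dsumP_left, SBD_mul, SBD_mul]
    simp [Matrix.fromBlocks_multiply]
  have h2 : ∀ j ∈ s₂, dsumP A B α β c (Fin.natAdd (A.k c) j) *
        SBD (Matrix.fromBlocks ρ11 ρ12 ρ21 ρ22) * dsumP A B α β c (Fin.natAdd (A.k c) j) =
      SBD (Matrix.fromBlocks 0 0 0 (B.P c j * ρ22 * B.P c j)) := by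
    intro j _
    rw [dsumP_right, SBD_mul, SBD_mul]
    simp [Matrix.fromBlocks_multiply]
  rw [Finset.sum_congr rfl h1, Finset.sum_congr rfl h2, SBD_sum, SBD_sum, SBD_add,
    fromBlocks_sum, fromBlocks_sum]
  simp [Matrix.fromBlocks_add]

lemma dsum_init (hα : 0 ≤ α) (hβ : 0 ≤ β) :
    (A.dsum B α β).initᴴ * (A.dsum B α β).init =
      SBD (Matrix.fromBlocks ((α : ℂ) • (A.initᴴ * A.init))
        (((Real.sqrt α : ℂ) * (Real.sqrt β : ℂ)) • (A.initᴴ * B.init))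
        (((Real.sqrt β : ℂ) * (Real.sqrt α : ℂ)) • (B.initᴴ * A.init))
        ((β : ℂ) • (B.initᴴ * B.init))) := by
  ext i i'
  rw [Matrix.mul_apply]
  dsimp only [Matrix.conjTranspose_apply]
  have hI : ∀ k : Fin (A.dsum B α β).m, (A.dsum B α β).init 0 k =
      Sum.elim (fun i₁ => (Real.sqrt α : ℂ) * A.init 0 i₁)
        (fun i₂ => (Real.sqrt β : ℂ) * B.init 0 i₂) (finSumFinEquiv.symm k) := fun _ => rfl
  rw [Fin.sum_univ_one, hI, hI]
  simp only [SBD]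
  erw [Matrix.submatrix_apply]
  have hsa : star ((Real.sqrt α : ℝ) : ℂ) = ((Real.sqrt α : ℝ) : ℂ) := by
    simp [Complex.star_def, Complex.conj_ofReal]
  have hsb : star ((Real.sqrt β : ℝ) : ℂ) = ((Real.sqrt β : ℝ) : ℂ) := by
    simp [Complex.star_def, Complex.conj_ofReal]
  have ha2 : ((Real.sqrt α : ℝ) : ℂ) * ((Real.sqrt α : ℝ) : ℂ) = (α : ℂ) := by
    rw [← Complex.ofReal_mul, Real.mul_self_sqrt hα]
  have hb2 : ((Real.sqrt β : ℝ) : ℂ) * ((Real.sqrt β : ℝ) : ℂ) = (β : ℂ) := by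
    rw [← Complex.ofReal_mul, Real.mul_self_sqrt hβ]
  rcases finSumFinEquiv.symm i with a | a <;> rcases finSumFinEquiv.symm i' with b | b <;>
    simp only [Sum.elim_inl, Sum.elim_inr, Matrix.fromBlocks_apply₁₁,
      Matrix.fromBlocks_apply₁₂, Matrix.fromBlocks_apply₂₁, Matrix.fromBlocks_apply₂₂,
      Matrix.smul_apply, Matrix.mul_apply, Fin.sum_univ_one, Matrix.conjTranspose_apply,
      smul_eq_mul, star_mul', hsa, hsb]
  · rw [mul_mul_mul_comm, ha2]
  · ring
  · ring
  · rw [mul_mul_mul_comm, hb2]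

lemma dsum_dens (hα : 0 ≤ α) (hβ : 0 ≤ β) (x : List σ) :
    ∃ (C : Matrix (Fin A.m) (Fin B.m) ℂ) (D : Matrix (Fin B.m) (Fin A.m) ℂ),
      (A.dsum B α β).dens x =
        SBD (Matrix.fromBlocks ((α : ℂ) • A.dens x) C D ((β : ℂ) • B.dens x)) := by
  induction x using List.reverseRecOn with
  | nil =>
    exact ⟨((Real.sqrt α : ℂ) * (Real.sqrt β : ℂ)) • (A.initᴴ * B.init),
      ((Real.sqrt β : ℂ) * (Real.sqrt α : ℂ)) • (B.initᴴ * A.init),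
      dsum_init A B α β hα hβ⟩
  | append_singleton y c ih =>
    obtain ⟨C, D, h⟩ := ih
    refine ⟨0, 0, ?_⟩
    have hd : (A.dsum B α β).dens (y ++ [c]) =
        ∑ j, (A.dsum B α β).P (some c) j * (A.dsum B α β).dens y *
          (A.dsum B α β).P (some c) j := by
      simp [MOnQFA.dens, List.foldl_append]
    have hdA : A.dens (y ++ [c]) = ∑ j, A.P (some c) j * A.dens y * A.P (some c) j := by
      simp [MOnQFA.dens, List.foldl_append]
    have hdB : B.dens (y ++ [c]) = ∑ j, B.P (some c) j * B.dens y * B.P (some c) j := by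
      simp [MOnQFA.dens, List.foldl_append]
    rw [hd, h, hdA, hdB]
    have key : ∑ j : Fin (A.k (some c) + B.k (some c)),
        dsumP A B α β (some c) j *
          SBD (Matrix.fromBlocks ((α : ℂ) • A.dens y) C D ((β : ℂ) • B.dens y)) *
          dsumP A B α β (some c) j =
        SBD (Matrix.fromBlocks
          ((α : ℂ) • ∑ j, A.P (some c) j * A.dens y * A.P (some c) j) 0 0
          ((β : ℂ) • ∑ j, B.P (some c) j * B.dens y * B.P (some c) j)) := by
      rw [Fin.sum_univ_add, dsum_step]
      have e1 : ∑ j : Fin (A.k (some c)), A.P (some c) j * ((α : ℂ) • A.dens y) *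
            A.P (some c) j =
          (α : ℂ) • ∑ j : Fin (A.k (some c)), A.P (some c) j * A.dens y * A.P (some c) j := by
        rw [Finset.smul_sum]
        exact Finset.sum_congr rfl fun j _ => by rw [Matrix.mul_smul, Matrix.smul_mul]
      have e2 : ∑ j : Fin (B.k (some c)), B.P (some c) j * ((β : ℂ) • B.dens y) *
            B.P (some c) j =
          (β : ℂ) • ∑ j : Fin (B.k (some c)), B.P (some c) j * B.dens y * B.P (some c) j := by
        rw [Finset.smul_sum]
        exact Finset.sum_congr rfl fun j _ => by rw [Matrix.mul_smul, Matrix.smul_mul]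
      rw [e1, e2]
    exact key

lemma dsum_F_disjoint :
    Disjoint (A.F.map (Fin.castAddEmb (B.k none))) (B.F.map (Fin.natAddEmb (A.k none))) := by
  rw [Finset.disjoint_left]
  rintro a ha hb
  rw [Finset.mem_map] at ha hb
  obtain ⟨j₁, -, rfl⟩ := ha
  obtain ⟨j₂, -, hj⟩ := hb
  have h1 : (Fin.natAddEmb (A.k none) j₂ : Fin (A.k none + B.k none)).val =
      A.k none + j₂.val := rfl
  have h2 : (Fin.castAddEmb (B.k none) j₁ : Fin (A.k none + B.k none)).val = j₁.val := rfl
  have := congrArg Fin.val hj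
  rw [h1, h2] at this
  omega

end DSumAux

/-- Let `A`, `B` be MOn-1qfas over `Σ` and `α, β ≥ 0` with
`α + β = 1`.  Assume that for every `c ∈ Σ ∪ {#}` the spectra of `O_c^A` and `O_c^B`
are disjoint.  Then the convex linear combination `A ⊕ B` (with initial state
`(√α·π^A) ⊕ (√β·π^B)`, observables `O_c^A ⊕ O_c^B` and accepting set `F^A ∪ F^B`)
satisfies `p_{A⊕B}(x) = α·p_A(x) + β·p_B(x)` for every word `x`. -/
theorem prob_dsum
    (σ : Type) [Fintype σ] [Nonempty σ] (A B : MOnQFA σ) (hA : A.Valid) (hB : B.Valid)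
    (α β : ℝ) (hα : 0 ≤ α) (hβ : 0 ≤ β) (hαβ : α + β = 1)
    (hdisj : ∀ (c : Option σ) (j₁ : Fin (A.k c)) (j₂ : Fin (B.k c)),
      A.eig c j₁ ≠ B.eig c j₂) :
    ∀ x : List σ, (A.dsum B α β).prob x = α * A.prob x + β * B.prob x := by
  intro x
  obtain ⟨C, D, h⟩ := dsum_dens A B α β hα hβ x
  have hc : ∀ j : Fin (A.k none), (Fin.castAddEmb (B.k none)) j = Fin.castAdd (B.k none) j :=
    fun _ => rfl
  have hn : ∀ j : Fin (B.k none), (Fin.natAddEmb (A.k none)) j = Fin.natAdd (A.k none) j :=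
    fun _ => rfl
  have keyS : ∑ j ∈ (A.F.map (Fin.castAddEmb (B.k none)) ∪ B.F.map (Fin.natAddEmb (A.k none))),
      dsumP A B α β none j *
        SBD (Matrix.fromBlocks ((α : ℂ) • A.dens x) C D ((β : ℂ) • B.dens x)) *
        dsumP A B α β none j =
      SBD (Matrix.fromBlocks
        ((α : ℂ) • ∑ j ∈ A.F, A.P none j * A.dens x * A.P none j) 0 0
        ((β : ℂ) • ∑ j ∈ B.F, B.P none j * B.dens x * B.P none j)) := by
    rw [Finset.sum_union (dsum_F_disjoint A B), Finset.sum_map, Finset.sum_map]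
    simp only [hc, hn]
    rw [dsum_step A B α β none A.F B.F]
    have e1 : ∑ j ∈ A.F, A.P none j * ((α : ℂ) • A.dens x) * A.P none j =
        (α : ℂ) • ∑ j ∈ A.F, A.P none j * A.dens x * A.P none j := by
      rw [Finset.smul_sum]
      exact Finset.sum_congr rfl fun j _ => by rw [Matrix.mul_smul, Matrix.smul_mul]
    have e2 : ∑ j ∈ B.F, B.P none j * ((β : ℂ) • B.dens x) * B.P none j =
        (β : ℂ) • ∑ j ∈ B.F, B.P none j * B.dens x * B.P none j := by
      rw [Finset.smul_sum]
      exact Finset.sum_congr rfl fun j _ => by rw [Matrix.mul_smul, Matrix.smul_mul]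
    rw [e1, e2]
  have htr : Matrix.trace (∑ j ∈ (A.dsum B α β).F,
        (A.dsum B α β).P none j * (A.dsum B α β).dens x * (A.dsum B α β).P none j) =
      (α : ℂ) * Matrix.trace (∑ j ∈ A.F, A.P none j * A.dens x * A.P none j) +
      (β : ℂ) * Matrix.trace (∑ j ∈ B.F, B.P none j * B.dens x * B.P none j) := by
    have h2 : (∑ j ∈ (A.dsum B α β).F,
          (A.dsum B α β).P none j * (A.dsum B α β).dens x * (A.dsum B α β).P none j) =
        SBD (Matrix.fromBlocks
          ((α : ℂ) • ∑ j ∈ A.F, A.P none j * A.dens x * A.P none j) 0 0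
          ((β : ℂ) • ∑ j ∈ B.F, B.P none j * B.dens x * B.P none j)) := by
      rw [h]; exact keyS
    rw [h2]; erw [SBD_trace]; rw [trace_fromBlocks', Matrix.trace_smul, Matrix.trace_smul]
    simp [smul_eq_mul]
  show (Matrix.trace (∑ j ∈ (A.dsum B α β).F,
      (A.dsum B α β).P none j * (A.dsum B α β).dens x * (A.dsum B α β).P none j)).re = _
  rw [htr]
  simp [MOnQFA.prob, Complex.add_re, Complex.re_ofReal_mul]
end

section
/- Let A be a MOn-1qfa over Σ recognizing the language L_A with cut-point λ ≠ 1/2 isolated by δ > 0. Then there exists a MOn-1qfa A' over Σ recognizing the same language L_A with cut-point 1/2 isolated by δ/(2·max{λ, 1−λ}). -/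
open Matrix

namespace MOnQFA

variable {σ : Type}

lemma trace_reindex' {n m : Type*} [Fintype n] [Fintype m] [DecidableEq n] [DecidableEq m]
    (e : n ≃ m) (M : Matrix n n ℂ) : Matrix.trace (Matrix.reindex e e M) = Matrix.trace M := by
  simp only [Matrix.trace, Matrix.diag, Matrix.reindex_apply, Matrix.submatrix_apply]
  exact Equiv.sum_comp e.symm (fun j => M j j)

lemma trace_fb {n m : Type*} [Fintype n] [Fintype m] (X : Matrix n n ℂ) (B : Matrix n m ℂ)
    (C : Matrix m n ℂ) (D : Matrix m m ℂ) :
    Matrix.trace (Matrix.fromBlocks X B C D) = Matrix.trace X + Matrix.trace D := by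
  simp [Matrix.trace, Matrix.diag, Fintype.sum_sum_type]

lemma fb_sum {ι n m : Type*} [Fintype n] [Fintype m] (s : Finset ι) (f : ι → Matrix n n ℂ) :
    ∑ i ∈ s, Matrix.fromBlocks (f i) (0 : Matrix n m ℂ) (0 : Matrix m n ℂ) (0 : Matrix m m ℂ) =
      Matrix.fromBlocks (∑ i ∈ s, f i) 0 0 0 := by
  ext (i | i) (j | j) <;> simp [Matrix.sum_apply]

@[reducible] noncomputable def extQFA (A : MOnQFA σ) (a b : ℝ) (acc : Bool) : MOnQFA σ where
  m := A.m + 1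
  k c := A.k c + 1
  eig c := Fin.cases (1 + ∑ j, |A.eig c j|) (A.eig c)
  P c := Fin.cases
    (Matrix.reindexAlgEquiv ℂ ℂ finSumFinEquiv
      (Matrix.fromBlocks 0 0 0 (1 : Matrix (Fin 1) (Fin 1) ℂ)))
    (fun j => Matrix.reindexAlgEquiv ℂ ℂ finSumFinEquiv (Matrix.fromBlocks (A.P c j) 0 0 0))
  init := Matrix.of fun _ i => Sum.elim (fun i => (Real.sqrt a : ℂ) * A.init 0 i)
    (fun _ => (Real.sqrt b : ℂ)) (finSumFinEquiv.symm i)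
  F := if acc then insert 0 (A.F.map ⟨Fin.succ, Fin.succ_injective _⟩)
       else A.F.map ⟨Fin.succ, Fin.succ_injective _⟩

lemma extQFA_P_zero (A : MOnQFA σ) (a b : ℝ) (acc : Bool) (c : Option σ) :
    ((A.extQFA a b acc).P c (0 : Fin (A.k c + 1)) : Matrix (Fin (A.m + 1)) (Fin (A.m + 1)) ℂ)
      = Matrix.reindexAlgEquiv ℂ ℂ finSumFinEquiv
        (Matrix.fromBlocks 0 0 0 (1 : Matrix (Fin 1) (Fin 1) ℂ)) := rfl

lemma extQFA_P_succ (A : MOnQFA σ) (a b : ℝ) (acc : Bool) (c : Option σ) (j : Fin (A.k c)) :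
    ((A.extQFA a b acc).P c j.succ : Matrix (Fin (A.m + 1)) (Fin (A.m + 1)) ℂ)
      = Matrix.reindexAlgEquiv ℂ ℂ finSumFinEquiv (Matrix.fromBlocks (A.P c j) 0 0 0) := rfl

lemma dens_append (A : MOnQFA σ) (w : List σ) (c : σ) :
    A.dens (w ++ [c]) = ∑ j, A.P (some c) j * A.dens w * A.P (some c) j := by
  simp [dens, List.foldl_append]

lemma extQFA_step (A : MOnQFA σ) (a b : ℝ) (acc : Bool) (c : Option σ)
    (X : Matrix (Fin A.m) (Fin A.m) ℂ) (B : Matrix (Fin A.m) (Fin 1) ℂ)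
    (C : Matrix (Fin 1) (Fin A.m) ℂ) (D : Matrix (Fin 1) (Fin 1) ℂ) :
    ∑ j : Fin (A.k c + 1), ((A.extQFA a b acc).P c j : Matrix (Fin (A.m + 1)) (Fin (A.m + 1)) ℂ) *
        Matrix.reindexAlgEquiv ℂ ℂ finSumFinEquiv (Matrix.fromBlocks X B C D) *
        (A.extQFA a b acc).P c j
    = Matrix.reindexAlgEquiv ℂ ℂ finSumFinEquiv
        (Matrix.fromBlocks (∑ j, A.P c j * X * A.P c j) 0 0 D) := by
  rw [Fin.sum_univ_succ]
  simp only [Fin.cases_zero, Fin.cases_succ, ← _root_.map_mul, Matrix.fromBlocks_multiply,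
    Matrix.mul_zero, Matrix.zero_mul, Matrix.mul_one, Matrix.one_mul, add_zero, zero_add]
  rw [← map_sum, ← _root_.map_add]
  congr 1
  rw [fb_sum]
  ext (i | i) (j | j) <;> simp

lemma dens_ext (A : MOnQFA σ) {a b : ℝ} (ha : 0 ≤ a) (hb : 0 ≤ b) (acc : Bool) (w : List σ) :
    ∃ B C, (A.extQFA a b acc).dens w =
      Matrix.reindexAlgEquiv ℂ ℂ finSumFinEquiv
        (Matrix.fromBlocks ((a : ℂ) • A.dens w) B C
          ((b : ℂ) • (1 : Matrix (Fin 1) (Fin 1) ℂ))) := by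
  have hsa : ((Real.sqrt a : ℝ) : ℂ) * ((Real.sqrt a : ℝ) : ℂ) = (a : ℂ) := by
    rw [← Complex.ofReal_mul, Real.mul_self_sqrt ha]
  have hsb : ((Real.sqrt b : ℝ) : ℂ) * ((Real.sqrt b : ℝ) : ℂ) = (b : ℂ) := by
    rw [← Complex.ofReal_mul, Real.mul_self_sqrt hb]
  induction w using List.reverseRecOn with
  | nil =>
    refine ⟨Matrix.of fun i (_ : Fin 1) =>
        ((Real.sqrt a : ℝ) : ℂ) * (starRingEnd ℂ) (A.init 0 i) * ((Real.sqrt b : ℝ) : ℂ),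
      Matrix.of fun (_ : Fin 1) j =>
        ((Real.sqrt b : ℝ) : ℂ) * (((Real.sqrt a : ℝ) : ℂ) * A.init 0 j), ?_⟩
    show (A.extQFA a b acc).initᴴ * (A.extQFA a b acc).init = _
    ext i j
    obtain ⟨x, rfl⟩ := finSumFinEquiv.surjective i
    obtain ⟨y, rfl⟩ := finSumFinEquiv.surjective j
    simp only [Matrix.mul_apply, Matrix.conjTranspose_apply, Fin.sum_univ_one,
      Matrix.reindexAlgEquiv_apply, Matrix.reindex_apply, Matrix.submatrix_apply,
      Equiv.symm_apply_apply, extQFA, Matrix.of_apply]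
    cases x with
    | inl x =>
      cases y with
      | inl y =>
        simp only [Sum.elim_inl, Matrix.fromBlocks_apply₁₁, Matrix.smul_apply, dens,
          List.foldl_nil, Matrix.mul_apply, Matrix.conjTranspose_apply, Fin.sum_univ_one,
          star_mul', Complex.star_def, Complex.conj_ofReal, smul_eq_mul]
        rw [← hsa]; ring
      | inr y =>
        simp only [Sum.elim_inl, Sum.elim_inr, Matrix.fromBlocks_apply₁₂, Matrix.of_apply,
          star_mul', Complex.star_def, Complex.conj_ofReal]
    | inr x =>
      cases y with
      | inl y =>
        simp only [Sum.elim_inr, Sum.elim_inl, Matrix.fromBlocks_apply₂₁, Matrix.of_apply,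
          Complex.star_def, Complex.conj_ofReal]
      | inr y =>
        obtain rfl : x = y := Subsingleton.elim x y
        simp only [Sum.elim_inr, Matrix.fromBlocks_apply₂₂, Matrix.smul_apply,
          Matrix.one_apply_eq, Complex.star_def, Complex.conj_ofReal, smul_eq_mul, mul_one]
        exact hsb
  | append_singleton w c ih =>
    obtain ⟨B, C, h⟩ := ih
    refine ⟨0, 0, ?_⟩
    rw [dens_append, dens_append, h]
    refine (extQFA_step A a b acc (some c) _ B C _).trans ?_
    have hs : ∑ j, A.P (some c) j * ((a : ℂ) • A.dens w) * A.P (some c) j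
        = (a : ℂ) • ∑ j, A.P (some c) j * A.dens w * A.P (some c) j := by
      rw [Finset.smul_sum]
      exact Finset.sum_congr rfl fun j _ => by rw [mul_smul_comm, smul_mul_assoc]
    rw [hs]

lemma prob_ext (A : MOnQFA σ) {a b : ℝ} (ha : 0 ≤ a) (hb : 0 ≤ b) (acc : Bool) (w : List σ) :
    (A.extQFA a b acc).prob w = a * A.prob w + (if acc then b else 0) := by
  obtain ⟨B, C, h⟩ := dens_ext A ha hb acc w
  have key : ∀ j : Fin (A.k none),
      ((A.extQFA a b acc).P none j.succ : Matrix (Fin (A.m + 1)) (Fin (A.m + 1)) ℂ) *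
          (A.extQFA a b acc).dens w * (A.extQFA a b acc).P none j.succ
      = Matrix.reindexAlgEquiv ℂ ℂ finSumFinEquiv
          (Matrix.fromBlocks ((a : ℂ) • (A.P none j * A.dens w * A.P none j)) 0 0 0) := by
    intro j
    rw [h, extQFA_P_succ, ← _root_.map_mul, ← _root_.map_mul]
    congr 1
    simp [Matrix.fromBlocks_multiply, mul_smul_comm, smul_mul_assoc]
  have key0 : ((A.extQFA a b acc).P none (0 : Fin (A.k none + 1)) :
          Matrix (Fin (A.m + 1)) (Fin (A.m + 1)) ℂ) *
        (A.extQFA a b acc).dens w * (A.extQFA a b acc).P none 0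
      = Matrix.reindexAlgEquiv ℂ ℂ finSumFinEquiv
          (Matrix.fromBlocks 0 0 0 ((b : ℂ) • (1 : Matrix (Fin 1) (Fin 1) ℂ))) := by
    rw [h, extQFA_P_zero, ← _root_.map_mul, ← _root_.map_mul]
    congr 1
    simp [Matrix.fromBlocks_multiply]
  have hmap : ∀ S : Finset (Fin (A.k none)),
      (Matrix.trace (∑ j ∈ S.map ⟨Fin.succ, Fin.succ_injective _⟩,
        ((A.extQFA a b acc).P none j : Matrix (Fin (A.m + 1)) (Fin (A.m + 1)) ℂ) *
          (A.extQFA a b acc).dens w * (A.extQFA a b acc).P none j)).re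
      = a * (Matrix.trace (∑ j ∈ S, A.P none j * A.dens w * A.P none j)).re := by
    intro S
    rw [Finset.sum_map]
    simp only [Function.Embedding.coeFn_mk, key]
    rw [← map_sum, fb_sum, Matrix.reindexAlgEquiv_apply, trace_reindex', trace_fb, Matrix.trace_zero, add_zero,
      ← Finset.smul_sum, Matrix.trace_smul, smul_eq_mul, Complex.mul_re]
    simp
  show (Matrix.trace (∑ j ∈ (A.extQFA a b acc).F,
      ((A.extQFA a b acc).P none j : Matrix (Fin (A.m + 1)) (Fin (A.m + 1)) ℂ) *
        (A.extQFA a b acc).dens w * (A.extQFA a b acc).P none j)).re = _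
  cases acc with
  | false =>
    have hF : (A.extQFA a b false).F = A.F.map ⟨Fin.succ, Fin.succ_injective _⟩ := rfl
    rw [hF, hmap]
    simp [prob]
  | true =>
    have hF : (A.extQFA a b true).F
        = insert (0 : Fin (A.k none + 1)) (A.F.map ⟨Fin.succ, Fin.succ_injective _⟩) := rfl
    have h0 : (0 : Fin (A.k none + 1)) ∉ A.F.map ⟨Fin.succ, Fin.succ_injective _⟩ := by
      simp only [Finset.mem_map, Function.Embedding.coeFn_mk, not_exists]
      intro j
      rintro ⟨-, hj⟩
      exact Fin.succ_ne_zero j hj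
  
    rw [hF, Finset.sum_insert h0, Matrix.trace_add, Complex.add_re, key0, Matrix.reindexAlgEquiv_apply, trace_reindex',
      trace_fb, Matrix.trace_zero, zero_add, Matrix.trace_smul, Matrix.trace_one, hmap]
    simp [prob]
    ring

lemma raCT {n m : Type*} [Fintype n] [Fintype m] [DecidableEq n] [DecidableEq m]
    (e : n ≃ m) (M : Matrix n n ℂ) :
    (Matrix.reindexAlgEquiv ℂ ℂ e M)ᴴ = Matrix.reindexAlgEquiv ℂ ℂ e Mᴴ := by
  simp [Matrix.reindexAlgEquiv_apply, Matrix.conjTranspose_reindex]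

lemma valid_ext (A : MOnQFA σ) (hA : A.Valid) {a b : ℝ} (ha : 0 ≤ a) (hb : 0 ≤ b)
    (hab : a + b = 1) (acc : Bool) : (A.extQFA a b acc).Valid := by
  obtain ⟨h1, h2, h3, h4, h5, h6⟩ := hA
  have hzero : (0 : Matrix (Fin (A.m + 1)) (Fin (A.m + 1)) ℂ)
      = Matrix.reindexAlgEquiv ℂ ℂ finSumFinEquiv 0 := by simp
  have eig_big : ∀ (c : Option σ) (i : Fin (A.k c)), A.eig c i < 1 + ∑ j, |A.eig c j| := by
    intro c i
    have hle : A.eig c i ≤ ∑ j, |A.eig c j| :=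
      le_trans (le_abs_self _)
        (Finset.single_le_sum (fun j _ => abs_nonneg (A.eig c j)) (Finset.mem_univ i))
    linarith
  refine ⟨?_, ?_, ?_, ?_, ?_, ?_⟩
  · intro c j j' hjj'
    rcases Fin.eq_zero_or_eq_succ (j : Fin (A.k c + 1)) with hj | ⟨i, hj⟩ <;>
      rcases Fin.eq_zero_or_eq_succ (j' : Fin (A.k c + 1)) with hj' | ⟨i', hj'⟩ <;>
      rw [hj, hj'] at hjj' ⊢
    · have h' : (1 + ∑ j, |A.eig c j|) = A.eig c i' := hjj'
      exact absurd h'.symm (ne_of_lt (eig_big c i'))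
    · have h' : A.eig c i = 1 + ∑ j, |A.eig c j| := hjj'
      exact absurd h' (ne_of_lt (eig_big c i))
    · have h' : A.eig c i = A.eig c i' := hjj'
      rw [h1 c h']
  · intro c j
    rcases Fin.eq_zero_or_eq_succ (j : Fin (A.k c + 1)) with hj | ⟨i, hj⟩ <;> subst hj
    · rw [extQFA_P_zero, raCT]
      congr 1
      simp [Matrix.fromBlocks_conjTranspose]
    · rw [extQFA_P_succ, raCT]
      congr 1
      simp [Matrix.fromBlocks_conjTranspose, h2]
  · intro c j
    rcases Fin.eq_zero_or_eq_succ (j : Fin (A.k c + 1)) with hj | ⟨i, hj⟩ <;> subst hj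
    · rw [extQFA_P_zero, ← _root_.map_mul]
      congr 1
      simp [Matrix.fromBlocks_multiply]
    · rw [extQFA_P_succ, ← _root_.map_mul]
      congr 1
      simp [Matrix.fromBlocks_multiply, h3]
  · intro c j j' hjj'
    rcases Fin.eq_zero_or_eq_succ (j : Fin (A.k c + 1)) with hj | ⟨i, hj⟩ <;>
      rcases Fin.eq_zero_or_eq_succ (j' : Fin (A.k c + 1)) with hj' | ⟨i', hj'⟩ <;>
      subst hj <;> subst hj'
    · exact absurd rfl hjj'
    · rw [extQFA_P_zero, extQFA_P_succ, ← _root_.map_mul, hzero]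
      congr 1
      simp [Matrix.fromBlocks_multiply]
    · rw [extQFA_P_succ, extQFA_P_zero, ← _root_.map_mul, hzero]
      congr 1
      simp [Matrix.fromBlocks_multiply]
    · have hii' : i ≠ i' := fun h => hjj' (by rw [h])
      rw [extQFA_P_succ, extQFA_P_succ, ← _root_.map_mul, hzero]
      congr 1
      simp [Matrix.fromBlocks_multiply, h4 c i i' hii']
  · intro c
    show ∑ j : Fin (A.k c + 1),
      ((A.extQFA a b acc).P c j : Matrix (Fin (A.m + 1)) (Fin (A.m + 1)) ℂ) = 1
    rw [Fin.sum_univ_succ]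
    simp only [Fin.cases_zero, Fin.cases_succ]
    rw [← map_sum, fb_sum, ← _root_.map_add,
      show (1 : Matrix (Fin (A.m + 1)) (Fin (A.m + 1)) ℂ)
        = Matrix.reindexAlgEquiv ℂ ℂ finSumFinEquiv 1 by simp]
    congr 1
    rw [h5 c]
    ext (i | i) (j | j) <;> simp [Matrix.one_apply, Sum.inl.injEq, Sum.inr.injEq]
  · show ∑ i : Fin (A.m + 1), Complex.normSq ((A.extQFA a b acc).init 0 i) = 1
    have hini : ∀ i : Fin (A.m + 1), (A.extQFA a b acc).init 0 i
        = Sum.elim (fun i => (Real.sqrt a : ℂ) * A.init 0 i)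
            (fun _ => (Real.sqrt b : ℂ)) (finSumFinEquiv.symm i) := fun i => rfl
    simp only [hini, Matrix.of_apply]
    rw [← Fintype.sum_bijective finSumFinEquiv finSumFinEquiv.bijective
        (fun x => Complex.normSq (Sum.elim (fun i => (Real.sqrt a : ℂ) * A.init 0 i)
          (fun _ => (Real.sqrt b : ℂ)) x))
        (fun i => Complex.normSq (Sum.elim (fun i => (Real.sqrt a : ℂ) * A.init 0 i)
          (fun _ => (Real.sqrt b : ℂ)) (finSumFinEquiv.symm i)))
        (fun x => by simp)]
    rw [Fintype.sum_sum_type]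
    simp only [Sum.elim_inl, Sum.elim_inr, Complex.normSq_mul, Complex.normSq_ofReal,
      Real.mul_self_sqrt ha, Real.mul_self_sqrt hb]
    rw [← Finset.mul_sum, h6, Finset.sum_const]
    simp [hab]

end MOnQFA

/-- If a MOn-1qfa `A` over `Σ` recognizes `L_A` with cut-point
`λ ≠ 1/2` isolated by `δ > 0`, then there is a MOn-1qfa `A'` over `Σ` recognizing the
same language with cut-point `1/2` isolated by `δ/(2·max{λ, 1−λ})`. -/
theorem exists_mon1qfa_cutpoint_one_half
    (σ : Type) [Fintype σ] [Nonempty σ] (A : MOnQFA σ) (hA : A.Valid)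
    (lam δ : ℝ) (hlam : 0 < lam) (hne : lam ≠ 1 / 2) (hδ : 0 < δ)
    (hiso : ∀ w, |A.prob w - lam| ≥ δ) :
    ∃ A' : MOnQFA σ, A'.Valid ∧
      (∀ w, |A'.prob w - 1 / 2| ≥ δ / (2 * max lam (1 - lam))) ∧
      {w | A'.prob w > 1 / 2} = {w | A.prob w > lam} := by
  set M := max lam (1 - lam) with hM
  have hM2 : 1 / 2 < M := by
    rcases lt_or_gt_of_ne hne with h | h
    · exact lt_of_lt_of_le (by linarith) (le_max_right _ _)
    · exact lt_of_lt_of_le h (le_max_left _ _)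
  have hMpos : 0 < M := by linarith
  set a : ℝ := 1 / (2 * M) with ha_def
  have ha0 : 0 < a := by positivity
  have ha1 : a < 1 := by
    rw [ha_def, div_lt_one (by linarith)]
    linarith
  set b : ℝ := 1 - a with hb_def
  have hb0 : 0 ≤ b := by simp [hb_def]; linarith
  have hab : a + b = 1 := by rw [hb_def]; ring
  set acc : Bool := decide (lam < 1 / 2) with hacc
  have heq : ∀ w, (A.extQFA a b acc).prob w - 1 / 2 = a * (A.prob w - lam) := by
    intro w
    rw [A.prob_ext ha0.le hb0 acc w]
    by_cases hcase : lam < 1 / 2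
    · have hMval : M = 1 - lam := max_eq_right (by linarith)
      have key : a * (1 - lam) = 1 / 2 := by
        have hne1 : (1 : ℝ) - lam ≠ 0 := by linarith
        rw [ha_def, hMval]; field_simp
      have key' : a * 1 - a * lam = 1 / 2 := by rw [← mul_sub]; exact key
      have : acc = true := by rw [hacc]; exact decide_eq_true hcase
      rw [this]
      simp only [if_true]
      rw [hb_def]
      nlinarith [key']
    · have hlam2 : 1 / 2 < lam := lt_of_le_of_ne (not_lt.mp hcase) (Ne.symm hne)
      have hMval : M = lam := max_eq_left (by linarith)
      have key : a * lam = 1 / 2 := by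
        have hne1 : lam ≠ 0 := by linarith
        rw [ha_def, hMval]; field_simp
      have : acc = false := by rw [hacc]; exact decide_eq_false hcase
      rw [this]
      simp only [if_neg Bool.false_ne_true]
      nlinarith [key]
  refine ⟨A.extQFA a b acc, A.valid_ext hA ha0.le hb0 hab acc, ?_, ?_⟩
  · intro w
    rw [ge_iff_le, heq w, abs_mul, abs_of_pos ha0]
    calc δ / (2 * M) = a * δ := by rw [ha_def]; ring
      _ ≤ a * |A.prob w - lam| := mul_le_mul_of_nonneg_left (hiso w) ha0.le
  · ext w
    simp only [Set.mem_setOf_eq]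
    constructor
    · intro h
      have h2 : 0 < a * (A.prob w - lam) := by linarith [heq w]
      nlinarith
    · intro h
      have h2 : 0 < a * (A.prob w - lam) := mul_pos ha0 (by linarith)
      linarith [heq w]
end
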